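/- arXiv:2008.04362 — 6 statements merged into one kernel-verified Lean document; each statement's English description precedes it below -/
import Mathlib

section
/- For every p ∈ [1,2], the family of functions C_{1,p}(ρ) = min{ℓ_{1,p}(ρ − σ) : σ ∈ I_n} (ρ ∈ D_n, n ∈ ℕ) satisfies all four conditions (B1), (B2), (B3), (B4); that is, C_{1,p} is a coherence measure. -/
open scoped ENNReal ComplexOrder
open Matrix

noncomputable section

/-- The `ℓ_p` norm of a complex vector, `p ∈ [1,∞]`. -/
def lpV (p : ℝ≥0∞) {n : ℕ} (v : Fin n → ℂ) : ℝ :=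
  if p = ∞ then ⨆ i, ‖v i‖ else (∑ i, ‖v i‖ ^ p.toReal) ^ (1 / p.toReal)

/-- The `ℓ_{q,p}` norm of a complex matrix: the `ℓ_q` norm of the vector of
`ℓ_p` norms of its columns. -/
def lqp (q p : ℝ≥0∞) {m n : ℕ} (A : Matrix (Fin m) (Fin n) ℂ) : ℝ :=
  lpV q fun j => ((lpV p fun i => A i j : ℝ) : ℂ)

/-- A density matrix: positive semidefinite with trace one. -/
def IsDensity {n : ℕ} (ρ : Matrix (Fin n) (Fin n) ℂ) : Prop :=
  ρ.PosSemidef ∧ ρ.trace = 1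

/-- An incoherent (classical) state: a diagonal density matrix. -/
def IsIncoherentState {n : ℕ} (ρ : Matrix (Fin n) (Fin n) ℂ) : Prop :=
  IsDensity ρ ∧ ρ.IsDiag

/-- `C_ν(ρ) = min {ν(ρ - σ) : σ ∈ I_n}` (as an infimum). -/
def distC {n : ℕ} (ν : Matrix (Fin n) (Fin n) ℂ → ℝ) (ρ : Matrix (Fin n) (Fin n) ℂ) : ℝ :=
  sInf {x | ∃ σ, IsIncoherentState σ ∧ x = ν (ρ - σ)}

/-- A set of incoherent Kraus operators `K_j : M_{m,n}`:
`∑ K_j† K_j = I` and each `K_j σ K_j†` is diagonal for diagonal densities `σ`. -/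
def IsIncoherentKraus {m n r : ℕ} (K : Fin r → Matrix (Fin m) (Fin n) ℂ) : Prop :=
  (∑ j, (K j)ᴴ * K j) = 1 ∧
  ∀ j (σ : Matrix (Fin n) (Fin n) ℂ), IsIncoherentState σ → (K j * σ * (K j)ᴴ).IsDiag

/-- A family of candidate coherence measures, one for each dimension. -/
abbrev CFam := ∀ n : ℕ, Matrix (Fin n) (Fin n) ℂ → ℝ

/-- Condition (B1) = (C1): nonnegativity, vanishing exactly on incoherent states. -/
def CondB1 (C : CFam) : Prop :=
  ∀ n (ρ : Matrix (Fin n) (Fin n) ℂ), IsDensity ρ →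
    0 ≤ C n ρ ∧ (C n ρ = 0 ↔ IsIncoherentState ρ)

/-- Condition (B2) = (C2): monotonicity under incoherent operations. -/
def CondB2 (C : CFam) : Prop :=
  ∀ (n m r : ℕ) (K : Fin r → Matrix (Fin m) (Fin n) ℂ), IsIncoherentKraus K →
    ∀ ρ, IsDensity ρ → C m (∑ j, K j * ρ * (K j)ᴴ) ≤ C n ρ

/-- Condition (B3): monotonicity on average under selective incoherent operations. -/
def CondB3 (C : CFam) : Prop :=
  ∀ (n m r : ℕ) (K : Fin r → Matrix (Fin m) (Fin n) ℂ), IsIncoherentKraus K →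
    ∀ ρ, IsDensity ρ →
      ∑ j, ((K j * ρ * (K j)ᴴ).trace).re *
          C m (((((K j * ρ * (K j)ᴴ).trace).re)⁻¹ : ℂ) • (K j * ρ * (K j)ᴴ)) ≤ C n ρ

/-- Condition (B4): convexity. -/
def CondB4 (C : CFam) : Prop :=
  ∀ (n r : ℕ) (ρ : Fin r → Matrix (Fin n) (Fin n) ℂ) (p : Fin r → ℝ),
    (∀ j, IsDensity (ρ j)) → (∀ j, 0 ≤ p j) → (∑ j, p j) = 1 →
    C n (∑ j, (p j : ℂ) • ρ j) ≤ ∑ j, p j * C n (ρ j)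

/-- Block diagonal direct sum of two square matrices, reindexed to `Fin (n₁ + n₂)`. -/
def dirSum {n₁ n₂ : ℕ} (A : Matrix (Fin n₁) (Fin n₁) ℂ) (B : Matrix (Fin n₂) (Fin n₂) ℂ) :
    Matrix (Fin (n₁ + n₂)) (Fin (n₁ + n₂)) ℂ :=
  (Matrix.fromBlocks A 0 0 B).submatrix finSumFinEquiv.symm finSumFinEquiv.symm

/-- Condition (C3): additivity under direct sum convex combinations. -/
def CondC3 (C : CFam) : Prop :=
  ∀ (n₁ n₂ : ℕ) (ρ₁ : Matrix (Fin n₁) (Fin n₁) ℂ) (ρ₂ : Matrix (Fin n₂) (Fin n₂) ℂ)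
    (p₁ p₂ : ℝ), IsDensity ρ₁ → IsDensity ρ₂ → 0 ≤ p₁ → 0 ≤ p₂ → p₁ + p₂ = 1 →
    C (n₁ + n₂) (dirSum ((p₁ : ℂ) • ρ₁) ((p₂ : ℂ) • ρ₂)) = p₁ * C n₁ ρ₁ + p₂ * C n₂ ρ₂

/-- A norm on `M_n(ℂ)` (nonnegativity is automatic). -/
def IsMatrixNorm {n : ℕ} (ν : Matrix (Fin n) (Fin n) ℂ → ℝ) : Prop :=
  (∀ A, ν A = 0 ↔ A = 0) ∧ (∀ (c : ℂ) A, ν (c • A) = ‖c‖ * ν A) ∧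
  (∀ A B, ν (A + B) ≤ ν A + ν B)


/-- The `ℓ_P` functional on complex vectors, real exponent. -/
def nv (P : ℝ) {n : ℕ} (v : Fin n → ℂ) : ℝ := (∑ i, ‖v i‖ ^ P) ^ (1/P)

namespace nv

variable {P : ℝ} {n : ℕ} {v w : Fin n → ℂ}

lemma sum_nonneg' (v : Fin n → ℂ) : 0 ≤ ∑ i, ‖v i‖ ^ P :=
  Finset.sum_nonneg fun i _ => Real.rpow_nonneg (norm_nonneg _) _

lemma nonneg : 0 ≤ nv P v := Real.rpow_nonneg (sum_nonneg' v) _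

lemma rpow_self (hP : 0 < P) : nv P v ^ P = ∑ i, ‖v i‖ ^ P := by
  rw [nv, ← Real.rpow_mul (sum_nonneg' v), one_div_mul_cancel hP.ne', Real.rpow_one]

lemma zero (hP : 0 < P) : nv P (0 : Fin n → ℂ) = 0 := by
  simp only [nv, Pi.zero_apply, norm_zero, Real.zero_rpow hP.ne', Finset.sum_const_zero]
  rw [Real.zero_rpow (by positivity : (1:ℝ)/P ≠ 0)]

lemma eq_zero_iff (hP : 0 < P) : nv P v = 0 ↔ v = 0 := by
  constructor
  · intro h
    have hs : ∑ i, ‖v i‖ ^ P = 0 :=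
      ((Real.rpow_eq_zero_iff_of_nonneg (sum_nonneg' v)).1 h).1
    funext i
    have := (Finset.sum_eq_zero_iff_of_nonneg
      (fun i _ => Real.rpow_nonneg (norm_nonneg _) P)).1 hs i (Finset.mem_univ i)
    have : ‖v i‖ = 0 := by
      by_contra hne
      exact hne (by simpa [Real.rpow_eq_zero_iff_of_nonneg (norm_nonneg _), hP.ne'] using this)
    simpa using this
  · rintro rfl; exact zero hP

lemma mono (hP : 0 < P) (h : ∀ i, ‖v i‖ ≤ ‖w i‖) : nv P v ≤ nv P w :=
  Real.rpow_le_rpow (sum_nonneg' v)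
    (Finset.sum_le_sum fun i _ => Real.rpow_le_rpow (norm_nonneg _) (h i) hP.le)
    (by positivity)

lemma single_le (hP : 0 < P) (a : Fin n) : ‖v a‖ ≤ nv P v := by
  have h1 : ‖v a‖ ^ P ≤ ∑ i, ‖v i‖ ^ P :=
    Finset.single_le_sum (fun i _ => Real.rpow_nonneg (norm_nonneg _) P) (Finset.mem_univ a)
  calc ‖v a‖ = (‖v a‖ ^ P) ^ (1/P) := by
        rw [← Real.rpow_mul (norm_nonneg _), mul_one_div_cancel hP.ne', Real.rpow_one]
    _ ≤ _ := Real.rpow_le_rpow (Real.rpow_nonneg (norm_nonneg _) _) h1 (by positivity)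

lemma add_le (hP : 1 ≤ P) : nv P (v + w) ≤ nv P v + nv P w := by
  have hP0 : 0 < P := lt_of_lt_of_le one_pos hP
  have step1 : nv P (v + w) ≤ (∑ i, (‖v i‖ + ‖w i‖) ^ P) ^ (1/P) :=
    Real.rpow_le_rpow (sum_nonneg' _)
      (Finset.sum_le_sum fun i _ => Real.rpow_le_rpow (norm_nonneg _)
        (norm_add_le _ _) hP0.le) (by positivity)
  exact step1.trans (Real.Lp_add_le_of_nonneg (s := Finset.univ)
    (f := fun i => ‖v i‖) (g := fun i => ‖w i‖) hP
    (fun i _ => norm_nonneg _) (fun i _ => norm_nonneg _))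

lemma smul (hP : 0 < P) (c : ℂ) : nv P (c • v) = ‖c‖ * nv P v := by
  have : ∀ i, ‖(c • v) i‖ ^ P = ‖c‖ ^ P * ‖v i‖ ^ P := by
    intro i
    rw [Pi.smul_apply, norm_smul, Real.mul_rpow (norm_nonneg _) (norm_nonneg _)]
  rw [nv, Finset.sum_congr rfl (fun i _ => this i), ← Finset.mul_sum,
    Real.mul_rpow (Real.rpow_nonneg (norm_nonneg _) _) (sum_nonneg' v),
    ← Real.rpow_mul (norm_nonneg _), mul_one_div_cancel hP.ne', Real.rpow_one, nv]

lemma sum_le (hP : 1 ≤ P) {ι : Type*} (s : Finset ι) (v : ι → Fin n → ℂ) :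
    nv P (∑ k ∈ s, v k) ≤ ∑ k ∈ s, nv P (v k) := by
  have hP0 : 0 < P := lt_of_lt_of_le one_pos hP
  induction s using Finset.cons_induction with
  | empty => simp [zero hP0]
  | cons a s' ha ih =>
      rw [Finset.sum_cons, Finset.sum_cons]
      exact (add_le hP).trans (by linarith)

end nv

/-- Cauchy–Schwarz in square-root form. -/
lemma cs_sqrt {ι : Type*} (s : Finset ι) (f g : ι → ℝ) (hf : ∀ i ∈ s, 0 ≤ f i)
    (hg : ∀ i ∈ s, 0 ≤ g i) :
    ∑ i ∈ s, f i * g i ≤ Real.sqrt (∑ i ∈ s, f i ^ 2) * Real.sqrt (∑ i ∈ s, g i ^ 2) := by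
  have h := Finset.sum_mul_sq_le_sq_mul_sq s f g
  have h0 : 0 ≤ ∑ i ∈ s, f i * g i :=
    Finset.sum_nonneg fun i hi => mul_nonneg (hf i hi) (hg i hi)
  calc ∑ i ∈ s, f i * g i = Real.sqrt ((∑ i ∈ s, f i * g i) ^ 2) := by
        rw [Real.sqrt_sq h0]
    _ ≤ Real.sqrt ((∑ i ∈ s, f i ^ 2) * ∑ i ∈ s, g i ^ 2) := Real.sqrt_le_sqrt h
    _ = _ := Real.sqrt_mul (Finset.sum_nonneg fun i _ => sq_nonneg _) _


section Part2

/-- Column of a square matrix with the diagonal entry removed. -/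
def ocol {n : ℕ} (A : Matrix (Fin n) (Fin n) ℂ) (b : Fin n) : Fin n → ℂ :=
  fun a => if a = b then 0 else A a b

/-- The `ℓ_{1,P}` norm of the off-diagonal part. -/
def fC (P : ℝ) {n : ℕ} (A : Matrix (Fin n) (Fin n) ℂ) : ℝ := ∑ b, nv P (ocol A b)

lemma fC_nonneg {P : ℝ} {n : ℕ} (A : Matrix (Fin n) (Fin n) ℂ) : 0 ≤ fC P A :=
  Finset.sum_nonneg fun _ _ => nv.nonneg

lemma ocol_smul {n : ℕ} (c : ℂ) (A : Matrix (Fin n) (Fin n) ℂ) (b : Fin n) :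
    ocol (c • A) b = c • ocol A b := by
  funext a; by_cases h : a = b <;> simp [ocol, h]

lemma fC_smul {P : ℝ} (hP : 0 < P) {n : ℕ} (c : ℝ) (hc : 0 ≤ c)
    (A : Matrix (Fin n) (Fin n) ℂ) : fC P ((c : ℂ) • A) = c * fC P A := by
  unfold fC
  rw [Finset.mul_sum]
  refine Finset.sum_congr rfl fun b _ => ?_
  rw [ocol_smul, nv.smul hP, Complex.norm_real, Real.norm_eq_abs, abs_of_nonneg hc]

lemma ocol_sum {n : ℕ} {ι : Type*} (s : Finset ι) (A : ι → Matrix (Fin n) (Fin n) ℂ)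
    (b : Fin n) : ocol (∑ j ∈ s, A j) b = ∑ j ∈ s, ocol (A j) b := by
  funext a; by_cases h : a = b <;> simp [ocol, h, Matrix.sum_apply]

lemma fC_sum_le {P : ℝ} (hP : 1 ≤ P) {n : ℕ} {ι : Type*} (s : Finset ι)
    (A : ι → Matrix (Fin n) (Fin n) ℂ) :
    fC P (∑ j ∈ s, A j) ≤ ∑ j ∈ s, fC P (A j) := by
  unfold fC
  rw [Finset.sum_comm]
  refine Finset.sum_le_sum fun b _ => ?_
  rw [ocol_sum]
  exact nv.sum_le hP s _

/-- `lqp 1 p` is the sum of the `nv`-norms of the columns. -/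
lemma lqp_one_eq {p : ℝ≥0∞} (hpt : p ≠ ∞) {m n : ℕ} (A : Matrix (Fin m) (Fin n) ℂ) :
    lqp 1 p A = ∑ b, nv p.toReal (fun a => A a b) := by
  unfold lqp lpV
  rw [if_neg (by norm_num : (1:ℝ≥0∞) ≠ ∞)]
  simp only [if_neg hpt, ENNReal.toReal_one, Real.rpow_one, ne_eq, one_ne_zero,
    not_false_eq_true, div_self]
  refine Finset.sum_congr rfl fun b _ => ?_
  rw [Complex.norm_real, Real.norm_eq_abs,
    abs_of_nonneg (Real.rpow_nonneg (nv.sum_nonneg' _) _)]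
  rfl

lemma psd_diag_nonneg {n : ℕ} {ρ : Matrix (Fin n) (Fin n) ℂ} (h : ρ.PosSemidef) (i : Fin n) :
    0 ≤ ρ i i := by
  exact h.diag_nonneg

/-- For a density matrix, `distC (lqp 1 p)` equals the explicit off-diagonal norm `fC`. -/
lemma distC_eq_fC {p : ℝ≥0∞} (hpt : p ≠ ∞) (hP : 0 < p.toReal) {n : ℕ}
    {ρ : Matrix (Fin n) (Fin n) ℂ} (hρ : IsDensity ρ) :
    distC (lqp 1 p) ρ = fC p.toReal ρ := by
  set P := p.toReal
  have hmem : IsIncoherentState (Matrix.diagonal (fun i => ρ i i)) := by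
    refine ⟨⟨Matrix.PosSemidef.diagonal ?_, ?_⟩, Matrix.isDiag_diagonal _⟩
    · intro i; exact psd_diag_nonneg hρ.1 i
    · rw [Matrix.trace_diagonal]; exact hρ.2
  have hval : lqp 1 p (ρ - Matrix.diagonal (fun i => ρ i i)) = fC P ρ := by
    rw [lqp_one_eq hpt]
    refine Finset.sum_congr rfl fun b _ => ?_
    congr 1
    funext a
    by_cases h : a = b
    · subst h; simp [ocol, Matrix.sub_apply]
    · simp [ocol, h, Matrix.sub_apply, Matrix.diagonal_apply_ne _ h]
  have hlow : ∀ x ∈ {x | ∃ σ, IsIncoherentState σ ∧ x = lqp 1 p (ρ - σ)}, fC P ρ ≤ x := by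
    rintro x ⟨σ, hσ, rfl⟩
    rw [lqp_one_eq hpt]
    refine Finset.sum_le_sum fun b _ => ?_
    refine nv.mono hP fun a => ?_
    by_cases h : a = b
    · simp [ocol, h]
    · simp only [ocol, if_neg h, Matrix.sub_apply, hσ.2 h, sub_zero]
      exact le_rfl
  refine le_antisymm (csInf_le ⟨0, ?_⟩ ⟨_, hmem, hval.symm⟩) (le_csInf ⟨_, _, hmem, hval.symm⟩ hlow)
  rintro x ⟨σ, hσ, rfl⟩
  rw [lqp_one_eq hpt]
  exact Finset.sum_nonneg fun b _ => nv.nonneg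

lemma psd_smul {n : ℕ} {A : Matrix (Fin n) (Fin n) ℂ} (hA : A.PosSemidef) {c : ℝ} (hc : 0 ≤ c) :
    ((c : ℂ) • A).PosSemidef := by
  constructor
  · have h1 := hA.1
    unfold Matrix.IsHermitian at h1 ⊢
    rw [Matrix.conjTranspose_smul, h1]
    congr 1
    simp [Complex.star_def, Complex.conj_ofReal]
  · have h0 : (0:ℂ) ≤ (c:ℂ) := by
      rw [Complex.nonneg_iff]; simp [hc]
    exact (hA.smul h0).2

lemma psd_sum {n : ℕ} {ι : Type*} (s : Finset ι) (A : ι → Matrix (Fin n) (Fin n) ℂ)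
    (h : ∀ j ∈ s, (A j).PosSemidef) : (∑ j ∈ s, A j).PosSemidef := by
  constructor
  · unfold Matrix.IsHermitian
    rw [Matrix.conjTranspose_sum]
    exact Finset.sum_congr rfl fun j hj => (h j hj).1
  · exact (Matrix.posSemidef_sum s h).2

/-- trace of a PSD matrix is its (nonnegative) real part. -/
lemma psd_trace_re {n : ℕ} {A : Matrix (Fin n) (Fin n) ℂ} (hA : A.PosSemidef) :
    A.trace = ((A.trace.re : ℝ) : ℂ) ∧ 0 ≤ A.trace.re := by
  have h1 : ∀ i, 0 ≤ (A i i).re ∧ 0 = (A i i).im := by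
    intro i; exact Complex.nonneg_iff.1 (psd_diag_nonneg hA i)
  unfold Matrix.trace Matrix.diag
  have him : (∑ i, A i i).im = 0 := by
    rw [Complex.im_sum]
    exact Finset.sum_eq_zero fun i _ => ((h1 i).2).symm
  constructor
  · apply Complex.ext
    · simp
    · simp [him]
  · rw [Complex.re_sum]
    exact Finset.sum_nonneg fun i _ => (h1 i).1

lemma psd_trace_zero {n : ℕ} {A : Matrix (Fin n) (Fin n) ℂ} (hA : A.PosSemidef)
    (h : A.trace = 0) : A = 0 := by
  exact (Matrix.PosSemidef.trace_eq_zero_iff hA).1 h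

end Part2

section Part3

lemma sq_sum_eq {m : ℕ} (g : Fin m → ℝ) (hg : ∀ a, 0 ≤ g a)
    (h : ∀ a b, a ≠ b → g a = 0 ∨ g b = 0) : (∑ a, g a) ^ 2 = ∑ a, g a ^ 2 := by
  by_cases hz : ∀ a, g a = 0
  · simp [hz]
  · push_neg at hz
    obtain ⟨a₀, h₀⟩ := hz
    have hzero : ∀ b, b ≠ a₀ → g b = 0 := by
      intro b hb
      rcases h b a₀ hb with h' | h'
      · exact h'
      · exact absurd h' h₀
    rw [Finset.sum_eq_single a₀ (fun b _ hb => hzero b hb) (by simp),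
      Finset.sum_eq_single a₀ (fun b _ hb => by rw [hzero b hb]; ring) (by simp)]

lemma kraus_single_col {m n r : ℕ} {K : Fin r → Matrix (Fin m) (Fin n) ℂ}
    (hK : IsIncoherentKraus K) (j : Fin r) (c : Fin n) :
    ∀ a b, a ≠ b → K j a c = 0 ∨ K j b c = 0 := by
  intro a b hab
  have hd0 : (0 : Fin n → ℂ) ≤ Pi.single c (1:ℂ) := by
    intro i
    by_cases h : i = c <;> simp [Pi.single_apply, h]
  have hσ : IsIncoherentState (Matrix.diagonal (Pi.single c (1:ℂ)) : Matrix (Fin n) (Fin n) ℂ) := by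
    refine ⟨⟨Matrix.PosSemidef.diagonal hd0, ?_⟩, Matrix.isDiag_diagonal _⟩
    rw [Matrix.trace_diagonal]
    simp
  have hdiag := hK.2 j _ hσ
  have h0 : (K j * Matrix.diagonal (Pi.single c (1:ℂ)) * (K j)ᴴ) a b = 0 := hdiag hab
  have hentry : (K j * Matrix.diagonal (Pi.single c (1:ℂ)) * (K j)ᴴ) a b
      = K j a c * starRingEnd ℂ (K j b c) := by
    rw [Matrix.mul_apply]
    rw [Finset.sum_eq_single c]
    · rw [Matrix.mul_diagonal, Matrix.conjTranspose_apply]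
      simp [Complex.star_def]
    · intro e _ he
      rw [Matrix.mul_diagonal]
      simp [Pi.single_apply, he]
    · simp
  rw [hentry] at h0
  rcases mul_eq_zero.1 h0 with h' | h'
  · exact Or.inl h'
  · right
    simpa using h'

lemma kraus_colsum {m n r : ℕ} {K : Fin r → Matrix (Fin m) (Fin n) ℂ}
    (hsum : ∑ j, (K j)ᴴ * K j = 1) (c : Fin n) :
    ∑ j, ∑ a, ‖K j a c‖ ^ 2 = 1 := by
  have hterm : ∀ j : Fin r, ((K j)ᴴ * K j) c c = ((∑ a, ‖K j a c‖ ^ 2 : ℝ) : ℂ) := by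
    intro j
    rw [Matrix.mul_apply]
    push_cast
    refine Finset.sum_congr rfl fun a _ => ?_
    rw [Matrix.conjTranspose_apply, Complex.star_def, mul_comm, Complex.mul_conj,
      Complex.normSq_eq_norm_sq]
    norm_cast
  have h : (∑ j, (K j)ᴴ * K j) c c = 1 := by rw [hsum, Matrix.one_apply_eq]
  rw [Matrix.sum_apply, Finset.sum_congr rfl (fun j _ => hterm j)] at h
  have h2 := congrArg Complex.re h
  simp only [Complex.re_sum, ← Complex.ofReal_pow, Complex.ofReal_re, Complex.one_re] at h2
  exact h2

lemma kraus_l2 {m n r : ℕ} {K : Fin r → Matrix (Fin m) (Fin n) ℂ}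
    (hsum : ∑ j, (K j)ᴴ * K j = 1) (w : Fin n → ℂ) :
    ∑ j, ∑ a, ‖((K j) *ᵥ w) a‖ ^ 2 = ∑ c, ‖w c‖ ^ 2 := by
  have h3 : ∀ (k : ℕ) (x : Fin k → ℂ), star x ⬝ᵥ x = ((∑ a, ‖x a‖ ^ 2 : ℝ) : ℂ) := by
    intro k x
    unfold dotProduct
    push_cast
    refine Finset.sum_congr rfl fun a _ => ?_
    rw [Pi.star_apply, Complex.star_def, mul_comm, Complex.mul_conj, Complex.normSq_eq_norm_sq]
    norm_cast
  have h1 : ∀ j, star ((K j) *ᵥ w) ⬝ᵥ ((K j) *ᵥ w)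
      = star w ⬝ᵥ (((K j)ᴴ * K j) *ᵥ w) := by
    intro j
    rw [Matrix.star_mulVec, Matrix.dotProduct_mulVec, Matrix.vecMul_vecMul,
      ← Matrix.dotProduct_mulVec]
  have h2 : ∑ j, star w ⬝ᵥ (((K j)ᴴ * K j) *ᵥ w)
      = star w ⬝ᵥ ((∑ j, (K j)ᴴ * K j) *ᵥ w) := by
    simp only [Matrix.mulVec, dotProduct, Matrix.sum_apply, Finset.sum_mul,
      Finset.mul_sum]
    rw [Finset.sum_comm]
    refine Finset.sum_congr rfl fun c _ => ?_
    rw [Finset.sum_comm]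
  have hkey : (∑ j, star ((K j) *ᵥ w) ⬝ᵥ ((K j) *ᵥ w)) = star w ⬝ᵥ w := by
    rw [Finset.sum_congr rfl (fun j _ => h1 j), h2, hsum, Matrix.one_mulVec]
  rw [Finset.sum_congr rfl (fun j (_ : j ∈ Finset.univ) => h3 m ((K j) *ᵥ w)),
    h3 n w] at hkey
  have := congrArg Complex.re hkey
  simp only [Complex.re_sum, ← Complex.ofReal_pow, Complex.ofReal_re] at this
  exact this

end Part3

section KeyHelpers

/-- "sign" of a complex number. -/
def csgn (w : ℂ) : ℂ := w * ((‖w‖ : ℝ) : ℂ)⁻¹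

lemma csgn_norm {w : ℂ} (h : w ≠ 0) : ‖csgn w‖ = 1 := by
  rw [csgn, norm_mul, norm_inv, Complex.norm_real, Real.norm_eq_abs,
    abs_of_nonneg (norm_nonneg w)]
  exact mul_inv_cancel₀ (norm_ne_zero_iff.2 h)

lemma conj_csgn_norm {w : ℂ} (h : w ≠ 0) : ‖starRingEnd ℂ (csgn w)‖ = 1 := by
  rw [Complex.norm_conj, csgn_norm h]

lemma csgn_mul_norm {w : ℂ} (h : w ≠ 0) : csgn w * ((‖w‖ : ℝ) : ℂ) = w := by
  rw [csgn, mul_assoc, inv_mul_cancel₀ (by exact_mod_cast norm_ne_zero_iff.2 h), mul_one]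

lemma conj_csgn_mul {w : ℂ} (h : w ≠ 0) : starRingEnd ℂ (csgn w) * w = ((‖w‖ : ℝ) : ℂ) := by
  have hw : ((‖w‖ : ℝ) : ℂ) ≠ 0 := by exact_mod_cast norm_ne_zero_iff.2 h
  rw [csgn, _root_.map_mul, map_inv₀, Complex.conj_ofReal]
  have h1 : starRingEnd ℂ w * w = ((‖w‖ ^ 2 : ℝ) : ℂ) := by
    rw [mul_comm, Complex.mul_conj, Complex.normSq_eq_norm_sq]
  calc starRingEnd ℂ w * (((‖w‖ : ℝ) : ℂ))⁻¹ * w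
      = starRingEnd ℂ w * w * (((‖w‖ : ℝ) : ℂ))⁻¹ := by ring
    _ = ((‖w‖ ^ 2 : ℝ) : ℂ) * (((‖w‖ : ℝ) : ℂ))⁻¹ := by rw [h1]
    _ = ((‖w‖ : ℝ) : ℂ) := by
        have h2 : ((‖w‖ ^ 2 : ℝ) : ℂ) = ((‖w‖ : ℝ) : ℂ) * ((‖w‖ : ℝ) : ℂ) := by push_cast; ring
        rw [h2, mul_assoc, mul_inv_cancel₀ hw, mul_one]

/-- `z ↦ exp(a + b z)` for real `a b`. -/
def expAff (a b : ℝ) (z : ℂ) : ℂ := Complex.exp ((a : ℂ) + (b : ℂ) * z)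

lemma expAff_norm (a b : ℝ) (z : ℂ) : ‖expAff a b z‖ = Real.exp (a + b * z.re) := by
  rw [expAff, Complex.norm_exp]
  congr 1
  simp [Complex.add_re, Complex.mul_re]

lemma expAff_diff (a b : ℝ) : Differentiable ℂ (expAff a b) := by
  unfold expAff
  exact Complex.differentiable_exp.comp
    ((differentiable_const _).add ((differentiable_const _).mul differentiable_id))

lemma expAff_real (a b x : ℝ) : expAff a b ((x : ℝ) : ℂ) = ((Real.exp (a + b * x) : ℝ) : ℂ) := by
  rw [expAff, Complex.ofReal_exp]
  congr 1
  push_cast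
  ring

/-- The analytic family attached to a vector `u`. -/
def Ufun (P : ℝ) {n : ℕ} (u : Fin n → ℂ) (c : Fin n) (z : ℂ) : ℂ :=
  if u c = 0 then 0
  else csgn (u c) * expAff (P * Real.log ‖u c‖) (-(P / 2) * Real.log ‖u c‖) z

/-- The analytic family attached to the dual vectors. -/
def Vfun (P : ℝ) {k : ℕ} (y : Fin k → ℂ) (a : Fin k) (z : ℂ) : ℂ :=
  if y a = 0 then 0
  else (starRingEnd ℂ (csgn (y a))) * expAff 0 ((P / 2) * Real.log (‖y a‖ / nv P y)) z

lemma Ufun_diff (P : ℝ) {n : ℕ} (u : Fin n → ℂ) (c : Fin n) :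
    Differentiable ℂ (Ufun P u c) := by
  unfold Ufun
  by_cases hc : u c = 0
  · simp only [if_pos hc]
    exact differentiable_const 0
  · simp only [if_neg hc]
    exact (expAff_diff _ _).const_mul _

lemma Vfun_diff (P : ℝ) {k : ℕ} (y : Fin k → ℂ) (a : Fin k) :
    Differentiable ℂ (Vfun P y a) := by
  unfold Vfun
  by_cases ha : y a = 0
  · simp only [if_pos ha]
    exact differentiable_const 0
  · simp only [if_neg ha]
    exact (expAff_diff _ _).const_mul _

lemma Ufun_norm (P : ℝ) {n : ℕ} (u : Fin n → ℂ) {c : Fin n} (hc : u c ≠ 0) (z : ℂ) :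
    ‖Ufun P u c z‖ = ‖u c‖ ^ (P * (1 - z.re / 2)) := by
  rw [Ufun, if_neg hc, norm_mul, csgn_norm hc, one_mul, expAff_norm,
    Real.rpow_def_of_pos (norm_pos_iff.2 hc)]
  congr 1
  ring

lemma Vfun_norm (P : ℝ) {k : ℕ} (y : Fin k → ℂ) {a : Fin k} (ha : y a ≠ 0) (z : ℂ) :
    ‖Vfun P y a z‖ = Real.exp ((P / 2) * Real.log (‖y a‖ / nv P y) * z.re) := by
  rw [Vfun, if_neg ha, norm_mul, conj_csgn_norm ha, one_mul, expAff_norm, zero_add]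

lemma Vfun_le_one {P : ℝ} (hP0 : 0 < P) {k : ℕ} (y : Fin k → ℂ) (a : Fin k) {z : ℂ}
    (hz : 0 ≤ z.re) : ‖Vfun P y a z‖ ≤ 1 := by
  by_cases ha : y a = 0
  · simp [Vfun, ha]
  · rw [Vfun_norm P y ha z, Real.exp_le_one_iff]
    have hyp : 0 < ‖y a‖ := norm_pos_iff.2 ha
    have htp : 0 < nv P y := lt_of_lt_of_le hyp (nv.single_le hP0 a)
    have hle : ‖y a‖ / nv P y ≤ 1 := (div_le_one htp).2 (nv.single_le hP0 a)
    have hlog : Real.log (‖y a‖ / nv P y) ≤ 0 := Real.log_nonpos (by positivity) hle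
    have h1 : P / 2 * Real.log (‖y a‖ / nv P y) ≤ 0 := by nlinarith
    nlinarith [mul_nonneg hz (neg_nonneg.2 h1)]

lemma Vfun_sq_sum {P : ℝ} (hP0 : 0 < P) {k : ℕ} (y : Fin k → ℂ) {z : ℂ}
    (hz : z.re = 1) : ∑ a, ‖Vfun P y a z‖ ^ 2 ≤ 1 := by
  by_cases hy : y = 0
  · subst hy
    simp [Vfun]
  · have htp : 0 < nv P y :=
      lt_of_le_of_ne nv.nonneg (Ne.symm (fun h => hy ((nv.eq_zero_iff hP0).1 h)))
    have hterm : ∀ a, ‖Vfun P y a z‖ ^ 2 = ‖y a‖ ^ P / nv P y ^ P := by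
      intro a
      by_cases ha : y a = 0
      · rw [Vfun, if_pos ha, ha]
        simp [Real.zero_rpow hP0.ne']
      · rw [Vfun_norm P y ha z, hz, mul_one]
        have hyp : 0 < ‖y a‖ / nv P y := div_pos (norm_pos_iff.2 ha) htp
        rw [mul_comm (P / 2), ← Real.rpow_def_of_pos hyp (P / 2)]
        have h2 : (((‖y a‖ / nv P y) ^ (P / 2)) : ℝ) ^ (2 : ℕ) = (‖y a‖ / nv P y) ^ P := by
          rw [← Real.rpow_natCast ((‖y a‖ / nv P y) ^ (P / 2)) 2,
            ← Real.rpow_mul hyp.le]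
          congr 1
          push_cast
          ring
        rw [h2, Real.div_rpow (norm_nonneg _) nv.nonneg]
    rw [Finset.sum_congr rfl fun a _ => hterm a, ← Finset.sum_div, ← nv.rpow_self hP0,
      div_self (Real.rpow_pos_of_pos htp P).ne']

lemma Ufun_theta {P : ℝ} {n : ℕ} (u : Fin n → ℂ) (c : Fin n) {θ : ℝ}
    (hθP : P * (1 - θ / 2) = 1) : Ufun P u c ((θ : ℝ) : ℂ) = u c := by
  by_cases hc : u c = 0
  · simp [Ufun, hc]
  · rw [Ufun, if_neg hc, expAff_real]
    have h1 : P * Real.log ‖u c‖ + (-(P / 2) * Real.log ‖u c‖) * θ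
        = Real.log ‖u c‖ * (P * (1 - θ / 2)) := by ring
    rw [h1, hθP, mul_one, Real.exp_log (norm_pos_iff.2 hc)]
    exact csgn_mul_norm hc

lemma Vfun_pair_sum {P : ℝ} (hP0 : 0 < P) {k : ℕ} (y : Fin k → ℂ) {θ : ℝ}
    (hθQ : P / 2 * θ = P - 1) :
    ∑ a, Vfun P y a ((θ : ℝ) : ℂ) * y a = ((nv P y : ℝ) : ℂ) := by
  by_cases hy : y = 0
  · subst hy
    simp [Vfun, nv.zero hP0]
  · have htp : 0 < nv P y :=
      lt_of_le_of_ne nv.nonneg (Ne.symm (fun h => hy ((nv.eq_zero_iff hP0).1 h)))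
    have hterm : ∀ a, Vfun P y a ((θ : ℝ) : ℂ) * y a
        = ((‖y a‖ * (‖y a‖ / nv P y) ^ (P - 1) : ℝ) : ℂ) := by
      intro a
      by_cases ha : y a = 0
      · rw [Vfun, if_pos ha, ha]
        simp
      · rw [Vfun, if_neg ha, expAff_real, zero_add]
        have h2 : P / 2 * Real.log (‖y a‖ / nv P y) * θ
            = Real.log (‖y a‖ / nv P y) * (P - 1) := by
          rw [← hθQ]; ring
        have hyp : 0 < ‖y a‖ / nv P y := div_pos (norm_pos_iff.2 ha) htp
        rw [h2, ← Real.rpow_def_of_pos hyp]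
        calc starRingEnd ℂ (csgn (y a)) * (((‖y a‖ / nv P y) ^ (P - 1) : ℝ) : ℂ) * y a
            = (((‖y a‖ / nv P y) ^ (P - 1) : ℝ) : ℂ)
              * (starRingEnd ℂ (csgn (y a)) * y a) := by ring
          _ = (((‖y a‖ / nv P y) ^ (P - 1) : ℝ) : ℂ) * ((‖y a‖ : ℝ) : ℂ) := by
              rw [conj_csgn_mul ha]
          _ = _ := by push_cast; ring
    rw [Finset.sum_congr rfl fun a _ => hterm a, ← Complex.ofReal_sum]
    congr 1
    have hxx : ∀ a : Fin k, ‖y a‖ * (‖y a‖ / nv P y) ^ (P - 1)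
        = ‖y a‖ ^ P / nv P y ^ (P - 1) := by
      intro a
      rw [Real.div_rpow (norm_nonneg _) nv.nonneg, ← mul_div_assoc]
      congr 1
      by_cases hx : ‖y a‖ = 0
      · rw [hx, zero_mul, Real.zero_rpow hP0.ne']
      · have hxp : 0 < ‖y a‖ := lt_of_le_of_ne (norm_nonneg _) (Ne.symm hx)
        nth_rewrite 1 [← Real.rpow_one ‖y a‖]
        rw [← Real.rpow_add hxp]
        congr 1
        ring
    rw [Finset.sum_congr rfl fun a _ => hxx a, ← Finset.sum_div, ← nv.rpow_self hP0,
      ← Real.rpow_sub htp]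
    have h3 : P - (P - 1) = 1 := by ring
    rw [h3, Real.rpow_one]

end KeyHelpers

section KeyProof

theorem key_norm {P : ℝ} (hP1 : 1 ≤ P) (hP2 : P ≤ 2) {n m r : ℕ}
    (K : Fin r → Matrix (Fin m) (Fin n) ℂ)
    (hcol : ∀ j c a b, a ≠ b → K j a c = 0 ∨ K j b c = 0)
    (hsum : ∑ j, (K j)ᴴ * K j = 1) (u : Fin n → ℂ) (hu : nv P u = 1) :
    ∑ j, nv P ((K j) *ᵥ u) ^ 2 ≤ 1 := by
  classical
  have hP0 : 0 < P := lt_of_lt_of_le one_pos hP1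
  have hPne : P ≠ 0 := hP0.ne'
  have husum : ∑ c, ‖u c‖ ^ P = 1 := by
    have h := nv.rpow_self (P := P) (v := u) hP0
    rw [hu, Real.one_rpow] at h
    exact h.symm
  set t : Fin r → ℝ := fun j => nv P ((K j) *ᵥ u) with ht
  have htnn : ∀ j, 0 ≤ t j := fun j => nv.nonneg
  show ∑ j, t j ^ 2 ≤ 1
  by_cases hS0 : ∑ j, t j ^ 2 = 0
  · rw [hS0]; norm_num
  have hSnn : 0 ≤ ∑ j, t j ^ 2 := Finset.sum_nonneg fun j _ => sq_nonneg _
  have hSpos : 0 < ∑ j, t j ^ 2 := lt_of_le_of_ne hSnn (Ne.symm hS0)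
  set M : ℝ := Real.sqrt (∑ j, t j ^ 2) with hM
  have hMpos : 0 < M := Real.sqrt_pos.2 hSpos
  have hM2 : M ^ 2 = ∑ j, t j ^ 2 := Real.sq_sqrt hSnn
  set G : ℂ → ℂ := fun z =>
    ∑ j, (t j : ℂ) * ∑ a, Vfun P ((K j) *ᵥ u) a z * (∑ c, K j a c * Ufun P u c z) with hG
  have hGdiff : Differentiable ℂ G := by
    rw [hG]
    refine Differentiable.fun_sum fun j _ => Differentiable.const_mul ?_ _
    refine Differentiable.fun_sum fun a _ => Differentiable.mul (Vfun_diff P _ a) ?_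
    exact Differentiable.fun_sum fun c _ => (Ufun_diff P u c).const_mul _
  have hGbdd : BddAbove ((norm ∘ G) '' (Complex.HadamardThreeLines.verticalClosedStrip 0 1)) := by
    refine ⟨∑ j, t j * ∑ a, ∑ c, ‖K j a c‖ * max 1 (‖u c‖ ^ P), ?_⟩
    rintro w ⟨z, hz, rfl⟩
    have hz' : z.re ∈ Set.Icc (0 : ℝ) 1 := hz
    have hUle : ∀ c, ‖Ufun P u c z‖ ≤ max 1 (‖u c‖ ^ P) := by
      intro c
      by_cases hc : u c = 0
      · rw [Ufun, if_pos hc, norm_zero]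
        exact le_max_of_le_left zero_le_one
      · rw [Ufun_norm P u hc z]
        rcases le_or_gt 1 ‖u c‖ with h1 | h1
        · refine le_max_of_le_right ?_
          refine Real.rpow_le_rpow_of_exponent_le h1 ?_
          nlinarith [hz'.1]
        · refine le_max_of_le_left ?_
          refine Real.rpow_le_one (norm_nonneg _) h1.le ?_
          nlinarith [hz'.2]
    simp only [Function.comp_apply]
    rw [hG]
    refine (norm_sum_le _ _).trans (Finset.sum_le_sum fun j _ => ?_)
    rw [norm_mul, Complex.norm_real, Real.norm_eq_abs, abs_of_nonneg (htnn j)]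
    refine mul_le_mul_of_nonneg_left ?_ (htnn j)
    refine (norm_sum_le _ _).trans (Finset.sum_le_sum fun a _ => ?_)
    rw [norm_mul]
    refine (mul_le_of_le_one_left (norm_nonneg _) (Vfun_le_one hP0 _ a hz'.1)).trans ?_
    refine (norm_sum_le _ _).trans (Finset.sum_le_sum fun c _ => ?_)
    rw [norm_mul]
    exact mul_le_mul_of_nonneg_left (hUle c) (norm_nonneg _)
  have hedge0 : ∀ z : ℂ, z.re = 0 → ‖G z‖ ≤ M := by
    intro z hz
    have hgle : ∀ c, ‖Ufun P u c z‖ ≤ ‖u c‖ ^ P := by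
      intro c
      by_cases hc : u c = 0
      · rw [Ufun, if_pos hc, norm_zero]
        positivity
      · rw [Ufun_norm P u hc z, hz]
        have he : P * (1 - (0 : ℝ) / 2) = P := by ring
        rw [he]
    have hgsum : ∑ c, ‖Ufun P u c z‖ ≤ 1 := by
      rw [← husum]
      exact Finset.sum_le_sum fun c _ => hgle c
    have step1 : ‖G z‖ ≤ ∑ j, t j * ∑ c, (∑ a, ‖K j a c‖) * ‖Ufun P u c z‖ := by
      rw [hG]
      refine (norm_sum_le _ _).trans (Finset.sum_le_sum fun j _ => ?_)
      rw [norm_mul, Complex.norm_real, Real.norm_eq_abs, abs_of_nonneg (htnn j)]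
      refine mul_le_mul_of_nonneg_left ?_ (htnn j)
      calc ‖∑ a, Vfun P ((K j) *ᵥ u) a z * (∑ c, K j a c * Ufun P u c z)‖
          ≤ ∑ a, ‖Vfun P ((K j) *ᵥ u) a z * (∑ c, K j a c * Ufun P u c z)‖ :=
            norm_sum_le _ _
        _ ≤ ∑ a, ∑ c, ‖K j a c‖ * ‖Ufun P u c z‖ := by
            refine Finset.sum_le_sum fun a _ => ?_
            rw [norm_mul]
            refine (mul_le_of_le_one_left (norm_nonneg _)
              (Vfun_le_one hP0 _ a hz.ge)).trans ?_
            refine (norm_sum_le _ _).trans (Finset.sum_le_sum fun c _ => ?_)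
            rw [norm_mul]
        _ = ∑ c, (∑ a, ‖K j a c‖) * ‖Ufun P u c z‖ := by
            rw [Finset.sum_comm]
            exact Finset.sum_congr rfl fun c _ => (Finset.sum_mul _ _ _).symm
    have step2 : ∀ j, ∑ c, (∑ a, ‖K j a c‖) * ‖Ufun P u c z‖
        ≤ Real.sqrt (∑ c, (∑ a, ‖K j a c‖ ^ 2) * ‖Ufun P u c z‖) := by
      intro j
      have hκ : ∀ c, (∑ a, ‖K j a c‖) = Real.sqrt (∑ a, ‖K j a c‖ ^ 2) := by
        intro c
        rw [← sq_sum_eq (fun a => ‖K j a c‖) (fun a => norm_nonneg _) (fun a b hab => by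
          rcases hcol j c a b hab with h | h
          · exact Or.inl (by simp [h])
          · exact Or.inr (by simp [h]))]
        rw [Real.sqrt_sq (Finset.sum_nonneg fun a _ => norm_nonneg _)]
      have hid : ∀ c, (∑ a, ‖K j a c‖) * ‖Ufun P u c z‖
          = Real.sqrt ((∑ a, ‖K j a c‖ ^ 2) * ‖Ufun P u c z‖)
            * Real.sqrt ‖Ufun P u c z‖ := by
        intro c
        rw [Real.sqrt_mul (Finset.sum_nonneg fun a _ => sq_nonneg _), hκ c, mul_assoc,
          Real.mul_self_sqrt (norm_nonneg _)]
      rw [Finset.sum_congr rfl fun c _ => hid c]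
      refine (cs_sqrt Finset.univ _ _ (fun c _ => Real.sqrt_nonneg _)
        (fun c _ => Real.sqrt_nonneg _)).trans ?_
      have e1 : ∑ c, Real.sqrt ((∑ a, ‖K j a c‖ ^ 2) * ‖Ufun P u c z‖) ^ 2
          = ∑ c, (∑ a, ‖K j a c‖ ^ 2) * ‖Ufun P u c z‖ :=
        Finset.sum_congr rfl fun c _ => Real.sq_sqrt
          (mul_nonneg (Finset.sum_nonneg fun a _ => sq_nonneg _) (norm_nonneg _))
      have e2 : ∑ c, Real.sqrt ‖Ufun P u c z‖ ^ 2 = ∑ c, ‖Ufun P u c z‖ :=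
        Finset.sum_congr rfl fun c _ => Real.sq_sqrt (norm_nonneg _)
      rw [e1, e2]
      refine mul_le_of_le_one_right (Real.sqrt_nonneg _) ?_
      rw [← Real.sqrt_one]
      exact Real.sqrt_le_sqrt hgsum
    refine step1.trans ?_
    refine (Finset.sum_le_sum fun j (_ : j ∈ Finset.univ) =>
      mul_le_mul_of_nonneg_left (step2 j) (htnn j)).trans ?_
    refine (cs_sqrt Finset.univ t _ (fun j _ => htnn j)
      (fun j _ => Real.sqrt_nonneg _)).trans ?_
    have e3 : ∑ j, Real.sqrt (∑ c, (∑ a, ‖K j a c‖ ^ 2) * ‖Ufun P u c z‖) ^ 2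
        = ∑ c, ‖Ufun P u c z‖ := by
      rw [Finset.sum_congr rfl fun j _ => Real.sq_sqrt (Finset.sum_nonneg fun c _ =>
        mul_nonneg (Finset.sum_nonneg fun a _ => sq_nonneg _) (norm_nonneg _))]
      rw [Finset.sum_comm]
      refine Finset.sum_congr rfl fun c _ => ?_
      rw [← Finset.sum_mul, kraus_colsum hsum c, one_mul]
    rw [e3, ← hM]
    refine mul_le_of_le_one_right hMpos.le ?_
    rw [← Real.sqrt_one]
    exact Real.sqrt_le_sqrt hgsum
  have hedge1 : ∀ z : ℂ, z.re = 1 → ‖G z‖ ≤ M := by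
    intro z hz
    have hU2 : ∑ c, ‖Ufun P u c z‖ ^ 2 ≤ 1 := by
      rw [← husum]
      refine Finset.sum_le_sum fun c _ => ?_
      by_cases hc : u c = 0
      · rw [Ufun, if_pos hc, norm_zero]
        have h00 : (0:ℝ) ^ (2:ℕ) = 0 := by norm_num
        rw [h00]
        positivity
      · rw [Ufun_norm P u hc z, hz]
        have he : ((‖u c‖ ^ (P * (1 - (1:ℝ) / 2))) : ℝ) ^ (2 : ℕ) = ‖u c‖ ^ P := by
          rw [← Real.rpow_natCast (‖u c‖ ^ (P * (1 - (1:ℝ) / 2))) 2,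
            ← Real.rpow_mul (norm_nonneg _)]
          congr 1
          push_cast
          ring
        rw [he]
    have hinner : ∀ j, ‖∑ a, Vfun P ((K j) *ᵥ u) a z * (∑ c, K j a c * Ufun P u c z)‖
        ≤ Real.sqrt (∑ a, ‖((K j) *ᵥ (fun c => Ufun P u c z)) a‖ ^ 2) := by
      intro j
      have hmv : ∀ a, (∑ c, K j a c * Ufun P u c z)
          = ((K j) *ᵥ (fun c => Ufun P u c z)) a := fun a => rfl
      refine (norm_sum_le _ _).trans ?_
      have heq : ∑ a, ‖Vfun P ((K j) *ᵥ u) a z * (∑ c, K j a c * Ufun P u c z)‖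
          = ∑ a, ‖Vfun P ((K j) *ᵥ u) a z‖ * ‖((K j) *ᵥ (fun c => Ufun P u c z)) a‖ :=
        Finset.sum_congr rfl fun a _ => by rw [norm_mul, hmv a]
      rw [heq]
      refine (cs_sqrt Finset.univ _ _ (fun a _ => norm_nonneg _)
        (fun a _ => norm_nonneg _)).trans ?_
      refine mul_le_of_le_one_left (Real.sqrt_nonneg _) ?_
      rw [← Real.sqrt_one]
      exact Real.sqrt_le_sqrt (Vfun_sq_sum hP0 _ hz)
    rw [hG]
    refine (norm_sum_le _ _).trans ?_
    have hterm : ∀ j,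
        ‖(t j : ℂ) * ∑ a, Vfun P ((K j) *ᵥ u) a z * (∑ c, K j a c * Ufun P u c z)‖
        ≤ t j * Real.sqrt (∑ a, ‖((K j) *ᵥ (fun c => Ufun P u c z)) a‖ ^ 2) := by
      intro j
      rw [norm_mul, Complex.norm_real, Real.norm_eq_abs, abs_of_nonneg (htnn j)]
      exact mul_le_mul_of_nonneg_left (hinner j) (htnn j)
    refine (Finset.sum_le_sum fun j (_ : j ∈ Finset.univ) => hterm j).trans ?_
    refine (cs_sqrt Finset.univ t _ (fun j _ => htnn j)
      (fun j _ => Real.sqrt_nonneg _)).trans ?_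
    have e4 : ∑ j, Real.sqrt (∑ a, ‖((K j) *ᵥ (fun c => Ufun P u c z)) a‖ ^ 2) ^ 2
        = ∑ c, ‖Ufun P u c z‖ ^ 2 := by
      rw [Finset.sum_congr rfl fun j _ =>
        Real.sq_sqrt (Finset.sum_nonneg fun a _ => sq_nonneg _)]
      exact kraus_l2 hsum _
    rw [e4, ← hM]
    refine mul_le_of_le_one_right hMpos.le ?_
    rw [← Real.sqrt_one]
    exact Real.sqrt_le_sqrt hU2
  set θ : ℝ := 2 - 2 / P with hθ
  have hθ0 : 0 ≤ θ := by
    rw [hθ]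
    have h : 2 / P ≤ 2 := by
      rw [div_le_iff₀ hP0]
      nlinarith
    linarith
  have hθ1 : θ ≤ 1 := by
    rw [hθ]
    have h : 1 ≤ 2 / P := by
      rw [le_div_iff₀ hP0]
      linarith
    linarith
  have hθP : P * (1 - θ / 2) = 1 := by
    rw [hθ]
    have h1 : (1 : ℝ) - (2 - 2 / P) / 2 = 1 / P := by ring
    rw [h1, mul_one_div, div_self hPne]
  have hθQ : P / 2 * θ = P - 1 := by
    rw [hθ]
    have h1 : P / 2 * (2 / P) = 1 := by
      field_simp
    rw [mul_sub, h1]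
    ring_nf
  have hGθ : G ((θ : ℝ) : ℂ) = ((∑ j, t j ^ 2 : ℝ) : ℂ) := by
    have hj : ∀ j, (∑ a, Vfun P ((K j) *ᵥ u) a ((θ : ℝ) : ℂ)
        * (∑ c, K j a c * Ufun P u c ((θ : ℝ) : ℂ))) = ((t j : ℝ) : ℂ) := by
      intro j
      have h1 : ∀ a, (∑ c, K j a c * Ufun P u c ((θ : ℝ) : ℂ)) = ((K j) *ᵥ u) a := by
        intro a
        rw [Finset.sum_congr rfl fun c _ => by rw [Ufun_theta u c hθP]]
        rfl
      rw [Finset.sum_congr rfl fun a _ => by rw [h1 a]]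
      exact Vfun_pair_sum hP0 ((K j) *ᵥ u) hθQ
    calc G ((θ : ℝ) : ℂ) = ∑ j, (t j : ℂ) * ((t j : ℝ) : ℂ) := by
          simp only [hG]
          exact Finset.sum_congr rfl fun j _ => by rw [hj j]
      _ = ((∑ j, t j ^ 2 : ℝ) : ℂ) := by
          rw [Complex.ofReal_sum]
          refine Finset.sum_congr rfl fun j _ => ?_
          push_cast
          ring
  have hmem : ((θ : ℝ) : ℂ) ∈ Complex.HadamardThreeLines.verticalClosedStrip 0 1 := by
    show ((θ : ℝ) : ℂ).re ∈ Set.Icc (0 : ℝ) 1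
    rw [Complex.ofReal_re]
    exact ⟨hθ0, hθ1⟩
  have h3l := Complex.HadamardThreeLines.norm_le_interp_of_mem_verticalClosedStrip₀₁'
    G hmem hGdiff.diffContOnCl hGbdd
    (fun z hz => hedge0 z (by simpa using hz)) (fun z hz => hedge1 z (by simpa using hz))
  rw [hGθ, Complex.norm_real, Real.norm_eq_abs, abs_of_nonneg hSnn, Complex.ofReal_re] at h3l
  have hMM : M ^ (1 - θ) * M ^ θ = M := by
    rw [← Real.rpow_add hMpos]
    have h1 : 1 - θ + θ = 1 := by ring
    rw [h1, Real.rpow_one]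
  rw [hMM] at h3l
  nlinarith [hM2, hMpos, h3l, sq_nonneg (M - 1)]

theorem key_lemma' {P : ℝ} (hP1 : 1 ≤ P) (hP2 : P ≤ 2) {n m r : ℕ}
    (K : Fin r → Matrix (Fin m) (Fin n) ℂ)
    (hcol : ∀ j c a b, a ≠ b → K j a c = 0 ∨ K j b c = 0)
    (hsum : ∑ j, (K j)ᴴ * K j = 1) (u : Fin n → ℂ) :
    ∑ j, nv P ((K j) *ᵥ u) ^ 2 ≤ nv P u ^ 2 := by
  have hP0 : 0 < P := lt_of_lt_of_le one_pos hP1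
  by_cases hu : u = 0
  · subst hu
    simp only [Matrix.mulVec_zero, nv.zero hP0]
    norm_num
  · have hN : 0 < nv P u :=
      lt_of_le_of_ne nv.nonneg (Ne.symm (fun h => hu ((nv.eq_zero_iff hP0).1 h)))
    have hscale : nv P ((((nv P u)⁻¹ : ℝ) : ℂ) • u) = 1 := by
      rw [nv.smul hP0, Complex.norm_real, Real.norm_eq_abs,
        abs_of_nonneg (inv_nonneg.2 hN.le)]
      field_simp
    have h := key_norm hP1 hP2 K hcol hsum _ hscale
    have hform : ∀ j, nv P ((K j) *ᵥ ((((nv P u)⁻¹ : ℝ) : ℂ) • u))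
        = (nv P u)⁻¹ * nv P ((K j) *ᵥ u) := by
      intro j
      rw [Matrix.mulVec_smul, nv.smul hP0, Complex.norm_real, Real.norm_eq_abs,
        abs_of_nonneg (inv_nonneg.2 hN.le)]
    rw [Finset.sum_congr rfl fun j _ => by rw [hform j]] at h
    have h2 : (nv P u)⁻¹ ^ 2 * ∑ j, nv P ((K j) *ᵥ u) ^ 2 ≤ 1 := by
      rw [Finset.mul_sum]
      refine le_trans (le_of_eq ?_) h
      exact Finset.sum_congr rfl fun j _ => by ring
    calc ∑ j, nv P ((K j) *ᵥ u) ^ 2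
        = nv P u ^ 2 * ((nv P u)⁻¹ ^ 2 * ∑ j, nv P ((K j) *ᵥ u) ^ 2) := by
          field_simp
      _ ≤ nv P u ^ 2 * 1 := mul_le_mul_of_nonneg_left h2 (by positivity)
      _ = nv P u ^ 2 := mul_one _

end KeyProof

/-- KEY LEMMA: interpolation estimate for incoherent Kraus families, `1 ≤ P ≤ 2`. -/
theorem key_lemma {P : ℝ} (hP1 : 1 ≤ P) (hP2 : P ≤ 2) {n m r : ℕ}
    (K : Fin r → Matrix (Fin m) (Fin n) ℂ)
    (hcol : ∀ j c a b, a ≠ b → K j a c = 0 ∨ K j b c = 0)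
    (hsum : ∑ j, (K j)ᴴ * K j = 1) (u : Fin n → ℂ) :
    ∑ j, nv P ((K j) *ᵥ u) ^ 2 ≤ nv P u ^ 2 :=
  key_lemma' hP1 hP2 K hcol hsum u

/-- Monotonicity of the explicit off-diagonal norm under incoherent Kraus families. -/
theorem main_ineq {P : ℝ} (hP1 : 1 ≤ P) (hP2 : P ≤ 2) {n m r : ℕ}
    (K : Fin r → Matrix (Fin m) (Fin n) ℂ)
    (hcol : ∀ j c a b, a ≠ b → K j a c = 0 ∨ K j b c = 0)
    (hsum : ∑ j, (K j)ᴴ * K j = 1)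
    (ρ : Matrix (Fin n) (Fin n) ℂ) :
    ∑ j, fC P (K j * ρ * (K j)ᴴ) ≤ fC P ρ := by
  have hP0 : 0 < P := lt_of_lt_of_le one_pos hP1
  have stepB : ∀ (j : Fin r) (b : Fin m),
      nv P (ocol (K j * ρ * (K j)ᴴ) b) ≤ ∑ d, ‖K j b d‖ * nv P ((K j) *ᵥ (ocol ρ d)) := by
    intro j b
    have hrepr : ocol (K j * ρ * (K j)ᴴ) b
        = ∑ d, (starRingEnd ℂ (K j b d)) •
            (fun a => if a = b then 0 else ((K j) *ᵥ (ocol ρ d)) a) := by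
      funext a
      by_cases hab : a = b
      · simp [ocol, hab]
      · simp only [ocol, if_neg hab, Finset.sum_apply, Pi.smul_apply, smul_eq_mul]
        have hL : (K j * ρ * (K j)ᴴ) a b
            = ∑ d, ((K j) *ᵥ (fun c => ρ c d)) a * starRingEnd ℂ (K j b d) := by
          rw [Matrix.mul_apply]
          refine Finset.sum_congr rfl fun d _ => ?_
          rw [Matrix.conjTranspose_apply, Complex.star_def, Matrix.mul_apply]
          rfl
        rw [hL]
        refine Finset.sum_congr rfl fun d _ => ?_
        have hsplit : ((K j) *ᵥ (fun c => ρ c d)) a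
            = ((K j) *ᵥ (ocol ρ d)) a + K j a d * ρ d d := by
          simp only [Matrix.mulVec, dotProduct, ocol]
          have hc : ∀ c : Fin n, K j a c * ρ c d
              = K j a c * (if c = d then 0 else ρ c d)
                + (if c = d then K j a d * ρ d d else 0) := by
            intro c
            by_cases h : c = d
            · subst h; simp
            · simp [h]
          rw [Finset.sum_congr rfl fun c _ => hc c, Finset.sum_add_distrib]
          congr 1
          rw [Finset.sum_ite_eq' Finset.univ d (fun _ => K j a d * ρ d d)]
          simp
        rcases hcol j d a b hab with h' | h'
        · rw [hsplit, h']
          ring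
        · rw [h']
          simp
    rw [hrepr]
    refine (nv.sum_le hP1 Finset.univ _).trans ?_
    refine Finset.sum_le_sum fun d _ => ?_
    rw [nv.smul hP0]
    have hn : ‖starRingEnd ℂ (K j b d)‖ = ‖K j b d‖ := by simp
    rw [hn]
    refine mul_le_mul_of_nonneg_left ?_ (norm_nonneg _)
    refine nv.mono hP0 fun a => ?_
    by_cases h : a = b <;> simp [h]
  calc ∑ j, fC P (K j * ρ * (K j)ᴴ)
      ≤ ∑ j, ∑ b, ∑ d, ‖K j b d‖ * nv P ((K j) *ᵥ (ocol ρ d)) :=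
        Finset.sum_le_sum fun j _ => Finset.sum_le_sum fun b _ => stepB j b
    _ = ∑ d, ∑ j, (∑ b, ‖K j b d‖) * nv P ((K j) *ᵥ (ocol ρ d)) := by
        have h1 : ∀ j : Fin r, ∑ b, ∑ d, ‖K j b d‖ * nv P ((K j) *ᵥ (ocol ρ d))
            = ∑ d, (∑ b, ‖K j b d‖) * nv P ((K j) *ᵥ (ocol ρ d)) := by
          intro j
          rw [Finset.sum_comm]
          exact Finset.sum_congr rfl fun d _ => (Finset.sum_mul _ _ _).symm
        rw [Finset.sum_congr rfl fun j _ => h1 j, Finset.sum_comm]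
    _ ≤ ∑ d, nv P (ocol ρ d) := by
        refine Finset.sum_le_sum fun d _ => ?_
        have hcs := cs_sqrt Finset.univ (fun j => ∑ b, ‖K j b d‖)
          (fun j => nv P ((K j) *ᵥ (ocol ρ d)))
          (fun j _ => Finset.sum_nonneg fun b _ => norm_nonneg _)
          (fun j _ => nv.nonneg)
        have hκ : ∑ j, (∑ b, ‖K j b d‖) ^ 2 = 1 := by
          have hj : ∀ j : Fin r, (∑ b, ‖K j b d‖) ^ 2 = ∑ b, ‖K j b d‖ ^ 2 := by
            intro j
            refine sq_sum_eq _ (fun a => norm_nonneg _) fun a b' hab => ?_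
            rcases hcol j d a b' hab with h' | h'
            · left; simp [h']
            · right; simp [h']
          rw [Finset.sum_congr rfl fun j _ => hj j]
          exact kraus_colsum hsum d
        have hkey := key_lemma hP1 hP2 K hcol hsum (ocol ρ d)
        calc ∑ j, (∑ b, ‖K j b d‖) * nv P ((K j) *ᵥ (ocol ρ d))
            ≤ Real.sqrt (∑ j, (∑ b, ‖K j b d‖) ^ 2)
              * Real.sqrt (∑ j, nv P ((K j) *ᵥ (ocol ρ d)) ^ 2) := hcs
          _ ≤ Real.sqrt 1 * Real.sqrt (nv P (ocol ρ d) ^ 2) := by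
              rw [hκ]
              exact mul_le_mul_of_nonneg_left (Real.sqrt_le_sqrt hkey) (Real.sqrt_nonneg _)
          _ = nv P (ocol ρ d) := by
              rw [Real.sqrt_one, one_mul, Real.sqrt_sq nv.nonneg]
    _ = fC P ρ := rfl


lemma fC_zero {P : ℝ} (hP : 0 < P) {n : ℕ} : fC P (0 : Matrix (Fin n) (Fin n) ℂ) = 0 := by
  unfold fC
  refine Finset.sum_eq_zero fun b _ => ?_
  have h : ocol (0 : Matrix (Fin n) (Fin n) ℂ) b = 0 := by
    funext a
    by_cases h : a = b <;> simp [ocol, h]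
  rw [h, nv.zero hP]

/-- for every `p ∈ [1,2]`, the family
`C_{1,p}(ρ) = min{ℓ_{1,p}(ρ - σ) : σ ∈ I_n}` satisfies (B1), (B2), (B3), (B4),
i.e. it is a coherence measure. -/
theorem C_one_p_is_coherence_measure (p : ℝ≥0∞) (hp1 : 1 ≤ p) (hp2 : p ≤ 2) :
    CondB1 (fun n ρ => distC (lqp 1 p) ρ) ∧ CondB2 (fun n ρ => distC (lqp 1 p) ρ) ∧
      CondB3 (fun n ρ => distC (lqp 1 p) ρ) ∧ CondB4 (fun n ρ => distC (lqp 1 p) ρ) := by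
  have hpt : p ≠ ∞ := (lt_of_le_of_lt hp2 (by norm_num : (2 : ℝ≥0∞) < ⊤)).ne
  have hP1 : 1 ≤ p.toReal := by
    have h := ENNReal.toReal_mono hpt hp1
    simpa using h
  have hP2 : p.toReal ≤ 2 := by
    have h := ENNReal.toReal_mono (by norm_num : (2 : ℝ≥0∞) ≠ ⊤) hp2
    simpa using h
  have hP0 : 0 < p.toReal := lt_of_lt_of_le one_pos hP1
  refine ⟨?_, ?_, ?_, ?_⟩
  · -- B1
    intro n ρ hρ
    simp only []
    rw [distC_eq_fC hpt hP0 hρ]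
    refine ⟨fC_nonneg _, ?_⟩
    constructor
    · intro h0
      refine ⟨hρ, ?_⟩
      intro i j hij
      have hb : ∀ b, nv p.toReal (ocol ρ b) = 0 := fun b =>
        (Finset.sum_eq_zero_iff_of_nonneg (fun b _ => nv.nonneg)).1 h0 b (Finset.mem_univ b)
      have h1 := congrFun ((nv.eq_zero_iff hP0).1 (hb j)) i
      simpa [ocol, hij] using h1
    · rintro ⟨_, hdiag⟩
      unfold fC
      refine Finset.sum_eq_zero fun b _ => ?_
      have h : ocol ρ b = 0 := by
        funext a
        by_cases h : a = b
        · simp [ocol, h]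
        · simp [ocol, h, hdiag h]
      rw [h, nv.zero hP0]
  · -- B2
    intro n m r K hK ρ hρ
    have hcol : ∀ j c a b, a ≠ b → K j a c = 0 ∨ K j b c = 0 :=
      fun j c a b hab => kraus_single_col hK j c a b hab
    have hsum := hK.1
    have hΛtrace : (∑ j, K j * ρ * (K j)ᴴ).trace = 1 := by
      rw [Matrix.trace_sum]
      have h1 : ∀ j : Fin r, (K j * ρ * (K j)ᴴ).trace = ((K j)ᴴ * K j * ρ).trace :=
        fun j => Matrix.trace_mul_cycle (K j) ρ (K j)ᴴ
      rw [Finset.sum_congr rfl fun j _ => h1 j, ← Matrix.trace_sum, ← Matrix.sum_mul, hsum,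
        Matrix.one_mul, hρ.2]
    have hΛ : IsDensity (∑ j, K j * ρ * (K j)ᴴ) :=
      ⟨psd_sum _ _ (fun j _ => hρ.1.mul_mul_conjTranspose_same (K j)), hΛtrace⟩
    simp only []
    rw [distC_eq_fC hpt hP0 hΛ, distC_eq_fC hpt hP0 hρ]
    exact (fC_sum_le hP1 _ _).trans (main_ineq hP1 hP2 K hcol hsum ρ)
  · -- B3
    intro n m r K hK ρ hρ
    have hcol : ∀ j c a b, a ≠ b → K j a c = 0 ∨ K j b c = 0 :=
      fun j c a b hab => kraus_single_col hK j c a b hab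
    have hsum := hK.1
    have hpsd : ∀ j, (K j * ρ * (K j)ᴴ).PosSemidef :=
      fun j => hρ.1.mul_mul_conjTranspose_same (K j)
    have hterm : ∀ j : Fin r, ((K j * ρ * (K j)ᴴ).trace).re
        * distC (lqp 1 p) (((((K j * ρ * (K j)ᴴ).trace).re)⁻¹ : ℂ) • (K j * ρ * (K j)ᴴ))
        = fC p.toReal (K j * ρ * (K j)ᴴ) := by
      intro j
      obtain ⟨htr, hre⟩ := psd_trace_re (hpsd j)
      set x : ℝ := ((K j * ρ * (K j)ᴴ).trace).re with hx
      by_cases h0 : x = 0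
      · rw [h0]
        have hM0 : K j * ρ * (K j)ᴴ = 0 := psd_trace_zero (hpsd j) (by rw [htr, h0]; simp)
        rw [hM0, fC_zero hP0]
        ring
      · have hpos : 0 < x := lt_of_le_of_ne hre (Ne.symm h0)
        have hcast : (((x : ℝ) : ℂ))⁻¹ = (((x⁻¹ : ℝ)) : ℂ) := (Complex.ofReal_inv _).symm
        have hτ : IsDensity ((((x⁻¹ : ℝ)) : ℂ) • (K j * ρ * (K j)ᴴ)) := by
          constructor
          · exact psd_smul (hpsd j) (inv_nonneg.2 hre)
          · rw [Matrix.trace_smul, htr, smul_eq_mul, ← Complex.ofReal_mul,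
              inv_mul_cancel₀ h0]
            simp
        rw [hcast, distC_eq_fC hpt hP0 hτ,
          fC_smul hP0 _ (inv_nonneg.2 hre), ← mul_assoc, mul_inv_cancel₀ h0, one_mul]
    simp only []
    rw [Finset.sum_congr rfl fun j _ => hterm j, distC_eq_fC hpt hP0 hρ]
    exact main_ineq hP1 hP2 K hcol hsum ρ
  · -- B4
    intro n r ρs ps hρs hps hps1
    have hmix : IsDensity (∑ j, (ps j : ℂ) • ρs j) := by
      constructor
      · exact psd_sum _ _ (fun j _ => psd_smul (hρs j).1 (hps j))
      · rw [Matrix.trace_sum]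
        have h : ∀ j : Fin r, ((ps j : ℂ) • ρs j).trace = ((ps j : ℝ) : ℂ) := by
          intro j
          rw [Matrix.trace_smul, (hρs j).2, smul_eq_mul, mul_one]
        rw [Finset.sum_congr rfl fun j _ => h j, ← Complex.ofReal_sum, hps1]
        simp
    simp only []
    rw [distC_eq_fC hpt hP0 hmix]
    refine (fC_sum_le hP1 _ _).trans ?_
    refine Finset.sum_le_sum fun j _ => ?_
    rw [distC_eq_fC hpt hP0 (hρs j), fC_smul hP0 _ (hps j)]
end
end

section
/- Let p ∈ [1,∞] and q ∈ [1,∞]. If the family C_{q,p}(ρ) = min{ℓ_{q,p}(ρ − σ) : σ ∈ I_n} satisfies condition (C3), then q = 1. In particular, for the state A = (1/4)(J_2 ⊕ J_2) ∈ D_4, where J_2 is the 2×2 all-ones matrix, one has C_{q,p}(A) = 4^{1/q}/4, while (1/2)C_{q,p}((1/2)J_2) + (1/2)C_{q,p}((1/2)J_2) = 2^{1/q}/2, and these are equal only when q = 1. -/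
open scoped ENNReal ComplexOrder
open Matrix

noncomputable section

/-- The `n × n` all-ones matrix `J_n`. -/
def Jmat (n : ℕ) : Matrix (Fin n) (Fin n) ℂ := Matrix.of fun _ _ => 1


section Helpers

variable {q p : ℝ≥0∞} {n : ℕ}

lemma lpV_nonneg (p : ℝ≥0∞) (v : Fin n → ℂ) : 0 ≤ lpV p v := by
  unfold lpV
  split
  · exact Real.iSup_nonneg fun i => norm_nonneg _
  · apply Real.rpow_nonneg
    exact Finset.sum_nonneg fun i _ => Real.rpow_nonneg (norm_nonneg _) _

lemma lpV_le (hp : 1 ≤ p) (v : Fin n → ℂ) (i0 : Fin n) : ‖v i0‖ ≤ lpV p v := by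
  unfold lpV
  split
  · exact le_ciSup (f := fun i => ‖v i‖) (Set.Finite.bddAbove (Set.finite_range _)) i0
  · rename_i h
    have ht : 1 ≤ p.toReal := by
      rw [← ENNReal.toReal_one]
      exact ENNReal.toReal_mono h hp
    have ht0 : p.toReal ≠ 0 := by linarith
    have h1 : ‖v i0‖ ^ p.toReal ≤ ∑ i, ‖v i‖ ^ p.toReal :=
      Finset.single_le_sum (fun i _ => Real.rpow_nonneg (norm_nonneg _) _)
        (Finset.mem_univ i0)
    calc ‖v i0‖ = (‖v i0‖ ^ p.toReal) ^ (1 / p.toReal) := by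
          rw [← Real.rpow_mul (norm_nonneg _), mul_one_div_cancel ht0,
            Real.rpow_one]
      _ ≤ (∑ i, ‖v i‖ ^ p.toReal) ^ (1 / p.toReal) := by
          apply Real.rpow_le_rpow (Real.rpow_nonneg (norm_nonneg _) _) h1
          positivity

lemma lpV_mono (p : ℝ≥0∞) (v w : Fin n → ℂ) (h : ∀ i, ‖v i‖ ≤ ‖w i‖) :
    lpV p v ≤ lpV p w := by
  unfold lpV
  split
  · exact ciSup_mono (Set.Finite.bddAbove (Set.finite_range _)) h
  · apply Real.rpow_le_rpow
      (Finset.sum_nonneg fun i _ => Real.rpow_nonneg (norm_nonneg _) _)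
    · exact Finset.sum_le_sum fun i _ =>
        Real.rpow_le_rpow (norm_nonneg _) (h i) ENNReal.toReal_nonneg
    · positivity

lemma lpV_single (hp : 1 ≤ p) (v : Fin n → ℂ) (i0 : Fin n)
    (h : ∀ i, i ≠ i0 → v i = 0) : lpV p v = ‖v i0‖ := by
  have : Nonempty (Fin n) := ⟨i0⟩
  unfold lpV
  split
  · refine le_antisymm (ciSup_le fun i => ?_)
      (le_ciSup (f := fun i => ‖v i‖) (Set.Finite.bddAbove (Set.finite_range _)) i0)
    by_cases hi : i = i0
    · subst hi; exact le_rfl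
    · rw [h i hi]; simp
  · rename_i he
    have ht : 1 ≤ p.toReal := by
      rw [← ENNReal.toReal_one]
      exact ENNReal.toReal_mono he hp
    have ht0 : p.toReal ≠ 0 := by linarith
    have hs : ∑ i, ‖v i‖ ^ p.toReal = ‖v i0‖ ^ p.toReal := by
      apply Finset.sum_eq_single
      · intro i _ hi
        rw [h i hi]; simp [Real.zero_rpow ht0]
      · intro hmem; exact absurd (Finset.mem_univ i0) hmem
    rw [hs, ← Real.rpow_mul (norm_nonneg _), mul_one_div_cancel ht0,
      Real.rpow_one]

lemma lpV_const (hq : 1 ≤ q) (hn : 0 < n) (c : ℝ) (hc : 0 ≤ c) :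
    lpV q (fun _ : Fin n => (c : ℂ)) = (n : ℝ) ^ (1 / q.toReal) * c := by
  unfold lpV
  split
  · rename_i he
    have : Nonempty (Fin n) := ⟨⟨0, hn⟩⟩
    simp [he, Complex.norm_real, Real.norm_eq_abs, abs_of_nonneg hc]
  · rename_i he
    have ht : 1 ≤ q.toReal := by
      rw [← ENNReal.toReal_one]
      exact ENNReal.toReal_mono he hq
    have hq0 : q.toReal ≠ 0 := by linarith
    have hnorm : ‖(c : ℂ)‖ = c := by
      rw [Complex.norm_real, Real.norm_eq_abs, abs_of_nonneg hc]
    rw [Finset.sum_const, Finset.card_univ, Fintype.card_fin, hnorm,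
      nsmul_eq_mul, Real.mul_rpow (by positivity) (Real.rpow_nonneg hc _),
      ← Real.rpow_mul hc, mul_one_div_cancel hq0, Real.rpow_one]

lemma distC_struct (hq : 1 ≤ q) (hp : 1 ≤ p) (hn : 0 < n)
    (ρ : Matrix (Fin n) (Fin n) ℂ) (c : ℝ) (hc : 0 < c)
    (f : Fin n → Fin n) (hf : ∀ j, f j ≠ j)
    (hoff : ∀ j, ‖ρ (f j) j‖ = c)
    (hdd : ∀ j, ρ j j = (c : ℂ))
    (hzero : ∀ i j, i ≠ j → i ≠ f j → ρ i j = 0)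
    (htr : (n : ℝ) * c = 1) :
    distC (lqp q p) ρ = (n : ℝ) ^ (1 / q.toReal) * c := by
  set L : ℝ := (n : ℝ) ^ (1 / q.toReal) * c with hL
  set σ₀ : Matrix (Fin n) (Fin n) ℂ := Matrix.diagonal (fun _ => (c : ℂ)) with hσ₀
  have hσ₀inc : IsIncoherentState σ₀ := by
    refine ⟨⟨Matrix.posSemidef_diagonal_iff.mpr fun i => ?_, ?_⟩,
      Matrix.isDiag_diagonal _⟩
    · exact Complex.zero_le_real.mpr hc.le
    · rw [Matrix.trace_diagonal]
      simp only [Finset.sum_const, Finset.card_univ, Fintype.card_fin,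
        nsmul_eq_mul]
      exact_mod_cast congrArg (Complex.ofReal) htr
  have hnormc : ‖(c : ℂ)‖ = c := by
    rw [Complex.norm_real, Real.norm_eq_abs, abs_of_nonneg hc.le]
  -- value at σ₀
  have hval : lqp q p (ρ - σ₀) = L := by
    unfold lqp
    have hcol : ∀ j, lpV p (fun i => (ρ - σ₀) i j) = c := by
      intro j
      have hz : ∀ i, i ≠ f j → (fun i => (ρ - σ₀) i j) i = 0 := by
        intro i hi
        by_cases hij : i = j
        · subst hij
          simp [hσ₀, Matrix.sub_apply, Matrix.diagonal_apply_eq, hdd i]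
        · simp [hσ₀, Matrix.sub_apply, Matrix.diagonal_apply_ne _ hij,
            hzero i j hij hi]
      rw [lpV_single hp _ (f j) hz]
      simp [hσ₀, Matrix.sub_apply, Matrix.diagonal_apply_ne _ (hf j), hoff j]
    have : (fun j => ((lpV p fun i => (ρ - σ₀) i j : ℝ) : ℂ))
        = fun _ : Fin n => (c : ℂ) := funext fun j => by rw [hcol j]
    rw [this, lpV_const hq hn c hc.le]
  -- lower bound
  have hlow : ∀ x ∈ {x | ∃ σ, IsIncoherentState σ ∧ x = lqp q p (ρ - σ)},
      L ≤ x := by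
    rintro x ⟨σ, ⟨_, hσdiag⟩, rfl⟩
    have key : ∀ j : Fin n, ‖(c : ℂ)‖
        ≤ ‖((lpV p fun i => (ρ - σ) i j : ℝ) : ℂ)‖ := by
      intro j
      have hoffσ : (ρ - σ) (f j) j = ρ (f j) j := by
        rw [Matrix.sub_apply, hσdiag (hf j), sub_zero]
      have h1 : c ≤ lpV p (fun i => (ρ - σ) i j) := by
        have := lpV_le hp (fun i => (ρ - σ) i j) (f j)
        rwa [hoffσ, hoff j] at this
      rw [hnormc, Complex.norm_real, Real.norm_eq_abs,
        abs_of_nonneg (lpV_nonneg p _)]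
      exact h1
    have := lpV_mono q (fun _ : Fin n => (c : ℂ)) _ key
    rwa [lpV_const hq hn c hc.le] at this
  refine le_antisymm ?_ (le_csInf ⟨_, σ₀, hσ₀inc, rfl⟩ hlow)
  exact csInf_le ⟨L, hlow⟩ ⟨σ₀, hσ₀inc, hval.symm⟩

lemma isDensity_half_J : IsDensity ((2:ℂ)⁻¹ • Jmat 2) := by
  constructor
  · convert Matrix.posSemidef_conjTranspose_mul_self ((2:ℂ)⁻¹ • Jmat 2) using 1
    ext i j
    norm_num [Matrix.mul_apply, Jmat, Matrix.conjTranspose_apply,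
      Fin.sum_univ_two, Matrix.smul_apply, star_inv₀]
  · norm_num [Matrix.trace, Matrix.diag, Jmat, Fin.sum_univ_two,
      Matrix.smul_apply]

lemma distC_two (hq : 1 ≤ q) (hp : 1 ≤ p) :
    distC (lqp q p) ((2:ℂ)⁻¹ • Jmat 2) = (2:ℝ) ^ (1 / q.toReal) / 2 := by
  have h := distC_struct (n := 2) hq hp (by norm_num) ((2:ℂ)⁻¹ • Jmat 2) (2⁻¹)
    (by norm_num) (fun j => j + 1) (by decide) ?_ ?_ ?_ (by norm_num)
  · rw [h]; ring
  · intro j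
    norm_num [Jmat, Matrix.smul_apply]
  · intro j
    norm_num [Jmat, Matrix.smul_apply]
  · intro i j h1 h2
    exfalso
    revert h1 h2
    revert i j
    decide

lemma dirSum_eq : dirSum (Jmat 2) (Jmat 2)
    = !![1,1,0,0; 1,1,0,0; 0,0,1,1; 0,0,1,1] := by
  ext i j
  fin_cases i <;> fin_cases j <;> rfl

lemma distC_four (hq : 1 ≤ q) (hp : 1 ≤ p) :
    distC (lqp q p) (((4:ℂ))⁻¹ • dirSum (Jmat 2) (Jmat 2))
      = (4:ℝ) ^ (1 / q.toReal) / 4 := by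
  have h := distC_struct (n := 4) hq hp (by norm_num)
    (((4:ℂ))⁻¹ • dirSum (Jmat 2) (Jmat 2)) (4⁻¹)
    (by norm_num) ![1,0,3,2] (by decide) ?_ ?_ ?_ (by norm_num)
  · rw [h]; ring
  · intro j
    fin_cases j <;> norm_num [dirSum_eq, Matrix.smul_apply, Matrix.vecHead, Matrix.vecTail] <;>
      exact (congrArg norm (rfl : _ = (1:ℂ))).trans norm_one
  · intro j
    fin_cases j <;> norm_num [dirSum_eq, Matrix.smul_apply, Matrix.vecHead, Matrix.vecTail]
  · intro i j h1 h2
    fin_cases i <;> fin_cases j <;>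
      simp_all [dirSum_eq, Matrix.smul_apply, Matrix.vecHead, Matrix.vecTail]

lemma dirSum_smul (a : ℂ) {n₁ n₂ : ℕ} (A : Matrix (Fin n₁) (Fin n₁) ℂ)
    (B : Matrix (Fin n₂) (Fin n₂) ℂ) :
    dirSum (a • A) (a • B) = a • dirSum A B := by
  ext i j
  simp only [dirSum, Matrix.submatrix_apply, Matrix.smul_apply]
  rcases finSumFinEquiv.symm i with x | x <;> rcases finSumFinEquiv.symm j with y | y <;>
    simp [Matrix.fromBlocks]

lemma final_alg (hq : 1 ≤ q) :
    (4:ℝ) ^ (1 / q.toReal) / 4 = (2:ℝ) ^ (1 / q.toReal) / 2 → q = 1 := by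
  intro h
  by_cases he : q = ∞
  · rw [he] at h
    norm_num at h
  · have ht : 1 ≤ q.toReal := by
      rw [← ENNReal.toReal_one]
      exact ENNReal.toReal_mono he hq
    set t := 1 / q.toReal with htdef
    have h4 : (4:ℝ) ^ t = (2:ℝ) ^ t * (2:ℝ) ^ t := by
      rw [show (4:ℝ) = 2 * 2 by norm_num,
        Real.mul_rpow (by norm_num) (by norm_num)]
    rw [h4] at h
    have hpos : (0:ℝ) < (2:ℝ) ^ t := Real.rpow_pos_of_pos (by norm_num) _
    have h2 : (2:ℝ) ^ t = 2 := by nlinarith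
    have hlog : t * Real.log 2 = 1 * Real.log 2 := by
      rw [← Real.log_rpow (by norm_num : (0:ℝ) < 2) t, h2, one_mul]
    have ht1 : t = 1 :=
      mul_right_cancel₀ (Real.log_pos one_lt_two).ne' hlog
    have hq1 : q.toReal = 1 := by
      rw [htdef, one_div, inv_eq_one] at ht1
      exact ht1
    exact (ENNReal.toReal_eq_one_iff q).mp hq1

end Helpers

/-- if `C_{q,p}` satisfies (C3) then `q = 1`.  In particular, for
`A = (1/4)(J₂ ⊕ J₂) ∈ D₄` one has `C_{q,p}(A) = 4^{1/q}/4`, while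
`(1/2)C_{q,p}(J₂/2) + (1/2)C_{q,p}(J₂/2) = 2^{1/q}/2`, and these agree only when `q = 1`. -/
theorem condC3_implies_q_eq_one (q p : ℝ≥0∞) (hq : 1 ≤ q) (hp : 1 ≤ p) :
    (CondC3 (fun n ρ => distC (lqp q p) ρ) → q = 1) ∧
    distC (lqp q p) (((4 : ℂ))⁻¹ • dirSum (Jmat 2) (Jmat 2))
      = (4 : ℝ) ^ (1 / q.toReal) / 4 ∧
    (1 / 2) * distC (lqp q p) (((2 : ℂ))⁻¹ • Jmat 2)
        + (1 / 2) * distC (lqp q p) (((2 : ℂ))⁻¹ • Jmat 2)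
      = (2 : ℝ) ^ (1 / q.toReal) / 2 ∧
    ((4 : ℝ) ^ (1 / q.toReal) / 4 = (2 : ℝ) ^ (1 / q.toReal) / 2 → q = 1) := by
  have hD4 := distC_four hq hp
  have hD2 := distC_two hq hp
  refine ⟨?_, hD4, by rw [hD2]; ring, final_alg hq⟩
  intro hC3
  have h := hC3 2 2 ((2:ℂ)⁻¹ • Jmat 2) ((2:ℂ)⁻¹ • Jmat 2) (1/2) (1/2)
    isDensity_half_J isDensity_half_J (by norm_num) (by norm_num) (by norm_num)
  simp only at h
  have hco : (((1:ℝ)/2 : ℝ) : ℂ) • ((2:ℂ)⁻¹ • Jmat 2) = (4:ℂ)⁻¹ • Jmat 2 := by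
    rw [smul_smul]
    norm_num
  rw [show ((1:ℝ)/2 : ℝ) = (1/2 : ℝ) from rfl] at hco
  rw [hco, dirSum_smul, hD4, hD2] at h
  apply final_alg hq
  linarith
end
end

section
/- The family C_{1,∞} fails condition (B3). Specifically, let n ≥ 2, θ ∈ (0, π/2) with cos θ > 1/n, and set K_1 = (sin θ) I_n ⊕ [0], K_2 = (cos θ) I_n ⊕ [1] in M_{n+1}(ℂ); then {K_1, K_2} is a set of incoherent Kraus operators, and for ρ = J_{n+1}/(n+1), with p_j = tr(K_j ρ K_j†) and ρ_j = K_j ρ K_j†/p_j, one has Σ_{j=1}^2 p_j C_{1,∞}(ρ_j) − C_{1,∞}(ρ) = (n cos θ − 1)(1 − cos θ)/(n+1) > 0. -/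
open scoped ENNReal ComplexOrder
open Matrix

noncomputable section

section Helpers

lemma fin_le_ciSup {m : ℕ} (f : Fin m → ℝ) (i : Fin m) : f i ≤ ⨆ i, f i :=
  le_ciSup (Set.Finite.bddAbove (Set.finite_range f)) i

lemma fin_ciSup_eq {m : ℕ} (f : Fin m → ℝ) (i₀ : Fin m) (h : ∀ i, f i ≤ f i₀) :
    (⨆ i, f i) = f i₀ := by
  haveI : Nonempty (Fin m) := ⟨i₀⟩
  exact le_antisymm (ciSup_le h) (fin_le_ciSup f i₀)

lemma lqp_one_top {m k : ℕ} (A : Matrix (Fin m) (Fin k) ℂ) :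
    lqp 1 ∞ A = ∑ j, ⨆ i, ‖A i j‖ := by
  unfold lqp lpV
  simp only [if_pos rfl, if_neg (ENNReal.one_ne_top), ENNReal.toReal_one, Real.rpow_one,
    one_div_one]
  refine Finset.sum_congr rfl fun j _ => ?_
  rw [Complex.norm_real, Real.norm_eq_abs, if_pos trivial,
    abs_of_nonneg (Real.iSup_nonneg fun i => norm_nonneg _)]

lemma distC_eq {n : ℕ} (ν : Matrix (Fin n) (Fin n) ℂ → ℝ) (ρ σ₀ : Matrix (Fin n) (Fin n) ℂ)
    (c : ℝ) (h₀ : IsIncoherentState σ₀) (hval : ν (ρ - σ₀) = c)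
    (hlb : ∀ σ, IsIncoherentState σ → c ≤ ν (ρ - σ)) :
    distC ν ρ = c := by
  refine le_antisymm (csInf_le ⟨c, ?_⟩ ⟨σ₀, h₀, hval.symm⟩) (le_csInf ⟨_, σ₀, h₀, rfl⟩ ?_) <;>
  · rintro x ⟨σ, hσ, rfl⟩
    exact hlb σ hσ

lemma sum_ite_fin {α : Type*} [AddCommMonoid α] (n : ℕ) (x y : α) :
    ∑ i : Fin (n+1), (if (i:ℕ) < n then x else y) = n • x + y := by
  rw [Fin.sum_univ_castSucc]
  simp [Fin.is_lt]

lemma distC_rank1 {m : ℕ} (u w : Fin m → ℝ) (i₀ : Fin m → Fin m)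
    (hu : ∀ i, 0 ≤ u i) (hsum : ∑ i, u i ^ 2 = 1)
    (hi₀ : ∀ j, i₀ j ≠ j) (hmax : ∀ j, u (i₀ j) = w j)
    (hle : ∀ j i, i ≠ j → u i ≤ w j)
    (A : Matrix (Fin m) (Fin m) ℂ) (hA : ∀ i k, A i k = ((u i * u k : ℝ) : ℂ)) :
    distC (lqp 1 ∞) A = ∑ j, w j * u j := by
  have hw : ∀ j, 0 ≤ w j := fun j => (hmax j) ▸ hu (i₀ j)
  set σ₀ : Matrix (Fin m) (Fin m) ℂ := Matrix.diagonal (fun i => ((u i ^ 2 : ℝ) : ℂ)) with hσ₀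
  have h₀ : IsIncoherentState σ₀ := by
    refine ⟨⟨Matrix.posSemidef_diagonal_iff.mpr fun i => Complex.zero_le_real.mpr (by positivity),
      ?_⟩, Matrix.isDiag_diagonal _⟩
    rw [Matrix.trace_diagonal]
    norm_cast
  refine distC_eq _ _ σ₀ _ h₀ ?_ ?_
  · rw [lqp_one_top]
    refine Finset.sum_congr rfl fun j _ => ?_
    have key : ∀ i, ‖(A - σ₀) i j‖ = if i = j then 0 else u i * u j := by
      intro i
      by_cases h : i = j
      · subst h
        simp [hσ₀, Matrix.sub_apply, hA, Matrix.diagonal_apply_eq, sq]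
      · simp [hσ₀, Matrix.sub_apply, hA, Matrix.diagonal_apply_ne _ h, h, abs_of_nonneg (hu i),
          abs_of_nonneg (hu j)]
    rw [fin_ciSup_eq _ (i₀ j)]
    · rw [key, if_neg (hi₀ j), hmax]
    · intro i
      rw [key, key, if_neg (hi₀ j), hmax]
      by_cases h : i = j
      · simp [h, mul_nonneg (hw j) (hu j)]
      · rw [if_neg h]
        exact mul_le_mul_of_nonneg_right (hle j i h) (hu j)
  · intro σ hσ
    rw [lqp_one_top]
    refine Finset.sum_le_sum fun j _ => ?_
    have : w j * u j = ‖(A - σ) (i₀ j) j‖ := by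
      rw [Matrix.sub_apply, hσ.2 (hi₀ j), sub_zero, hA, Complex.norm_real, Real.norm_eq_abs,
        abs_of_nonneg (mul_nonneg (hu _) (hu j)), hmax]
    rw [this]
    exact fin_le_ciSup (fun i => ‖(A - σ) i j‖) (i₀ j)

end Helpers

/-- The pair of Kraus operators `K₁ = (sin θ) Iₙ ⊕ [0]`, `K₂ = (cos θ) Iₙ ⊕ [1]`
in `M_{n+1}(ℂ)`. -/
def KrausPair (n : ℕ) (θ : ℝ) : Fin 2 → Matrix (Fin (n + 1)) (Fin (n + 1)) ℂ :=
  ![Matrix.diagonal fun i => if (i : ℕ) < n then (Real.sin θ : ℂ) else 0,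
    Matrix.diagonal fun i => if (i : ℕ) < n then (Real.cos θ : ℂ) else 1]

lemma KJK_apply {n : ℕ} (d : Fin (n+1) → ℂ) (i k : Fin (n+1)) :
    (Matrix.diagonal d * ((((n : ℂ) + 1)⁻¹) • Jmat (n + 1)) * (Matrix.diagonal d)ᴴ) i k
      = ((n : ℂ) + 1)⁻¹ * (d i * star (d k)) := by
  rw [Matrix.diagonal_conjTranspose, Matrix.mul_diagonal, Matrix.diagonal_mul,
    Matrix.smul_apply, Pi.star_apply]
  simp only [Jmat, Matrix.of_apply, smul_eq_mul, mul_one]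
  ring

lemma KJK_trace {n : ℕ} (d : Fin (n+1) → ℂ) :
    (Matrix.diagonal d * ((((n : ℂ) + 1)⁻¹) • Jmat (n + 1)) * (Matrix.diagonal d)ᴴ).trace
      = ((n : ℂ) + 1)⁻¹ * ∑ i, d i * star (d i) := by
  rw [Matrix.trace, Finset.mul_sum]
  exact Finset.sum_congr rfl fun i _ => KJK_apply d i i


set_option maxHeartbeats 3200000 in
/-- `C_{1,∞}` fails (B3): for `n ≥ 2`, `θ ∈ (0, π/2)` with `cos θ > 1/n`,
`{K₁, K₂}` is a set of incoherent Kraus operators and, for `ρ = J_{n+1}/(n+1)`,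
`∑ⱼ pⱼ C_{1,∞}(ρⱼ) - C_{1,∞}(ρ) = (n cos θ - 1)(1 - cos θ)/(n+1) > 0`. -/
theorem C_one_infty_fails_B3 (n : ℕ) (hn : 2 ≤ n) (θ : ℝ)
    (hθ0 : 0 < θ) (hθπ : θ < Real.pi / 2) (hcos : 1 / (n : ℝ) < Real.cos θ) :
    IsIncoherentKraus (KrausPair n θ) ∧
    (∑ j : Fin 2,
        ((KrausPair n θ j * (((n : ℂ) + 1)⁻¹ • Jmat (n + 1)) * (KrausPair n θ j)ᴴ).trace).re *
          distC (lqp 1 ∞)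
            (((((KrausPair n θ j * (((n : ℂ) + 1)⁻¹ • Jmat (n + 1)) *
                    (KrausPair n θ j)ᴴ).trace).re)⁻¹ : ℂ) •
              (KrausPair n θ j * (((n : ℂ) + 1)⁻¹ • Jmat (n + 1)) * (KrausPair n θ j)ᴴ)))
        - distC (lqp 1 ∞) (((n : ℂ) + 1)⁻¹ • Jmat (n + 1))
      = ((n : ℝ) * Real.cos θ - 1) * (1 - Real.cos θ) / ((n : ℝ) + 1) ∧
    0 < ((n : ℝ) * Real.cos θ - 1) * (1 - Real.cos θ) / ((n : ℝ) + 1) := by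
  -- basic real facts
  have hn0 : (0:ℝ) < n := by positivity
  have hs : 0 < Real.sin θ := Real.sin_pos_of_pos_of_lt_pi hθ0 (by linarith [Real.pi_pos])
  have hc : 0 < Real.cos θ := lt_trans (by positivity) hcos
  have hc1 : Real.cos θ < 1 := by
    have := Real.cos_lt_cos_of_nonneg_of_le_pi le_rfl (by linarith [Real.pi_pos]) hθ0
    simpa using this
  set c : ℝ := Real.cos θ with hc_def
  set s : ℝ := Real.sin θ with hs_def
  have hs2 : s ^ 2 = 1 - c ^ 2 := by nlinarith [Real.sin_sq_add_cos_sq θ]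
  set t : ℝ := n * c ^ 2 + 1 with ht_def
  have ht : 0 < t := by positivity
  have hn1R : ((n:ℝ) + 1) ≠ 0 := by positivity
  have htne : t ≠ 0 := ne_of_gt ht
  set d0 : Fin (n+1) → ℂ := fun i => if (i : ℕ) < n then (s : ℂ) else 0 with hd0
  set d1 : Fin (n+1) → ℂ := fun i => if (i : ℕ) < n then (c : ℂ) else 1 with hd1
  have e0 : KrausPair n θ 0 = Matrix.diagonal d0 := rfl
  have e1 : KrausPair n θ 1 = Matrix.diagonal d1 := rfl
  have hsne : s ≠ 0 := ne_of_gt hs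
  have hnne : (n:ℝ) ≠ 0 := ne_of_gt hn0
  clear_value c s t d0 d1
  refine ⟨⟨?_, ?_⟩, ?_, ?_⟩
  · -- ∑ Kᴴ K = 1
    have hfun : ∀ i : Fin (n+1), star (d0 i) * d0 i + star (d1 i) * d1 i = 1 := by
      intro i
      by_cases h : (i : ℕ) < n
      · simp only [hd0, hd1, if_pos h, Complex.star_def, Complex.conj_ofReal]
        norm_cast
        nlinarith [hs2]
      · simp [hd0, hd1, if_neg h]
    rw [Fin.sum_univ_two, e0, e1, Matrix.diagonal_conjTranspose,
      Matrix.diagonal_conjTranspose, Matrix.diagonal_mul_diagonal,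
      Matrix.diagonal_mul_diagonal, Matrix.diagonal_add]
    ext i k
    by_cases hik : i = k
    · subst hik
      rw [Matrix.diagonal_apply_eq, Matrix.one_apply_eq]
      simpa using hfun i
    · rw [Matrix.diagonal_apply_ne _ hik, Matrix.one_apply_ne hik]
  · -- incoherent-preserving
    intro j σ hσ
    have hdiag : ∃ d : Fin (n+1) → ℂ, KrausPair n θ j = Matrix.diagonal d := by
      fin_cases j
      exacts [⟨d0, e0⟩, ⟨d1, e1⟩]
    obtain ⟨d, hd⟩ := hdiag
    intro i k hik
    rw [hd, Matrix.diagonal_conjTranspose, Matrix.mul_diagonal, Matrix.diagonal_mul,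
      hσ.2 hik, mul_zero, zero_mul]
  rotate_left 1
  · -- positivity
    have hcos2 : 1 < c * n := (div_lt_iff₀ hn0).mp hcos
    have h1 : 0 < (n:ℝ) * c - 1 := by nlinarith
    have h2 : 0 < 1 - c := by linarith
    exact div_pos (mul_pos h1 h2) (by positivity)
  · -- main computation
    set p₁ : ℝ := n * s ^ 2 / (n + 1) with hp₁
    set p₂ : ℝ := t / (n + 1) with hp₂
    have hp₁pos : 0 < p₁ := by rw [hp₁]; positivity
    have hp₂pos : 0 < p₂ := by rw [hp₂]; positivity
    clear_value p₁ p₂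
    have hinv : ((n : ℂ) + 1)⁻¹ = (((n + 1 : ℝ))⁻¹ : ℂ) := by push_cast; ring
    have hsumstar0 : ∑ i, d0 i * star (d0 i) = ((n * s ^ 2 : ℝ) : ℂ) := by
      have key : ∀ i : Fin (n+1), d0 i * star (d0 i)
          = if (i : ℕ) < n then ((s^2 : ℝ) : ℂ) else 0 := by
        intro i
        by_cases h : (i : ℕ) < n <;>
          simp [hd0, h, Complex.star_def, Complex.conj_ofReal, ← Complex.ofReal_mul, sq]
      rw [Finset.sum_congr rfl fun i _ => key i, sum_ite_fin, nsmul_eq_mul]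
      push_cast
      ring
    have hsumstar1 : ∑ i, d1 i * star (d1 i) = ((t : ℝ) : ℂ) := by
      have key : ∀ i : Fin (n+1), d1 i * star (d1 i)
          = if (i : ℕ) < n then ((c^2 : ℝ) : ℂ) else 1 := by
        intro i
        by_cases h : (i : ℕ) < n <;>
          simp [hd1, h, Complex.star_def, Complex.conj_ofReal, ← Complex.ofReal_mul, sq]
      rw [Finset.sum_congr rfl fun i _ => key i, sum_ite_fin, nsmul_eq_mul, ht_def]
      push_cast
      ring
    have htr0 : (KrausPair n θ 0 * (((n : ℂ) + 1)⁻¹ • Jmat (n + 1)) *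
        (KrausPair n θ 0)ᴴ).trace = ((p₁ : ℝ) : ℂ) := by
      rw [e0, KJK_trace, hsumstar0, hinv, hp₁]
      push_cast
      ring
    have htr1 : (KrausPair n θ 1 * (((n : ℂ) + 1)⁻¹ • Jmat (n + 1)) *
        (KrausPair n θ 1)ᴴ).trace = ((p₂ : ℝ) : ℂ) := by
      rw [e1, KJK_trace, hsumstar1, hinv, hp₂]
      push_cast
      ring
    have hn1 : (1:ℕ) < n + 1 := by omega
    have h0n : (0:ℕ) < n + 1 := by omega
    have hne01 : ∀ j : Fin (n+1),
        (if (j:ℕ) = 0 then (⟨1, hn1⟩ : Fin (n+1)) else ⟨0, h0n⟩) ≠ j := by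
      intro j
      by_cases h : (j:ℕ) = 0
      · rw [if_pos h]
        exact Fin.ne_of_val_ne (by simp [h])
      · rw [if_neg h]
        exact Fin.ne_of_val_ne (by simp [Ne.symm h])
    -- distC of ρ itself
    have hq0 : (Real.sqrt ((n:ℝ)+1))⁻¹ * (Real.sqrt ((n:ℝ)+1))⁻¹ = ((n:ℝ)+1)⁻¹ := by
      rw [← mul_inv, Real.mul_self_sqrt (by positivity)]
    have hρval : distC (lqp 1 ∞) (((n : ℂ) + 1)⁻¹ • Jmat (n + 1))
        = ∑ _j : Fin (n+1), (Real.sqrt ((n:ℝ)+1))⁻¹ * (Real.sqrt ((n:ℝ)+1))⁻¹ := by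
      refine distC_rank1 (fun _ => (Real.sqrt ((n:ℝ)+1))⁻¹) (fun _ => (Real.sqrt ((n:ℝ)+1))⁻¹)
        (fun j => if (j:ℕ) = 0 then ⟨1, hn1⟩ else ⟨0, h0n⟩)
        (fun i => by positivity) ?_ hne01 (fun j => rfl) (fun j i _ => le_rfl) _ ?_
      · rw [Finset.sum_const, Finset.card_univ, Fintype.card_fin, nsmul_eq_mul, sq, hq0]
        push_cast
        field_simp
      · intro i k
        simp only [Matrix.smul_apply, Jmat, Matrix.of_apply, smul_eq_mul, mul_one, hinv]
        rw [hq0]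
        norm_cast
    have hρ : distC (lqp 1 ∞) (((n : ℂ) + 1)⁻¹ • Jmat (n + 1)) = 1 := by
      rw [hρval, Finset.sum_const, Finset.card_univ, Fintype.card_fin, nsmul_eq_mul, hq0]
      push_cast
      field_simp
    -- distC of ρ₁
    have hq1 : (Real.sqrt (n:ℝ))⁻¹ * (Real.sqrt (n:ℝ))⁻¹ = ((n:ℝ))⁻¹ := by
      rw [← mul_inv, Real.mul_self_sqrt (by positivity)]
    have h1val : distC (lqp 1 ∞)
        (((p₁ : ℝ) : ℂ)⁻¹ • (KrausPair n θ 0 * (((n : ℂ) + 1)⁻¹ • Jmat (n + 1)) *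
          (KrausPair n θ 0)ᴴ))
        = ∑ j : Fin (n+1), (Real.sqrt (n:ℝ))⁻¹ *
            (if (j:ℕ) < n then (Real.sqrt (n:ℝ))⁻¹ else 0) := by
      refine distC_rank1 (fun i => if (i:ℕ) < n then (Real.sqrt (n:ℝ))⁻¹ else 0)
        (fun _ => (Real.sqrt (n:ℝ))⁻¹)
        (fun j => if (j:ℕ) = 0 then ⟨1, hn1⟩ else ⟨0, h0n⟩)
        (fun i => by by_cases h : (i:ℕ) < n <;> simp [h] <;> positivity)
        ?_ hne01 ?_ (fun j i _ => by by_cases h : (i:ℕ) < n <;> simp [h] <;> positivity) _ ?_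
      · have key : ∀ i : Fin (n+1),
            (if (i:ℕ) < n then (Real.sqrt (n:ℝ))⁻¹ else 0) ^ 2
              = if (i:ℕ) < n then ((n:ℝ))⁻¹ else 0 := by
          intro i
          by_cases h : (i:ℕ) < n <;> simp [h, sq, hq1]
        rw [Finset.sum_congr rfl fun i _ => key i, sum_ite_fin, nsmul_eq_mul]
        field_simp
        norm_num
      · intro j
        by_cases h : (j:ℕ) = 0 <;>
          simp [h, show (1:ℕ) < n by omega, show (0:ℕ) < n by omega]
      · intro i k
        rw [Matrix.smul_apply, e0, KJK_apply]
        by_cases hi : (i : ℕ) < n <;> by_cases hk : (k : ℕ) < n <;>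
          simp only [hd0, hi, hk, if_true, if_false, ite_true, ite_false, star_zero, mul_zero,
            zero_mul, smul_zero, Complex.ofReal_zero, smul_eq_mul,
            Complex.star_def, Complex.conj_ofReal, zero_mul, mul_zero]
        rw [hinv]
        norm_cast
        rw [hq1, hp₁]
        field_simp
        push_cast
        ring
    have h1 : distC (lqp 1 ∞)
        (((p₁ : ℝ) : ℂ)⁻¹ • (KrausPair n θ 0 * (((n : ℂ) + 1)⁻¹ • Jmat (n + 1)) *
          (KrausPair n θ 0)ᴴ)) = 1 := by
      rw [h1val]
      have key : ∀ j : Fin (n+1),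
          (Real.sqrt (n:ℝ))⁻¹ * (if (j:ℕ) < n then (Real.sqrt (n:ℝ))⁻¹ else 0)
            = if (j:ℕ) < n then ((n:ℝ))⁻¹ else 0 := by
        intro j
        by_cases h : (j:ℕ) < n <;> simp [h, hq1]
      rw [Finset.sum_congr rfl fun j _ => key j, sum_ite_fin, nsmul_eq_mul]
      field_simp
      norm_num
    -- distC of ρ₂
    have hqt : (Real.sqrt t)⁻¹ * (Real.sqrt t)⁻¹ = t⁻¹ := by
      rw [← mul_inv, Real.mul_self_sqrt ht.le]
    have hkey : p₂⁻¹ * ((n:ℝ)+1)⁻¹ = (Real.sqrt t)⁻¹ * (Real.sqrt t)⁻¹ := by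
      rw [hqt, hp₂]
      field_simp
    have hne2 : ∀ j : Fin (n+1),
        (if (j:ℕ) < n then Fin.last n else (⟨0, h0n⟩ : Fin (n+1))) ≠ j := by
      intro j
      by_cases h : (j:ℕ) < n
      · rw [if_pos h]
        exact Fin.ne_of_val_ne (by simp [Fin.val_last]; omega)
      · rw [if_neg h]
        have := j.isLt
        exact Fin.ne_of_val_ne (by simp; omega)
    have h2val : distC (lqp 1 ∞)
        (((p₂ : ℝ) : ℂ)⁻¹ • (KrausPair n θ 1 * (((n : ℂ) + 1)⁻¹ • Jmat (n + 1)) *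
          (KrausPair n θ 1)ᴴ))
        = ∑ j : Fin (n+1), (if (j:ℕ) < n then (Real.sqrt t)⁻¹ else c * (Real.sqrt t)⁻¹) *
            (if (j:ℕ) < n then c * (Real.sqrt t)⁻¹ else (Real.sqrt t)⁻¹) := by
      refine distC_rank1
        (fun i => if (i:ℕ) < n then c * (Real.sqrt t)⁻¹ else (Real.sqrt t)⁻¹)
        (fun j => if (j:ℕ) < n then (Real.sqrt t)⁻¹ else c * (Real.sqrt t)⁻¹)
        (fun j => if (j:ℕ) < n then Fin.last n else ⟨0, h0n⟩)
        (fun i => by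
          by_cases h : (i:ℕ) < n <;> simp only [h, ite_true, ite_false]
          · exact mul_nonneg hc.le (by positivity)
          · positivity)
        ?_ hne2 ?_ ?_ _ ?_
      · have key : ∀ i : Fin (n+1),
            (if (i:ℕ) < n then c * (Real.sqrt t)⁻¹ else (Real.sqrt t)⁻¹) ^ 2
              = if (i:ℕ) < n then c^2 * t⁻¹ else t⁻¹ := by
          have hqt2 : ((Real.sqrt t)⁻¹) ^ 2 = t⁻¹ := by rw [sq, hqt]
          intro i
          by_cases h : (i:ℕ) < n
          · rw [if_pos h, if_pos h, mul_pow, hqt2]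
          · rw [if_neg h, if_neg h, hqt2]
        rw [Finset.sum_congr rfl fun i _ => key i, sum_ite_fin, nsmul_eq_mul]
        field_simp
        linarith [ht_def]
      · intro j
        by_cases h : (j:ℕ) < n <;>
          simp [h, Fin.val_last, show (0:ℕ) < n by omega, lt_irrefl]
      · intro j i hij
        by_cases hj : (j:ℕ) < n
        · simp only [hj, ite_true]
          by_cases hi : (i:ℕ) < n <;> simp only [hi, ite_true, ite_false]
          · have h1 : (0:ℝ) ≤ (Real.sqrt t)⁻¹ := by positivity
            nlinarith
          · exact le_rfl
        · simp only [hj, ite_false]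
          have hi : (i:ℕ) < n := by
            have := i.isLt
            have := j.isLt
            have := Fin.val_ne_of_ne hij
            omega
          simp [hi]
      · intro i k
        rw [Matrix.smul_apply, e1, KJK_apply]
        by_cases hi : (i : ℕ) < n <;> by_cases hk : (k : ℕ) < n <;>
          simp only [hd1, hi, hk, if_true, if_false, ite_true, ite_false, star_one, mul_one,
            one_mul, smul_eq_mul, Complex.star_def, Complex.conj_ofReal]
        · rw [hinv]
          norm_cast
          push_cast
          linear_combination (c * c) * hkey
        · rw [hinv]
          norm_cast
          push_cast
          linear_combination c * hkey
        · rw [hinv]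
          norm_cast
          push_cast
          linear_combination c * hkey
        · rw [hinv]
          norm_cast
          push_cast
          linear_combination hkey
    have h2 : distC (lqp 1 ∞)
        (((p₂ : ℝ) : ℂ)⁻¹ • (KrausPair n θ 1 * (((n : ℂ) + 1)⁻¹ • Jmat (n + 1)) *
          (KrausPair n θ 1)ᴴ)) = ((n:ℝ)+1) * (c * t⁻¹) := by
      rw [h2val]
      have key : ∀ j : Fin (n+1),
          (if (j:ℕ) < n then (Real.sqrt t)⁻¹ else c * (Real.sqrt t)⁻¹) *
            (if (j:ℕ) < n then c * (Real.sqrt t)⁻¹ else (Real.sqrt t)⁻¹) = c * t⁻¹ := by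
        intro j
        by_cases h : (j:ℕ) < n <;> simp only [h, ite_true, ite_false] <;>
          linear_combination c * hqt
      rw [Finset.sum_congr rfl fun j _ => key j, Finset.sum_const, Finset.card_univ,
        Fintype.card_fin, nsmul_eq_mul]
      push_cast
      ring
    rw [Fin.sum_univ_two, htr0, htr1, Complex.ofReal_re, Complex.ofReal_re, hρ, h1, h2,
      hp₁, hp₂, hs2, ht_def]
    field_simp
    ring

end
end

section
/- For every finite p > 2, the family C_{1,p} fails condition (B3): there exist n ∈ ℕ, θ ∈ (0, π/2), and the incoherent Kraus operators K_1 = (sin θ) I_n ⊕ [0], K_2 = (cos θ) I_n ⊕ [1] ∈ M_{n+1}(ℂ) such that, for ρ = J_{n+1}/(n+1), with p_j = tr(K_j ρ K_j†) and ρ_j = K_j ρ K_j†/p_j, one has Σ_{j=1}^2 p_j C_{1,p}(ρ_j) > C_{1,p}(ρ). -/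
open scoped ENNReal ComplexOrder
open Matrix

noncomputable section

lemma lqp_one_eq_s6 (p : ℝ) (hp : 0 < p) {m n : ℕ} (X : Matrix (Fin m) (Fin n) ℂ) :
    lqp 1 (ENNReal.ofReal p) X = ∑ j, (∑ i, ‖X i j‖ ^ p) ^ (1/p) := by
  have h1 : (1 : ℝ≥0∞) ≠ ∞ := by simp
  have h2 : ENNReal.ofReal p ≠ ∞ := ENNReal.ofReal_ne_top
  have h3 : (ENNReal.ofReal p).toReal = p := ENNReal.toReal_ofReal hp.le
  simp only [lqp, lpV, if_neg h1, if_neg h2, ENNReal.toReal_one, h3, Real.rpow_one, div_one]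
  refine Finset.sum_congr rfl fun j _ => ?_
  rw [Complex.norm_real, Real.norm_eq_abs,
    abs_of_nonneg (Real.rpow_nonneg (Finset.sum_nonneg fun i _ => Real.rpow_nonneg (norm_nonneg _) _) _)]

lemma lqp_one_nonneg (p : ℝ) (hp : 0 < p) {m n : ℕ} (X : Matrix (Fin m) (Fin n) ℂ) :
    0 ≤ lqp 1 (ENNReal.ofReal p) X := by
  rw [lqp_one_eq_s6 p hp]
  exact Finset.sum_nonneg fun j _ => Real.rpow_nonneg
    (Finset.sum_nonneg fun i _ => Real.rpow_nonneg (norm_nonneg _) _) _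

lemma incoherent_witness (m : ℕ) :
    IsIncoherentState (Matrix.diagonal (fun i : Fin (m+1) => if i = 0 then (1:ℂ) else 0)) := by
  refine ⟨⟨Matrix.PosSemidef.diagonal fun i => ?_, ?_⟩, Matrix.isDiag_diagonal _⟩
  · split <;> simp
  · rw [Matrix.trace_diagonal]
    simp

lemma distC_bddBelow (p : ℝ) (hp : 0 < p) {m : ℕ} (ρ : Matrix (Fin m) (Fin m) ℂ) :
    BddBelow {x | ∃ σ, IsIncoherentState σ ∧ x = lqp 1 (ENNReal.ofReal p) (ρ - σ)} := by
  refine ⟨0, fun x hx => ?_⟩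
  obtain ⟨σ, -, rfl⟩ := hx
  exact lqp_one_nonneg p hp _

lemma distC_le (p : ℝ) (hp : 0 < p) {m : ℕ} (ρ σ : Matrix (Fin m) (Fin m) ℂ)
    (hσ : IsIncoherentState σ) :
    distC (lqp 1 (ENNReal.ofReal p)) ρ ≤ ∑ j, (∑ i, ‖(ρ - σ) i j‖ ^ p) ^ (1/p) := by
  rw [← lqp_one_eq_s6 p hp]
  exact csInf_le (distC_bddBelow p hp ρ) ⟨σ, hσ, rfl⟩

lemma le_distC (p : ℝ) (hp : 0 < p) {m : ℕ} (ρ : Matrix (Fin (m+1)) (Fin (m+1)) ℂ) (L : ℝ)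
    (h : ∀ σ : Matrix (Fin (m+1)) (Fin (m+1)) ℂ, σ.IsDiag →
      L ≤ ∑ j, (∑ i, ‖(ρ - σ) i j‖ ^ p) ^ (1/p)) :
    L ≤ distC (lqp 1 (ENNReal.ofReal p)) ρ := by
  refine le_csInf ⟨_, _, incoherent_witness m, rfl⟩ ?_
  rintro x ⟨σ, hσ, rfl⟩
  rw [lqp_one_eq_s6 p hp]
  exact h σ hσ.2

-- helper facts
lemma mem_eraseLast {n : ℕ} {i : Fin (n+1)} :
    i ∈ Finset.univ.erase (Fin.last n) ↔ (i : ℕ) < n := by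
  simp only [Finset.mem_erase, Finset.mem_univ, and_true, Ne, Fin.ext_iff, Fin.val_last]
  have := i.isLt
  omega

lemma card_eraseLast (n : ℕ) : (Finset.univ.erase (Fin.last n)).card = n := by
  simp [Finset.card_erase_of_mem (Finset.mem_univ _)]

lemma rpow_rpow_one_div {a p : ℝ} (hp : 0 < p) (ha : 0 ≤ a) : (a ^ p) ^ (1/p) = a := by
  rw [one_div, Real.rpow_rpow_inv ha hp.ne']

lemma KJK (n : ℕ) (d : Fin (n+1) → ℂ) :
    Matrix.diagonal d * (((n : ℂ) + 1)⁻¹ • Jmat (n + 1)) * (Matrix.diagonal d)ᴴ =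
      Matrix.of fun i j => ((n : ℂ) + 1)⁻¹ * (d i * star (d j)) := by
  ext i j
  rw [Matrix.diagonal_conjTranspose, Matrix.mul_diagonal, Matrix.mul_smul, Matrix.smul_apply,
    Matrix.diagonal_mul]
  simp [Jmat]
  ring


lemma lb0 (p : ℝ) (hp : 0 < p) (n : ℕ) (hn : 1 ≤ n) :
    ((n : ℝ) - 1) ^ (1/p) ≤ distC (lqp 1 (ENNReal.ofReal p))
      (Matrix.of fun i j : Fin (n+1) =>
        if (i : ℕ) < n ∧ (j : ℕ) < n then ((1/(n:ℝ) : ℝ) : ℂ) else 0) := by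
  obtain ⟨m, rfl⟩ := Nat.exists_eq_add_of_le hn
  set N := 1 + m with hN
  apply le_distC p hp
  intro σ hσ
  set X := (Matrix.of fun i j : Fin (N+1) =>
        if (i : ℕ) < N ∧ (j : ℕ) < N then ((1/(N:ℝ) : ℝ) : ℂ) else 0) - σ with hX
  have hnonneg : ∀ j : Fin (N+1), (0:ℝ) ≤ (∑ i, ‖X i j‖ ^ p) ^ (1/p) := fun j =>
    Real.rpow_nonneg (Finset.sum_nonneg fun i _ => Real.rpow_nonneg (norm_nonneg _) _) _
  have hNR : (0:ℝ) ≤ (N:ℝ) - 1 := by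
    have : (1:ℝ) ≤ (N:ℝ) := by exact_mod_cast Nat.one_le_iff_ne_zero.mpr (by omega)
    linarith
  set F := Finset.univ.erase (Fin.last N) with hF
  have colbound : ∀ j ∈ F, ((N:ℝ) - 1) ^ (1/p) * (1/N) ≤ (∑ i, ‖X i j‖ ^ p) ^ (1/p) := by
    intro j hj
    have hjN : (j : ℕ) < N := mem_eraseLast.mp hj
    have hsub : ∑ i ∈ F.erase j, ‖X i j‖ ^ p ≤ ∑ i, ‖X i j‖ ^ p := by
      apply Finset.sum_le_sum_of_subset_of_nonneg (Finset.subset_univ _)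
      intro i _ _; exact Real.rpow_nonneg (norm_nonneg _) _
    have hval : ∀ i ∈ F.erase j, ‖X i j‖ ^ p = (1/(N:ℝ)) ^ p := by
      intro i hi
      have hij : i ≠ j := (Finset.mem_erase.mp hi).1
      have hiN : (i : ℕ) < N := mem_eraseLast.mp (Finset.mem_erase.mp hi).2
      have : X i j = ((1/(N:ℝ) : ℝ) : ℂ) := by
        simp [hX, Matrix.sub_apply, hσ hij, hiN, hjN]
      rw [this, Complex.norm_real, Real.norm_eq_abs, abs_of_nonneg (by positivity)]
    have hcard : (F.erase j).card = N - 1 := by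
      rw [Finset.card_erase_of_mem hj, card_eraseLast]
    have hsum : ∑ i ∈ F.erase j, ‖X i j‖ ^ p = ((N:ℝ) - 1) * (1/(N:ℝ)) ^ p := by
      rw [Finset.sum_congr rfl hval, Finset.sum_const, hcard, nsmul_eq_mul]
      congr 1
      have : (1:ℕ) ≤ N := by omega
      push_cast [Nat.cast_sub this]
      ring
    calc ((N:ℝ) - 1) ^ (1/p) * (1/N)
        = (((N:ℝ) - 1) * (1/(N:ℝ)) ^ p) ^ (1/p) := by
          rw [Real.mul_rpow hNR (by positivity), rpow_rpow_one_div hp (by positivity)]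
      _ ≤ (∑ i, ‖X i j‖ ^ p) ^ (1/p) := by
          exact Real.rpow_le_rpow (mul_nonneg hNR (by positivity))
            (by rw [← hsum]; exact hsub) (by positivity)
  calc ((N:ℝ) - 1) ^ (1/p)
      = F.card • (((N:ℝ) - 1) ^ (1/p) * (1/N)) := by
        rw [card_eraseLast, nsmul_eq_mul]
        field_simp
    _ ≤ ∑ j ∈ F, (∑ i, ‖X i j‖ ^ p) ^ (1/p) := Finset.card_nsmul_le_sum _ _ _ colbound
    _ ≤ ∑ j, (∑ i, ‖X i j‖ ^ p) ^ (1/p) := by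
        apply Finset.sum_le_sum_of_subset_of_nonneg (Finset.subset_univ _)
        intro j _ _; exact hnonneg j

lemma lb1 (p : ℝ) (hp : 0 < p) (n : ℕ) (c : ℝ) (hc : 0 ≤ c) :
    (n : ℝ) * (c/2) + (c/2) * (n:ℝ) ^ (1/p) ≤ distC (lqp 1 (ENNReal.ofReal p))
      (Matrix.of fun i j : Fin (n+1) =>
        (((if (i : ℕ) < n then c else 1) * (if (j : ℕ) < n then c else 1) / 2 : ℝ) : ℂ)) := by
  apply le_distC p hp
  intro σ hσ
  set X := (Matrix.of fun i j : Fin (n+1) =>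
        (((if (i : ℕ) < n then c else 1) * (if (j : ℕ) < n then c else 1) / 2 : ℝ) : ℂ)) - σ with hX
  have hterm : ∀ i j, 0 ≤ ‖X i j‖ ^ p := fun i j => Real.rpow_nonneg (norm_nonneg _) _
  have hnonneg : ∀ j : Fin (n+1), (0:ℝ) ≤ (∑ i, ‖X i j‖ ^ p) ^ (1/p) := fun j =>
    Real.rpow_nonneg (Finset.sum_nonneg fun i _ => hterm i j) _
  set F := Finset.univ.erase (Fin.last n) with hF
  have hXlast : ∀ j ∈ F, X (Fin.last n) j = ((c/2 : ℝ) : ℂ) := by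
    intro j hj
    have hjn : (j : ℕ) < n := mem_eraseLast.mp hj
    have hne : Fin.last n ≠ j := by
      intro h; rw [← h] at hjn; simp [Fin.val_last] at hjn
    simp [hX, Matrix.sub_apply, hσ hne, hjn]
  have hXcol : ∀ i ∈ F, X i (Fin.last n) = ((c/2 : ℝ) : ℂ) := by
    intro i hi
    have hin : (i : ℕ) < n := mem_eraseLast.mp hi
    have hne : i ≠ Fin.last n := by
      intro h; rw [h] at hin; simp [Fin.val_last] at hin
    simp [hX, Matrix.sub_apply, hσ hne, hin]
  have colbound : ∀ j ∈ F, c/2 ≤ (∑ i, ‖X i j‖ ^ p) ^ (1/p) := by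
    intro j hj
    have h1 : ‖X (Fin.last n) j‖ ^ p ≤ ∑ i, ‖X i j‖ ^ p :=
      Finset.single_le_sum (fun i _ => hterm i j) (Finset.mem_univ _)
    have h2 : ‖X (Fin.last n) j‖ = c/2 := by
      rw [hXlast j hj, Complex.norm_real, Real.norm_eq_abs, abs_of_nonneg (by positivity)]
    calc c/2 = ((c/2) ^ p) ^ (1/p) := (rpow_rpow_one_div hp (by positivity)).symm
      _ ≤ (∑ i, ‖X i j‖ ^ p) ^ (1/p) := by
          apply Real.rpow_le_rpow (by positivity) _ (by positivity)
          rw [← h2]; exact h1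
  have lastbound : (c/2) * (n:ℝ) ^ (1/p) ≤ (∑ i, ‖X i (Fin.last n)‖ ^ p) ^ (1/p) := by
    have hsub : ∑ i ∈ F, ‖X i (Fin.last n)‖ ^ p ≤ ∑ i, ‖X i (Fin.last n)‖ ^ p :=
      Finset.sum_le_sum_of_subset_of_nonneg (Finset.subset_univ _) (fun i _ _ => hterm i _)
    have hsum : ∑ i ∈ F, ‖X i (Fin.last n)‖ ^ p = (n:ℝ) * (c/2) ^ p := by
      rw [Finset.sum_congr rfl (fun i hi => ?_), Finset.sum_const, card_eraseLast, nsmul_eq_mul]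
      rw [hXcol i hi, Complex.norm_real, Real.norm_eq_abs, abs_of_nonneg (by positivity)]
    calc (c/2) * (n:ℝ) ^ (1/p) = ((n:ℝ) * (c/2) ^ p) ^ (1/p) := by
          rw [Real.mul_rpow (by positivity) (by positivity), rpow_rpow_one_div hp (by positivity)]
          ring
      _ ≤ (∑ i, ‖X i (Fin.last n)‖ ^ p) ^ (1/p) :=
          Real.rpow_le_rpow (by positivity) (by rw [← hsum]; exact hsub) (by positivity)
  calc (n : ℝ) * (c/2) + (c/2) * (n:ℝ) ^ (1/p)
      ≤ (∑ j ∈ F, (∑ i, ‖X i j‖ ^ p) ^ (1/p)) + (∑ i, ‖X i (Fin.last n)‖ ^ p) ^ (1/p) := by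
        apply add_le_add _ lastbound
        have := Finset.card_nsmul_le_sum F (fun j => (∑ i, ‖X i j‖ ^ p) ^ (1/p)) (c/2) colbound
        rwa [card_eraseLast, nsmul_eq_mul] at this
    _ = ∑ j, (∑ i, ‖X i j‖ ^ p) ^ (1/p) := Finset.sum_erase_add _ _ (Finset.mem_univ _)

lemma ub (p : ℝ) (hp : 0 < p) (n : ℕ) :
    distC (lqp 1 (ENNReal.ofReal p)) (((n : ℂ) + 1)⁻¹ • Jmat (n + 1)) ≤ (n:ℝ) ^ (1/p) := by
  have hinc : IsIncoherentState (Matrix.diagonal fun _ : Fin (n+1) => ((1/((n:ℝ)+1) : ℝ) : ℂ)) := by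
    refine ⟨⟨Matrix.PosSemidef.diagonal fun i => ?_, ?_⟩, Matrix.isDiag_diagonal _⟩
    · exact Complex.zero_le_real.mpr (by positivity)
    · rw [Matrix.trace_diagonal, Finset.sum_const, Finset.card_univ, Fintype.card_fin,
        nsmul_eq_mul]
      have h : ((n:ℝ)+1) ≠ 0 := by positivity
      push_cast
      field_simp
  refine le_trans (distC_le p hp _ _ hinc) (le_of_eq ?_)
  set X := (((n : ℂ) + 1)⁻¹ • Jmat (n + 1)) -
      (Matrix.diagonal fun _ : Fin (n+1) => ((1/((n:ℝ)+1) : ℝ) : ℂ)) with hXdef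
  have hXval : ∀ i j : Fin (n+1), X i j = if i = j then 0 else ((1/((n:ℝ)+1) : ℝ) : ℂ) := by
    intro i j
    by_cases h : i = j <;>
      simp [hXdef, Matrix.sub_apply, Jmat, Matrix.diagonal_apply, h] <;> push_cast <;> ring
  have hcol : ∀ j : Fin (n+1), ∑ i, ‖X i j‖ ^ p = (n:ℝ) * (1/((n:ℝ)+1)) ^ p := by
    intro j
    rw [← Finset.sum_erase_add _ _ (Finset.mem_univ j)]
    have h1 : ∀ i ∈ Finset.univ.erase j, ‖X i j‖ ^ p = (1/((n:ℝ)+1)) ^ p := by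
      intro i hi
      rw [hXval i j, if_neg (Finset.mem_erase.mp hi).1, Complex.norm_real, Real.norm_eq_abs,
        abs_of_nonneg (by positivity)]
    rw [Finset.sum_congr rfl h1, Finset.sum_const, Finset.card_erase_of_mem (Finset.mem_univ _),
      Finset.card_univ, Fintype.card_fin, nsmul_eq_mul, hXval j j, if_pos rfl]
    simp [Real.zero_rpow hp.ne']
  rw [Finset.sum_congr rfl fun j _ => by rw [hcol j]]
  rw [Finset.sum_const, Finset.card_univ, Fintype.card_fin, nsmul_eq_mul,
    Real.mul_rpow (by positivity) (by positivity), rpow_rpow_one_div hp (by positivity)]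
  field_simp
  push_cast
  ring

lemma keyineq (p : ℝ) (hp : 2 < p) (n : ℕ) (hn : 2 ≤ n)
    (h3 : 3 * (n:ℝ) ^ (1/p) ≤ Real.sqrt n) :
    (n:ℝ) ^ (1/p) <
      ((n:ℝ) - 1) / ((n:ℝ) + 1) * ((n:ℝ) - 1) ^ (1/p) +
        2 / ((n:ℝ) + 1) * ((n:ℝ) * ((1/Real.sqrt n)/2) + ((1/Real.sqrt n)/2) * (n:ℝ) ^ (1/p)) := by
  have hn0 : (0:ℝ) < n := by positivity
  have hn2 : (2:ℝ) ≤ n := by exact_mod_cast hn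
  set x := (n:ℝ) ^ (1/p) with hx
  set r := Real.sqrt n with hr
  have hr0 : 0 < r := Real.sqrt_pos.mpr hn0
  have hrr : r * r = n := Real.mul_self_sqrt hn0.le
  have hx0 : 0 < x := Real.rpow_pos_of_pos hn0 _
  have hA : (1 - 1/(n:ℝ)) * x ≤ ((n:ℝ) - 1) ^ (1/p) := by
    have h1 : ((n:ℝ) - 1) = (n:ℝ) * (1 - 1/(n:ℝ)) := by field_simp
    have h2 : (0:ℝ) < 1 - 1/(n:ℝ) := by
      rw [sub_pos, div_lt_one hn0]; linarith
    rw [h1, Real.mul_rpow hn0.le h2.le]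
    have h4 : (1 - 1/(n:ℝ)) ≤ (1 - 1/(n:ℝ)) ^ (1/p) := by
      nth_rewrite 1 [← Real.rpow_one (1 - 1/(n:ℝ))]
      apply Real.rpow_le_rpow_of_exponent_ge h2 (by linarith [show (0:ℝ) < 1/(n:ℝ) from by positivity]) ?_
      rw [div_le_one (by linarith)]; linarith
    nlinarith [Real.rpow_nonneg (show (0:ℝ) ≤ 1 - 1/(n:ℝ) by linarith) (1/p)]
  rw [div_mul_eq_mul_div, div_mul_eq_mul_div, ← add_div, lt_div_iff₀ (by linarith)]
  have hkey : x * ((n:ℝ) + 1) - ((n:ℝ) - 1) * ((1 - 1/(n:ℝ)) * x) < r := by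
    have h5 : x * ((n:ℝ) + 1) - ((n:ℝ) - 1) * ((1 - 1/(n:ℝ)) * x) = x * (3 - 1/(n:ℝ)) := by
      field_simp
      ring
    rw [h5]
    calc x * (3 - 1/(n:ℝ)) < 3 * x := by nlinarith
      _ ≤ r := h3
  have hrder : r ≤ 2 * ((n:ℝ) * ((1/r)/2) + ((1/r)/2) * x) := by
    have : 2 * ((n:ℝ) * ((1/r)/2) + ((1/r)/2) * x) = (n + x) / r := by field_simp
    rw [this, le_div_iff₀ hr0]
    nlinarith
  nlinarith [mul_le_mul_of_nonneg_left hA (show (0:ℝ) ≤ (n:ℝ) - 1 by linarith)]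

lemma isDiag_dsd {m : ℕ} (d : Fin m → ℂ) {σ : Matrix (Fin m) (Fin m) ℂ} (hσ : σ.IsDiag) :
    (Matrix.diagonal d * σ * (Matrix.diagonal d)ᴴ).IsDiag := by
  intro i j hij
  rw [Matrix.diagonal_conjTranspose, Matrix.mul_diagonal, Matrix.diagonal_mul, hσ hij,
    mul_zero, zero_mul]

/-- for every finite `p > 2`, the family `C_{1,p}` fails (B3):
there are `n` and `θ ∈ (0, π/2)` such that the incoherent Kraus operators
`K₁ = (sin θ) Iₙ ⊕ [0]`, `K₂ = (cos θ) Iₙ ⊕ [1]` and `ρ = J_{n+1}/(n+1)` give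
`∑ⱼ pⱼ C_{1,p}(ρⱼ) > C_{1,p}(ρ)`. -/
theorem C_one_p_fails_B3_of_two_lt (p : ℝ) (hp : 2 < p) :
    ∃ (n : ℕ) (θ : ℝ), 0 < θ ∧ θ < Real.pi / 2 ∧
      IsIncoherentKraus (KrausPair n θ) ∧
      distC (lqp 1 (ENNReal.ofReal p)) (((n : ℂ) + 1)⁻¹ • Jmat (n + 1)) <
        ∑ j : Fin 2,
          ((KrausPair n θ j * (((n : ℂ) + 1)⁻¹ • Jmat (n + 1)) * (KrausPair n θ j)ᴴ).trace).re *
            distC (lqp 1 (ENNReal.ofReal p))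
              (((((KrausPair n θ j * (((n : ℂ) + 1)⁻¹ • Jmat (n + 1)) *
                      (KrausPair n θ j)ᴴ).trace).re)⁻¹ : ℂ) •
                (KrausPair n θ j * (((n : ℂ) + 1)⁻¹ • Jmat (n + 1)) * (KrausPair n θ j)ᴴ)) := by
  have hp0 : (0:ℝ) < p := by linarith
  set α : ℝ := 1/2 - 1/p with hαdef
  have hα0 : 0 < α := by
    have h1 : 1/p < 1/2 := by
      rw [div_lt_div_iff₀ hp0 (by norm_num)]
      linarith
    simp only [hαdef]; linarith
  set n : ℕ := max 2 ⌈(3:ℝ) ^ α⁻¹⌉₊ with hndef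
  have hn2 : 2 ≤ n := le_max_left _ _
  have hn0 : (0:ℝ) < n := by
    have : (2:ℝ) ≤ (n:ℝ) := by exact_mod_cast hn2
    linarith
  have hnR2 : (2:ℝ) ≤ (n:ℝ) := by exact_mod_cast hn2
  -- the key size estimate
  have h3n : 3 * (n:ℝ) ^ (1/p) ≤ Real.sqrt n := by
    have hc1 : (3:ℝ) ^ α⁻¹ ≤ (n:ℝ) := by
      calc (3:ℝ) ^ α⁻¹ ≤ (⌈(3:ℝ) ^ α⁻¹⌉₊ : ℝ) := Nat.le_ceil _
        _ ≤ (n:ℝ) := by exact_mod_cast Nat.cast_le.mpr (le_max_right 2 _)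
    have hc2 : (3:ℝ) ≤ (n:ℝ) ^ α := by
      have := Real.rpow_le_rpow (by positivity) hc1 hα0.le
      rwa [← Real.rpow_mul (by norm_num : (0:ℝ) ≤ 3), inv_mul_cancel₀ hα0.ne',
        Real.rpow_one] at this
    have hsplit : Real.sqrt n = (n:ℝ) ^ α * (n:ℝ) ^ (1/p) := by
      rw [Real.sqrt_eq_rpow, ← Real.rpow_add hn0]
      congr 1
      simp only [hαdef]; ring
    rw [hsplit]
    exact mul_le_mul_of_nonneg_right hc2 (Real.rpow_nonneg hn0.le _)
  -- trig setup
  set r := Real.sqrt n with hrdef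
  have hr0 : 0 < r := Real.sqrt_pos.mpr hn0
  have hr1 : 1 < r := by
    rw [hrdef, show (1:ℝ) = Real.sqrt 1 by simp]
    exact Real.sqrt_lt_sqrt (by norm_num) (by linarith)
  set c : ℝ := 1 / r with hcdef
  have hc0 : 0 < c := by positivity
  have hc1 : c < 1 := by rw [hcdef, div_lt_one hr0]; exact hr1
  have hc2n : c ^ 2 = 1 / n := by
    rw [hcdef, div_pow, one_pow, Real.sq_sqrt hn0.le]
  set s : ℝ := Real.sqrt (1 - 1/n) with hsdef
  have h1n : (0:ℝ) < 1 - 1/n := by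
    rw [sub_pos, div_lt_one hn0]; linarith
  have hs2n : s ^ 2 = 1 - 1/n := Real.sq_sqrt h1n.le
  set θ := Real.arccos c with hθdef
  have hθ0 : 0 < θ := Real.arccos_pos.mpr hc1
  have hθ2 : θ < Real.pi / 2 := Real.arccos_lt_pi_div_two.mpr hc0
  have hcos : Real.cos θ = c := Real.cos_arccos (by linarith) hc1.le
  have hsin : Real.sin θ = s := by
    rw [hθdef, Real.sin_arccos, hc2n, hsdef]
  -- Kraus operators in diagonal form
  have hK0 : KrausPair n θ 0 =
      Matrix.diagonal (fun i : Fin (n+1) => if (i:ℕ) < n then (s:ℂ) else 0) := by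
    simp only [KrausPair, Matrix.cons_val_zero, hsin]
  have hK1 : KrausPair n θ 1 =
      Matrix.diagonal (fun i : Fin (n+1) => if (i:ℕ) < n then (c:ℂ) else 1) := by
    simp only [KrausPair, Matrix.cons_val_one, Matrix.head_cons, Matrix.cons_val_zero, hcos]
  have hscs : s^2 + c^2 = 1 := by rw [hs2n, hc2n]; ring
  refine ⟨n, θ, hθ0, hθ2, ⟨?_, ?_⟩, ?_⟩
  · -- sum of K†K = 1
    rw [Fin.sum_univ_two, hK0, hK1, Matrix.diagonal_conjTranspose,
      Matrix.diagonal_conjTranspose, Matrix.diagonal_mul_diagonal,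
      Matrix.diagonal_mul_diagonal, Matrix.diagonal_add]
    ext i k
    rcases eq_or_ne i k with rfl | hik
    · rw [Matrix.diagonal_apply_eq, Matrix.one_apply_eq]
      simp only [Pi.star_apply]
      by_cases h : (i:ℕ) < n
      · simp only [h, if_true, Complex.star_def, Complex.conj_ofReal]
        rw [← Complex.ofReal_mul, ← Complex.ofReal_mul, ← Complex.ofReal_add,
          show s*s+c*c = (1:ℝ) by rw [← hscs]; ring, Complex.ofReal_one]
      · simp [h]
    · rw [Matrix.diagonal_apply_ne _ hik, Matrix.one_apply_ne hik]
  · -- incoherence of the Kraus operators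
    intro j σ hσ
    have hd : ∃ d, KrausPair n θ j = Matrix.diagonal d := by
      fin_cases j
      · exact ⟨_, hK0⟩
      · exact ⟨_, hK1⟩
    obtain ⟨d, hd⟩ := hd
    rw [hd]
    exact isDiag_dsd d hσ.2
  · -- the strict inequality
    have hne_n1 : (n:ℝ) + 1 ≠ 0 := by positivity
    have hne_nm1 : (n:ℝ) - 1 ≠ 0 := by linarith
    have hcc : c * c = 1/(n:ℝ) := by rw [← hc2n]; ring
    -- the two output matrices
    have hM0 : KrausPair n θ 0 * (((n : ℂ) + 1)⁻¹ • Jmat (n + 1)) * (KrausPair n θ 0)ᴴ =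
        Matrix.of (fun i j : Fin (n+1) =>
          if (i:ℕ) < n ∧ (j:ℕ) < n then ((s^2/((n:ℝ)+1) : ℝ) : ℂ) else 0) := by
      rw [hK0, KJK]
      ext i j
      simp only [Matrix.of_apply]
      by_cases hi : (i:ℕ) < n <;> by_cases hj : (j:ℕ) < n <;>
        simp only [hi, hj, if_true, if_false, and_true, and_false, true_and, false_and,
          and_self, star_zero, mul_zero, zero_mul, Complex.star_def, Complex.conj_ofReal,
          ite_true, ite_false] <;>
        push_cast <;> ring
    have hM1 : KrausPair n θ 1 * (((n : ℂ) + 1)⁻¹ • Jmat (n + 1)) * (KrausPair n θ 1)ᴴ =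
        Matrix.of (fun i j : Fin (n+1) =>
          (((if (i:ℕ) < n then c else 1) * (if (j:ℕ) < n then c else 1) / ((n:ℝ)+1) : ℝ) : ℂ)) := by
      rw [hK1, KJK]
      ext i j
      simp only [Matrix.of_apply]
      by_cases hi : (i:ℕ) < n <;> by_cases hj : (j:ℕ) < n <;>
        simp only [hi, hj, if_true, if_false, star_one, mul_one, one_mul,
          Complex.star_def, Complex.conj_ofReal, ite_true, ite_false] <;>
        push_cast <;> ring
    -- traces
    have htr0 : (Matrix.of (fun i j : Fin (n+1) =>
          if (i:ℕ) < n ∧ (j:ℕ) < n then ((s^2/((n:ℝ)+1) : ℝ) : ℂ) else 0)).trace =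
        ((((n:ℝ)-1)/((n:ℝ)+1) : ℝ) : ℂ) := by
      rw [Matrix.trace]
      have hdg : ∀ i : Fin (n+1), (Matrix.of (fun i j : Fin (n+1) =>
          if (i:ℕ) < n ∧ (j:ℕ) < n then ((s^2/((n:ℝ)+1) : ℝ) : ℂ) else 0)).diag i =
          if (i:ℕ) < n then ((s^2/((n:ℝ)+1) : ℝ) : ℂ) else 0 := by
        intro i
        simp [Matrix.diag]
      rw [Finset.sum_congr rfl fun i _ => hdg i,
        ← Finset.sum_erase_add _ _ (Finset.mem_univ (Fin.last n)),
        if_neg (by simp), add_zero,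
        Finset.sum_congr rfl fun i hi => if_pos (mem_eraseLast.mp hi),
        Finset.sum_const, card_eraseLast, nsmul_eq_mul, ← Complex.ofReal_natCast,
        ← Complex.ofReal_mul]
      congr 1
      rw [hs2n]
      field_simp
    have htr1 : (Matrix.of (fun i j : Fin (n+1) =>
          (((if (i:ℕ) < n then c else 1) * (if (j:ℕ) < n then c else 1) / ((n:ℝ)+1) : ℝ) : ℂ))).trace =
        ((2/((n:ℝ)+1) : ℝ) : ℂ) := by
      rw [Matrix.trace]
      have hdg : ∀ i : Fin (n+1), (Matrix.of (fun i j : Fin (n+1) =>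
          (((if (i:ℕ) < n then c else 1) * (if (j:ℕ) < n then c else 1) / ((n:ℝ)+1) : ℝ) : ℂ))).diag i =
          if (i:ℕ) < n then ((c*c/((n:ℝ)+1) : ℝ) : ℂ) else ((1/((n:ℝ)+1) : ℝ) : ℂ) := by
        intro i
        by_cases h : (i:ℕ) < n <;> simp [Matrix.diag, h]
      rw [Finset.sum_congr rfl fun i _ => hdg i,
        ← Finset.sum_erase_add _ _ (Finset.mem_univ (Fin.last n)),
        if_neg (by simp),
        Finset.sum_congr rfl fun i hi => if_pos (mem_eraseLast.mp hi),
        Finset.sum_const, card_eraseLast, nsmul_eq_mul, ← Complex.ofReal_natCast,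
        ← Complex.ofReal_mul, ← Complex.ofReal_add]
      congr 1
      rw [hcc]
      field_simp
      norm_num
    -- normalized states
    have hρ0 : (((((n:ℝ)-1)/((n:ℝ)+1) : ℝ) : ℂ))⁻¹ • (Matrix.of (fun i j : Fin (n+1) =>
          if (i:ℕ) < n ∧ (j:ℕ) < n then ((s^2/((n:ℝ)+1) : ℝ) : ℂ) else 0)) =
        Matrix.of (fun i j : Fin (n+1) =>
          if (i : ℕ) < n ∧ (j : ℕ) < n then ((1/(n:ℝ) : ℝ) : ℂ) else 0) := by
      ext i j
      simp only [Matrix.smul_apply, Matrix.of_apply, smul_eq_mul]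
      split_ifs with h
      · rw [← Complex.ofReal_inv, ← Complex.ofReal_mul]
        congr 1
        rw [hs2n]
        field_simp
      · rw [mul_zero]
    have hρ1 : (((2/((n:ℝ)+1) : ℝ) : ℂ))⁻¹ • (Matrix.of (fun i j : Fin (n+1) =>
          (((if (i:ℕ) < n then c else 1) * (if (j:ℕ) < n then c else 1) / ((n:ℝ)+1) : ℝ) : ℂ))) =
        Matrix.of (fun i j : Fin (n+1) =>
          (((if (i : ℕ) < n then c else 1) * (if (j : ℕ) < n then c else 1) / 2 : ℝ) : ℂ)) := by
      ext i j
      simp only [Matrix.smul_apply, Matrix.of_apply, smul_eq_mul]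
      rw [← Complex.ofReal_inv, ← Complex.ofReal_mul]
      congr 1
      field_simp
    rw [Fin.sum_univ_two, hM0, hM1, htr0, htr1, Complex.ofReal_re, Complex.ofReal_re,
      hρ0, hρ1]
    have ht0 : (0:ℝ) ≤ ((n:ℝ)-1)/((n:ℝ)+1) := div_nonneg (by linarith) (by linarith)
    have ht1 : (0:ℝ) ≤ 2/((n:ℝ)+1) := by positivity
    calc distC (lqp 1 (ENNReal.ofReal p)) (((n : ℂ) + 1)⁻¹ • Jmat (n + 1))
        ≤ (n:ℝ) ^ (1/p) := ub p hp0 n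
      _ < ((n:ℝ) - 1) / ((n:ℝ) + 1) * ((n:ℝ) - 1) ^ (1/p) +
          2 / ((n:ℝ) + 1) * ((n:ℝ) * (c/2) + (c/2) * (n:ℝ) ^ (1/p)) := keyineq p hp n hn2 h3n
      _ ≤ _ := by
          gcongr
          · exact lb0 p hp0 n (by omega)
          · exact lb1 p hp0 n c hc0.le
end
end

section
/- Let ‖·‖ be an absolute norm on M_n(ℂ), i.e., ‖(a_{ij})‖ = ‖(|a_{ij}|)‖ for all matrices. Then for every ρ ∈ D_n, min{‖ρ − σ‖ : σ ∈ I_n} = ‖ρ − ρ_diag‖, where ρ_diag is the diagonal matrix with the same diagonal entries as ρ. -/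
open scoped ENNReal ComplexOrder
open Matrix

noncomputable section

/-- Zeroing out diagonal entries (those in a finite set `S`) does not increase an
absolute norm. -/
lemma zero_diag_norm_le {n : ℕ} (ν : Matrix (Fin n) (Fin n) ℂ → ℝ) (hν : IsMatrixNorm ν)
    (habs : ∀ A : Matrix (Fin n) (Fin n) ℂ, ν (A.map fun z => (‖z‖ : ℂ)) = ν A)
    (M : Matrix (Fin n) (Fin n) ℂ) (S : Finset (Fin n)) :
    ν (Matrix.of fun i j => if i = j ∧ i ∈ S then 0 else M i j) ≤ ν M := by
  classical
  induction S using Finset.induction_on with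
  | empty =>
      have : (Matrix.of fun i j => if i = j ∧ i ∈ (∅ : Finset (Fin n)) then 0 else M i j) = M := by
        ext i j; simp
      rw [this]
  | insert a S ha ih =>
      set P : Matrix (Fin n) (Fin n) ℂ :=
        Matrix.of fun i j => if i = j ∧ i ∈ S then 0 else M i j with hP
      set Q : Matrix (Fin n) (Fin n) ℂ :=
        Matrix.of fun i j => if i = j ∧ i = a then -(P i j) else P i j with hQ
      have hsplit : (Matrix.of fun i j => if i = j ∧ i ∈ insert a S then 0 else M i j)
          = ((1/2 : ℂ)) • (P + Q) := by
        ext i j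
        by_cases hij : i = j
        · subst hij
          by_cases hia : i = a
          · subst hia
            simp [P, Q, Matrix.of_apply]
          · by_cases hiS : i ∈ S <;>
              simp [P, Q, Matrix.of_apply, hia, hiS] <;> ring
        · simp [P, Q, Matrix.of_apply, hij]
          ring
      have hQP : ν Q = ν P := by
        have hmap : Q.map (fun z => (‖z‖ : ℂ)) = P.map (fun z => (‖z‖ : ℂ)) := by
          ext i j
          by_cases h : i = j ∧ i = a
          · obtain ⟨rfl, rfl⟩ := h
            simp [Q, Matrix.map_apply, Matrix.of_apply]
          · simp [Q, Matrix.map_apply, Matrix.of_apply, h]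
        calc ν Q = ν (Q.map fun z => (‖z‖ : ℂ)) := (habs Q).symm
          _ = ν (P.map fun z => (‖z‖ : ℂ)) := by rw [hmap]
          _ = ν P := habs P
      calc ν (Matrix.of fun i j => if i = j ∧ i ∈ insert a S then 0 else M i j)
          = ‖(1/2 : ℂ)‖ * ν (P + Q) := by rw [hsplit]; exact hν.2.1 _ _
        _ ≤ ‖(1/2 : ℂ)‖ * (ν P + ν Q) := by
            have : (0:ℝ) ≤ ‖(1/2 : ℂ)‖ := norm_nonneg _
            exact mul_le_mul_of_nonneg_left (hν.2.2 P Q) this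
        _ = ν P := by rw [hQP]; simp; ring
        _ ≤ ν M := ih

/-- Proposition 2.2 (b): if `‖·‖` is an absolute norm on `M_n(ℂ)`,
i.e. `‖(a_{ij})‖ = ‖(|a_{ij}|)‖`, then for every density matrix `ρ`,
`min{‖ρ - σ‖ : σ ∈ I_n} = ‖ρ - ρ_diag‖`. -/
theorem distC_of_absolute_norm
    (n : ℕ) (ν : Matrix (Fin n) (Fin n) ℂ → ℝ) (hν : IsMatrixNorm ν)
    (habs : ∀ A : Matrix (Fin n) (Fin n) ℂ, ν (A.map fun z => (‖z‖ : ℂ)) = ν A) :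
    ∀ ρ, IsDensity ρ → distC ν ρ = ν (ρ - Matrix.diagonal fun i => ρ i i) := by
  classical
  rintro ρ ⟨hpsd, htr⟩
  set ρd : Matrix (Fin n) (Fin n) ℂ := Matrix.diagonal fun i => ρ i i with hρd
  have hρd_inc : IsIncoherentState ρd := by
    refine ⟨⟨?_, ?_⟩, Matrix.isDiag_diagonal _⟩
    · refine Matrix.posSemidef_diagonal_iff.mpr fun i => ?_
      have h := hpsd.dotProduct_mulVec_nonneg (Pi.single i 1)
      simpa [dotProduct, Matrix.mulVec, Pi.single_apply, Finset.sum_ite_eq,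
        Finset.sum_ite_eq'] using h
    · rw [Matrix.trace_diagonal]
      simpa [Matrix.trace] using htr
  have hmem : ν (ρ - ρd) ∈ {x | ∃ σ, IsIncoherentState σ ∧ x = ν (ρ - σ)} :=
    ⟨ρd, hρd_inc, rfl⟩
  have hlb : ∀ x ∈ {x | ∃ σ, IsIncoherentState σ ∧ x = ν (ρ - σ)}, ν (ρ - ρd) ≤ x := by
    rintro x ⟨σ, ⟨hσden, hσdiag⟩, rfl⟩
    have hkey : (Matrix.of fun i j =>
        if i = j ∧ i ∈ (Finset.univ : Finset (Fin n)) then 0 else (ρ - σ) i j) = ρ - ρd := by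
      ext i j
      by_cases hij : i = j
      · subst hij; simp [ρd, Matrix.diagonal]
      · have : σ i j = 0 := hσdiag hij
        simp [ρd, Matrix.diagonal, hij, this]
    have := zero_diag_norm_le ν hν habs (ρ - σ) Finset.univ
    rwa [hkey] at this
  exact le_antisymm (csInf_le ⟨ν (ρ - ρd), hlb⟩ hmem) (le_csInf ⟨_, hmem⟩ hlb)
end
end

section
/- Let ‖·‖ be a norm on M_n(ℂ) such that ‖P† A P‖ = ‖A‖ for every trace-zero Hermitian matrix A ∈ M_n(ℂ) and every permutation matrix P ∈ M_n(ℂ), and define C(ρ) = min{‖ρ − σ‖ : σ ∈ I_n}. Let n = n_1 + ⋯ + n_k, let R_ℓ = E_{12} + E_{23} + ⋯ + E_{ℓ,1} ∈ M_ℓ(ℂ) be the basic circulant permutation matrix, and let R = R_{n_1} ⊕ ⋯ ⊕ R_{n_k}. Suppose ρ = ρ_1 ⊕ ⋯ ⊕ ρ_k ∈ D_n (with ρ_j ∈ M_{n_j}(ℂ)) satisfies R† ρ R = ρ. Then there exist s_1,…,s_k ∈ ℝ such that C(ρ) = ‖(ρ_1 − s_1 I_{n_1}) ⊕ ⋯ ⊕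 (ρ_k − s_k I_{n_k})‖; moreover the s_i can be chosen so that s_p = s_q whenever ρ_p = ρ_q (and n_p = n_q); in particular, if ρ_1 = ⋯ = ρ_k then C(ρ) = ‖ρ − ρ_diag‖. -/
open scoped ENNReal ComplexOrder
open Matrix
open Fin.NatCast

noncomputable section

/-- A density matrix (general finite index type). -/
def IsDensityG {ι : Type*} [Fintype ι] (ρ : Matrix ι ι ℂ) : Prop :=
  ρ.PosSemidef ∧ ρ.trace = 1

/-- An incoherent (diagonal) density matrix. -/
def IsIncoherentStateG {ι : Type*} [Fintype ι] (ρ : Matrix ι ι ℂ) : Prop :=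
  IsDensityG ρ ∧ ρ.IsDiag

/-- `C(ρ) = min{ν(ρ - σ) : σ ∈ I_n}` (as an infimum). -/
def distCG {ι : Type*} [Fintype ι] (ν : Matrix ι ι ℂ → ℝ) (ρ : Matrix ι ι ℂ) : ℝ :=
  sInf {x | ∃ σ, IsIncoherentStateG σ ∧ x = ν (ρ - σ)}

/-- A norm on matrices (nonnegativity is automatic). -/
def IsMatrixNormG {ι : Type*} (ν : Matrix ι ι ℂ → ℝ) : Prop :=
  (∀ A, ν A = 0 ↔ A = 0) ∧ (∀ (c : ℂ) A, ν (c • A) = ‖c‖ * ν A) ∧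
  (∀ A B, ν (A + B) ≤ ν A + ν B)

/-- The basic circulant permutation matrix `R_ℓ = E_{12} + E_{23} + ⋯ + E_{ℓ,1} ∈ M_ℓ(ℂ)`. -/
def basicCirculant (ℓ : ℕ) : Matrix (Fin ℓ) (Fin ℓ) ℂ :=
  Matrix.of fun i j => if (j : ℕ) = ((i : ℕ)  + 1) % ℓ then 1 else 0

namespace DistCAux

variable {ι : Type*} [Fintype ι] {ν : Matrix ι ι ℂ → ℝ}

lemma nu_neg (hν : IsMatrixNormG ν) (A : Matrix ι ι ℂ) : ν (-A) = ν A := by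
  have := hν.2.1 (-1) A
  simpa using this

lemma nu_nonneg (hν : IsMatrixNormG ν) (A : Matrix ι ι ℂ) : 0 ≤ ν A := by
  have h0 : ν 0 = 0 := (hν.1 0).mpr rfl
  have h1 := hν.2.2 A (-A)
  rw [add_neg_cancel, h0, nu_neg hν] at h1
  linarith

lemma nu_sum_le (hν : IsMatrixNormG ν) {β : Type*} (s : Finset β) (A : β → Matrix ι ι ℂ) :
    ν (∑ a ∈ s, A a) ≤ ∑ a ∈ s, ν (A a) := by
  classical
  induction s using Finset.induction_on with
  | empty => simp [(hν.1 0).mpr rfl]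
  | insert _ _ h ih =>
    rw [Finset.sum_insert h, Finset.sum_insert h]
    exact le_trans (hν.2.2 _ _) (by linarith)

lemma nu_abs_sub_le (hν : IsMatrixNormG ν) (A B : Matrix ι ι ℂ) :
    |ν A - ν B| ≤ ν (A - B) := by
  rw [abs_sub_le_iff]
  constructor
  · have := hν.2.2 (A - B) B; simpa using this
  · have := hν.2.2 (B - A) A
    have h2 : ν (B - A) = ν (A - B) := by
      rw [← nu_neg hν (A - B)]; congr 1; abel
    simp only [sub_add_cancel] at this
    linarith

lemma matrix_cast_apply {m n : ℕ} (h : m = n) (A : Matrix (Fin m) (Fin m) ℂ)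
    (B : Matrix (Fin n) (Fin n) ℂ) (hAB : HEq A B) (i i' : Fin n) :
    B i i' = A (Fin.cast h.symm i) (Fin.cast h.symm i') := by
  subst h; cases hAB; rfl

lemma finRotate_apply' {m : ℕ} [NeZero m] (i : Fin m) : finRotate m i = i + 1 := by
  obtain ⟨m', rfl⟩ := Nat.exists_eq_succ_of_ne_zero (NeZero.ne m)
  exact finRotate_succ_apply i

lemma finRotate_pow_apply {m : ℕ} [NeZero m] (τ : ℕ) (i : Fin m) :
    ((finRotate m) ^ τ) i = i + (τ : Fin m) := by
  induction τ with
  | zero => simp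
  | succ τ ih =>
    rw [pow_succ', Equiv.Perm.mul_apply, finRotate_apply']
    rw [ih]
    push_cast
    simp only [Nat.cast_succ, add_assoc]

lemma sum_cycle {m : ℕ} [NeZero m] (c : ℕ) (g : Fin m → ℂ) (i : Fin m) :
    ∑ τ ∈ Finset.range (m * c), g (i + (τ : Fin m)) = (c : ℂ) • ∑ x : Fin m, g x := by
  induction c with
  | zero => simp
  | succ c ih =>
    rw [Nat.mul_succ, Finset.sum_range_add, ih]
    have h2 : ∀ τ ∈ Finset.range m, g (i + ((m * c + τ : ℕ) : Fin m)) = g (i + (τ : Fin m)) := by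
      intro τ _
      congr 2
      push_cast
      simp [Fin.natCast_self]
    rw [Finset.sum_congr rfl h2]
    have h3 : ∑ τ ∈ Finset.range m, g (i + (τ : Fin m)) = ∑ x : Fin m, g (i + x) := by
      rw [← Fin.sum_univ_eq_sum_range (fun τ => g (i + (τ : Fin m))) m]
      exact Finset.sum_congr rfl fun x _ => by rw [Fin.cast_val_eq_self]
    rw [h3]
    have h4 : ∑ x : Fin m, g (i + x) = ∑ x : Fin m, g x :=
      Fintype.sum_equiv (Equiv.addLeft i) _ _ (fun x => rfl)
    rw [h4]
    push_cast
    rw [add_smul, one_smul]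

end DistCAux

open DistCAux
set_option linter.unusedSectionVars false
set_option maxHeartbeats 1000000 in
/-- Proposition 2.3: let `‖·‖` be a norm on `M_n(ℂ)`, `n = n₁ + ⋯ + n_k`,
invariant under simultaneous row/column permutations of trace-zero Hermitian matrices, let
`C(ρ) = min{‖ρ - σ‖ : σ ∈ I_n}`, and let `R = R_{n₁} ⊕ ⋯ ⊕ R_{n_k}` (basic circulants).
If `ρ = ρ₁ ⊕ ⋯ ⊕ ρ_k ∈ D_n` satisfies `R† ρ R = ρ`, then there are `s₁, …, s_k ∈ ℝ` with
`C(ρ) = ‖(ρ₁ - s₁ I_{n₁}) ⊕ ⋯ ⊕ (ρ_k - s_k I_{n_k})‖`, where moreover `s_p = s_q`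
whenever `ρ_p = ρ_q`; in particular, if all the `ρ_j` coincide then `C(ρ) = ‖ρ - ρ_diag‖`. -/
theorem distC_block_circulant_invariant
    (k : ℕ) (nn : Fin k → ℕ)
    (ν : Matrix ((j : Fin k) × Fin (nn j)) ((j : Fin k) × Fin (nn j)) ℂ → ℝ)
    (hν : IsMatrixNormG ν)
    (hperm : ∀ A : Matrix ((j : Fin k) × Fin (nn j)) ((j : Fin k) × Fin (nn j)) ℂ,
      A.IsHermitian → A.trace = 0 →
      ∀ e : Equiv.Perm ((j : Fin k) × Fin (nn j)), ν (A.submatrix e e) = ν A)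
    (ρb : ∀ j : Fin k, Matrix (Fin (nn j)) (Fin (nn j)) ℂ)
    (hρ : IsDensityG (Matrix.blockDiagonal' ρb))
    (hR : (Matrix.blockDiagonal' fun j => basicCirculant (nn j))ᴴ *
            Matrix.blockDiagonal' ρb *
            (Matrix.blockDiagonal' fun j => basicCirculant (nn j)) =
          Matrix.blockDiagonal' ρb) :
    ∃ s : Fin k → ℝ,
      distCG ν (Matrix.blockDiagonal' ρb) =
        ν (Matrix.blockDiagonal' fun j => ρb j - (s j : ℂ) • (1 : Matrix (Fin (nn j)) (Fin (nn j)) ℂ)) ∧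
      (∀ a b : Fin k, nn a = nn b → HEq (ρb a) (ρb b) → s a = s b) ∧
      ((∀ a b : Fin k, nn a = nn b ∧ HEq (ρb a) (ρb b)) →
        distCG ν (Matrix.blockDiagonal' ρb) =
          ν (Matrix.blockDiagonal' ρb -
              Matrix.diagonal fun i => Matrix.blockDiagonal' ρb i i)) := by
  classical
  obtain ⟨hν0, hνsmul, hνadd⟩ := hν
  set ρ : Matrix ((j : Fin k) × Fin (nn j)) ((j : Fin k) × Fin (nn j)) ℂ :=
    Matrix.blockDiagonal' ρb with hρdef
  have hherm : ρ.IsHermitian := hρ.1.1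
  have htr : ρ.trace = 1 := hρ.2
  have htrsum : ∀ (σ : Matrix ((j : Fin k) × Fin (nn j)) ((j : Fin k) × Fin (nn j)) ℂ),
      σ.trace = ∑ x, σ x x := fun σ => rfl
  -- ι is nonempty
  have hne : Nonempty ((j : Fin k) × Fin (nn j)) := by
    by_contra h
    rw [not_nonempty_iff] at h
    have h0 : ρ.trace = 0 := by
      rw [htrsum, Finset.univ_eq_empty, Finset.sum_empty]
    rw [htr] at h0; exact one_ne_zero h0
  -- the shift permutation
  set E : Equiv.Perm ((j : Fin k) × Fin (nn j)) :=
    Equiv.sigmaCongrRight (fun j => finRotate (nn j)) with hE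
  -- the circulant is the permutation matrix of E
  have hRP : (Matrix.blockDiagonal' fun j => basicCirculant (nn j)) =
      (E.toPEquiv.toMatrix : Matrix ((j : Fin k) × Fin (nn j)) ((j : Fin k) × Fin (nn j)) ℂ) := by
    ext ⟨j, i⟩ ⟨j', i'⟩
    rw [PEquiv.toMatrix_apply, Equiv.toPEquiv_apply]
    have hEapp : E ⟨j, i⟩ = ⟨j, finRotate (nn j) i⟩ := rfl
    rw [hEapp]
    rcases eq_or_ne j j' with rfl | hjj
    · rw [Matrix.blockDiagonal'_apply_eq]
      haveI : NeZero (nn j) := ⟨(Fin.pos i).ne'⟩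
      have hrot : finRotate (nn j) i = i + 1 := finRotate_apply' i
      have hval : ((i + 1 : Fin (nn j)) : ℕ) = ((i : ℕ) + 1) % nn j := by
        rw [Fin.add_def]
        simp only [Fin.val_one']
        exact Nat.add_mod_mod _ _ _
      have hiff : ((i' : ℕ) = ((i : ℕ) + 1) % nn j) ↔ ((⟨j, i'⟩ : (j : Fin k) × Fin (nn j)) = ⟨j, finRotate (nn j) i⟩) := by
        rw [hrot, Sigma.mk.inj_iff]
        simp only [heq_eq_eq, true_and]
        rw [Fin.ext_iff, hval]
      simp only [basicCirculant, Matrix.of_apply]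
      by_cases hc : (i' : ℕ) = ((i : ℕ) + 1) % nn j
      · rw [if_pos hc, if_pos (Option.mem_some_iff.mpr (hiff.mp hc).symm)]
      · rw [if_neg hc]
        have : ¬ ((⟨j, i'⟩ : (j : Fin k) × Fin (nn j)) ∈ some (⟨j, finRotate (nn j) i⟩ : (j : Fin k) × Fin (nn j))) := by
          rw [Option.mem_some_iff]
          exact fun h => hc (hiff.mpr h.symm)
        rw [if_neg this]
    · rw [Matrix.blockDiagonal'_apply_ne _ _ _ hjj]
      have : ¬ ((⟨j', i'⟩ : (j : Fin k) × Fin (nn j)) ∈ some (⟨j, finRotate (nn j) i⟩ : (j : Fin k) × Fin (nn j))) := by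
        rw [Option.mem_some_iff]
        intro h
        obtain ⟨h1, -⟩ := Sigma.mk.inj_iff.mp h
        exact hjj h1
      rw [if_neg this]
  -- pointwise invariance
  have hEpt : ∀ x y, ρ (E x) (E y) = ρ x y := by
    have h1 : (Matrix.blockDiagonal' fun j => basicCirculant (nn j))ᴴ =
        ((E⁻¹).toPEquiv.toMatrix : Matrix ((j : Fin k) × Fin (nn j)) ((j : Fin k) × Fin (nn j)) ℂ) := by
      rw [hRP, show (E⁻¹ : Equiv.Perm _) = E.symm from rfl, Equiv.toPEquiv_symm,
        PEquiv.toMatrix_symm]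
      ext x y
      simp only [Matrix.conjTranspose_apply, Matrix.transpose_apply, PEquiv.toMatrix_apply,
        Equiv.toPEquiv_apply, Option.mem_some_iff]
      rw [apply_ite (star : ℂ → ℂ)]
      simp
    have hsub : ρ.submatrix ⇑E⁻¹ ⇑E⁻¹ = ρ := by
      conv_rhs => rw [← hR]
      rw [h1, hRP, PEquiv.toMatrix_toPEquiv_mul, PEquiv.mul_toMatrix_toPEquiv,
        Matrix.submatrix_submatrix]
      rfl
    intro x y
    have := congrFun (congrFun hsub (E x)) (E y)
    rw [Matrix.submatrix_apply] at this
    simp only [Equiv.Perm.inv_def, Equiv.symm_apply_apply] at this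
    exact this.symm
  have hEpow : ∀ (τ : ℕ) (j : Fin k) (i : Fin (nn j)),
      (E ^ τ) ⟨j, i⟩ = ⟨j, ((finRotate (nn j)) ^ τ) i⟩ := by
    intro τ
    induction τ with
    | zero => intro j i; simp
    | succ τ ih =>
      intro j i
      rw [pow_succ', pow_succ', Equiv.Perm.mul_apply, Equiv.Perm.mul_apply, ih j i]
      rfl
  have hpow : ∀ (τ : ℕ) x y, ρ ((E ^ τ) x) ((E ^ τ) y) = ρ x y := by
    intro τ
    induction τ with
    | zero => intro x y; simp
    | succ τ ih =>
      intro x y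
      rw [pow_succ, Equiv.Perm.mul_apply, Equiv.Perm.mul_apply, ih (E x) (E y), hEpt]
  -- the diagonal family and the simplex
  set D : (Fin k → ℝ) → Matrix ((j : Fin k) × Fin (nn j)) ((j : Fin k) × Fin (nn j)) ℂ :=
    (fun t => Matrix.diagonal (fun x => (t x.1 : ℂ))) with hD
  set f : (Fin k → ℝ) → ℝ := (fun t => ν (ρ - D t)) with hf
  set Δ : Set (Fin k → ℝ) :=
    {t | (∀ j, t j ∈ Set.Icc (0:ℝ) 1) ∧ ∑ j, (nn j : ℝ) * t j = 1} with hΔ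
  have hDherm : ∀ t : Fin k → ℝ, (D t).IsHermitian := by
    intro t
    exact Matrix.isHermitian_diagonal_of_self_adjoint _
      (funext fun x => by simp [Pi.star_apply, Complex.star_def])
  have hDtrace : ∀ t : Fin k → ℝ, (D t).trace = ((∑ j, (nn j : ℝ) * t j : ℝ) : ℂ) := by
    intro t
    rw [hD, Matrix.trace_diagonal, ← Finset.univ_sigma_univ, Finset.sum_sigma]
    push_cast
    refine Finset.sum_congr rfl fun j _ => ?_
    rw [Finset.sum_const, Finset.card_univ, Fintype.card_fin, nsmul_eq_mul]
  have hDinc : ∀ t ∈ Δ, IsIncoherentStateG (D t) := by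
    intro t ht
    refine ⟨⟨?_, ?_⟩, Matrix.isDiag_diagonal _⟩
    · rw [hD]
      refine Matrix.posSemidef_diagonal_iff.mpr fun x => ?_
      rw [Complex.zero_le_real]
      exact (ht.1 x.1).1
    · rw [hDtrace, ht.2]; norm_num
  have hDblock : ∀ t : Fin k → ℝ, ρ - D t =
      Matrix.blockDiagonal' (fun j => ρb j - (t j : ℂ) • (1 : Matrix (Fin (nn j)) (Fin (nn j)) ℂ)) := by
    intro t
    ext ⟨j, i⟩ ⟨j', i'⟩
    rcases eq_or_ne j j' with rfl | hjj
    · simp only [Matrix.sub_apply, hρdef, Matrix.blockDiagonal'_apply_eq, hD,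
        Matrix.diagonal_apply, Sigma.mk.inj_iff, heq_eq_eq, true_and, Matrix.smul_apply,
        Matrix.one_apply, smul_eq_mul]
      by_cases hii : i = i' <;> simp [hii]
    · simp only [Matrix.sub_apply, hρdef, hD,
        Matrix.blockDiagonal'_apply_ne _ _ _ hjj, Matrix.diagonal_apply, Sigma.mk.inj_iff]
      rw [if_neg (by simp [hjj])]
      simp
  have hsubHerm : ∀ t ∈ Δ, (ρ - D t).IsHermitian ∧ (ρ - D t).trace = 0 := by
    intro t ht
    constructor
    · exact hherm.sub (hDherm t)
    · rw [Matrix.trace_sub, htr, hDtrace, ht.2]; norm_num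
  -- STEP B: averaging over the cyclic shifts
  have key : ∀ σ : Matrix ((j : Fin k) × Fin (nn j)) ((j : Fin k) × Fin (nn j)) ℂ,
      IsIncoherentStateG σ → ∃ t ∈ Δ, f t ≤ ν (ρ - σ) := by
    intro σ hσ
    have hσherm : σ.IsHermitian := hσ.1.1.1
    have hσtr : σ.trace = 1 := hσ.1.2
    have hσdiag : σ.IsDiag := hσ.2
    have hdreal : ∀ x, ((σ x x).re : ℂ) = σ x x := by
      intro x
      exact Complex.conj_eq_iff_re.mp (hσherm.apply x x)
    have hdnonneg : ∀ x, 0 ≤ (σ x x).re := by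
      intro x
      have h1 : (0:ℂ) ≤ σ x x := by
        exact hσ.1.1.diag_nonneg
      exact (Complex.nonneg_iff.mp h1).1
    set L : ℕ := ∏ j, (if nn j = 0 then 1 else nn j) with hL
    have hLpos : 0 < L := Finset.prod_pos (fun j _ => by split <;> omega)
    have hdvd : ∀ j : Fin k, nn j ≠ 0 → nn j ∣ L := by
      intro j hj
      have h1 : (if nn j = 0 then 1 else nn j) ∣ L := Finset.dvd_prod_of_mem _ (Finset.mem_univ j)
      rwa [if_neg hj] at h1
    set t : Fin k → ℝ :=
      (fun j => if nn j = 0 then 0 else (∑ i : Fin (nn j), (σ ⟨j,i⟩ ⟨j,i⟩).re) / nn j) with ht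
    have htotal : ∑ j, ∑ i : Fin (nn j), (σ ⟨j,i⟩ ⟨j,i⟩).re = 1 := by
      have h1 : (∑ x, σ x x) = 1 := by rw [← htrsum σ, hσtr]
      have h2 := congrArg Complex.re h1
      rw [← Finset.univ_sigma_univ, Finset.sum_sigma] at h2
      rw [Complex.re_sum] at h2
      simp only [Complex.re_sum] at h2
      simpa using h2
    have hblock_nonneg : ∀ j, 0 ≤ ∑ i : Fin (nn j), (σ ⟨j,i⟩ ⟨j,i⟩).re :=
      fun j => Finset.sum_nonneg fun i _ => hdnonneg _
    have hblock_le : ∀ j, ∑ i : Fin (nn j), (σ ⟨j,i⟩ ⟨j,i⟩).re ≤ 1 := by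
      intro j
      rw [← htotal]
      exact Finset.single_le_sum (f := fun j => ∑ i : Fin (nn j), (σ ⟨j,i⟩ ⟨j,i⟩).re)
        (fun j _ => hblock_nonneg j) (Finset.mem_univ j)
    have htΔ : t ∈ Δ := by
      constructor
      · intro j
        rw [ht]
        by_cases hj : nn j = 0
        · simp [hj]
        · simp only [if_neg hj]
          have hnpos : (0:ℝ) < nn j := by exact_mod_cast Nat.pos_of_ne_zero hj
          constructor
          · exact div_nonneg (hblock_nonneg j) (Nat.cast_nonneg _)
          · rw [div_le_one hnpos]
            calc ∑ i : Fin (nn j), (σ ⟨j,i⟩ ⟨j,i⟩).re ≤ 1 := hblock_le j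
            _ ≤ (nn j : ℝ) := by exact_mod_cast Nat.one_le_iff_ne_zero.mpr hj
      · rw [ht]
        rw [show ∑ j, (nn j : ℝ) * (if nn j = 0 then 0 else (∑ i : Fin (nn j), (σ ⟨j,i⟩ ⟨j,i⟩).re) / nn j)
            = ∑ j, ∑ i : Fin (nn j), (σ ⟨j,i⟩ ⟨j,i⟩).re from ?_, htotal]
        refine Finset.sum_congr rfl fun j _ => ?_
        by_cases hj : nn j = 0
        · haveI : IsEmpty (Fin (nn j)) := by rw [hj]; exact Fin.isEmpty
          simp [hj]
        · have hnne : (nn j : ℝ) ≠ 0 := by exact_mod_cast hj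
          rw [if_neg hj]
          field_simp
    have havg : D t = ((L:ℂ))⁻¹ • ∑ τ ∈ Finset.range L, σ.submatrix ⇑(E^τ) ⇑(E^τ) := by
      ext x y
      rw [Matrix.smul_apply, Matrix.sum_apply]
      simp only [Matrix.submatrix_apply]
      rcases eq_or_ne x y with rfl | hxy
      · obtain ⟨j, i⟩ := x
        haveI : NeZero (nn j) := ⟨(Fin.pos i).ne'⟩
        have hEdiag : ∀ τ : ℕ, σ ((E^τ) ⟨j,i⟩) ((E^τ) ⟨j,i⟩)
            = (fun x : Fin (nn j) => σ ⟨j,x⟩ ⟨j,x⟩) (i + ((τ : ℕ) : Fin (nn j))) := fun τ => by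
          rw [hEpow τ j i, finRotate_pow_apply]
        rw [Finset.sum_congr rfl (fun τ _ => hEdiag τ)]
        obtain ⟨c, hc⟩ := hdvd j (NeZero.ne _)
        have hcne : (c:ℂ) ≠ 0 := by
          have : c ≠ 0 := by rintro rfl; rw [Nat.mul_zero] at hc; omega
          exact_mod_cast this
        have hnne : ((nn j:ℕ):ℂ) ≠ 0 := by exact_mod_cast NeZero.ne (nn j)
        rw [hc, sum_cycle c (fun x => σ ⟨j,x⟩ ⟨j,x⟩) i]
        have hsum : ((∑ i' : Fin (nn j), (σ ⟨j,i'⟩ ⟨j,i'⟩).re : ℝ) : ℂ)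
            = ∑ i' : Fin (nn j), σ ⟨j,i'⟩ ⟨j,i'⟩ := by
          push_cast
          exact Finset.sum_congr rfl fun i' _ => hdreal _
        rw [hD]
        simp only [Matrix.diagonal_apply_eq]
        rw [ht]
        simp only [if_neg (NeZero.ne (nn j))]
        rw [smul_eq_mul, smul_eq_mul]
        push_cast
        rw [← hsum]
        push_cast
        field_simp
      · rw [hD]
        simp only [Matrix.diagonal_apply_ne _ hxy]
        rw [Finset.sum_congr rfl
          (fun τ _ => hσdiag (fun h => hxy ((E^τ).injective h)) : ∀ τ ∈ Finset.range L, σ ((E^τ) x) ((E^τ) y) = 0)]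
        simp
    have hρavg : ρ = ((L:ℂ))⁻¹ • ∑ τ ∈ Finset.range L, ρ.submatrix ⇑(E^τ) ⇑(E^τ) := by
      have h1 : ∀ τ ∈ Finset.range L, ρ.submatrix ⇑(E^τ) ⇑(E^τ) = ρ := by
        intro τ _; ext x y; rw [Matrix.submatrix_apply]; exact hpow τ x y
      rw [Finset.sum_congr rfl h1, Finset.sum_const, Finset.card_range]
      rw [← Nat.cast_smul_eq_nsmul ℂ, smul_smul,
        inv_mul_cancel₀ (by exact_mod_cast hLpos.ne' : (L:ℂ) ≠ 0), one_smul]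
    refine ⟨t, htΔ, ?_⟩
    have hAherm : (ρ - σ).IsHermitian := hherm.sub hσherm
    have hAtr : (ρ - σ).trace = 0 := by rw [Matrix.trace_sub, htr, hσtr, sub_self]
    have hdiff : ρ - D t = ((L:ℂ))⁻¹ • ∑ τ ∈ Finset.range L, (ρ - σ).submatrix ⇑(E^τ) ⇑(E^τ) := by
      have h1 : ∑ τ ∈ Finset.range L, (ρ - σ).submatrix ⇑(E^τ) ⇑(E^τ)
           = (∑ τ ∈ Finset.range L, ρ.submatrix ⇑(E^τ) ⇑(E^τ))
             - ∑ τ ∈ Finset.range L, σ.submatrix ⇑(E^τ) ⇑(E^τ) := by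
        rw [← Finset.sum_sub_distrib]
        refine Finset.sum_congr rfl fun τ _ => ?_
        ext x y
        simp [Matrix.submatrix_apply, Matrix.sub_apply]
      rw [h1, smul_sub, ← hρavg, ← havg]
    show ν (ρ - D t) ≤ ν (ρ - σ)
    rw [hdiff, hνsmul]
    have hbound : ν (∑ τ ∈ Finset.range L, (ρ - σ).submatrix ⇑(E^τ) ⇑(E^τ)) ≤ L * ν (ρ - σ) := by
      refine le_trans (nu_sum_le ⟨hν0, hνsmul, hνadd⟩ _ _) ?_
      rw [Finset.sum_congr rfl (fun τ _ => hperm _ hAherm hAtr (E^τ) :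
        ∀ τ ∈ Finset.range L, ν ((ρ - σ).submatrix ⇑(E^τ) ⇑(E^τ)) = ν (ρ - σ))]
      rw [Finset.sum_const, Finset.card_range, nsmul_eq_mul]
    have hnorm : ‖((L:ℂ))⁻¹‖ = (L:ℝ)⁻¹ := by
      rw [norm_inv, Complex.norm_natCast]
    rw [hnorm]
    have hLR : (0:ℝ) < L := by exact_mod_cast hLpos
    calc (L:ℝ)⁻¹ * ν (∑ τ ∈ Finset.range L, (ρ - σ).submatrix ⇑(E^τ) ⇑(E^τ))
        ≤ (L:ℝ)⁻¹ * (L * ν (ρ - σ)) := by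
          exact mul_le_mul_of_nonneg_left hbound (inv_nonneg.mpr hLR.le)
    _ = ν (ρ - σ) := by field_simp
  -- Δ is compact and nonempty, f is continuous;  minimize
  have hmin : ∃ s ∈ Δ, ∀ t ∈ Δ, f s ≤ f t := by
    have hDlin : ∀ w : Fin k → ℝ, D w = ∑ j, (w j : ℂ) • D (Pi.single j 1) := by
      intro w
      ext x y
      rw [Matrix.sum_apply]
      rcases eq_or_ne x y with rfl | hxy
      · simp only [hD, Matrix.diagonal_apply_eq, Matrix.smul_apply, smul_eq_mul]
        simp [Pi.single_apply, apply_ite (fun (r:ℝ) => (r:ℂ)), mul_ite, Finset.sum_ite_eq]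
      · simp [hD, Matrix.diagonal_apply_ne _ hxy]
    set C : ℝ := ∑ j, ν (D (Pi.single j 1)) with hC
    have hC0 : 0 ≤ C := Finset.sum_nonneg fun j _ => nu_nonneg ⟨hν0, hνsmul, hνadd⟩ _
    have hdist : ∀ t u : Fin k → ℝ, dist (f t) (f u) ≤ C * dist t u := by
      intro t u
      rw [Real.dist_eq]
      have hsub : (ρ - D t) - (ρ - D u) = D u - D t := by abel
      have hDsub : D u - D t = ∑ j, ((u j - t j : ℝ) : ℂ) • D (Pi.single j 1) := by
        rw [hDlin u, hDlin t, ← Finset.sum_sub_distrib]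
        refine Finset.sum_congr rfl fun j _ => ?_
        rw [← sub_smul]
        push_cast
        rfl
      calc |f t - f u| ≤ ν ((ρ - D t) - (ρ - D u)) := nu_abs_sub_le ⟨hν0, hνsmul, hνadd⟩ _ _
      _ = ν (∑ j, ((u j - t j : ℝ) : ℂ) • D (Pi.single j 1)) := by rw [hsub, hDsub]
      _ ≤ ∑ j, ν (((u j - t j : ℝ) : ℂ) • D (Pi.single j 1)) :=
          nu_sum_le ⟨hν0, hνsmul, hνadd⟩ _ _
      _ = ∑ j, |u j - t j| * ν (D (Pi.single j 1)) := by
          refine Finset.sum_congr rfl fun j _ => ?_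
          rw [hνsmul, Complex.norm_real, Real.norm_eq_abs]
      _ ≤ ∑ j, dist t u * ν (D (Pi.single j 1)) := by
          refine Finset.sum_le_sum fun j _ => ?_
          refine mul_le_mul_of_nonneg_right ?_ (nu_nonneg ⟨hν0, hνsmul, hνadd⟩ _)
          rw [abs_sub_comm, ← Real.dist_eq]
          exact dist_le_pi_dist t u j
      _ = C * dist t u := by rw [← Finset.mul_sum, ← hC, mul_comm]
    have hlip : LipschitzWith ⟨C, hC0⟩ f := LipschitzWith.of_dist_le_mul fun t u => hdist t u
    have hcont : Continuous f := hlip.continuous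
    have hΔsub : Δ ⊆ Set.Icc (0 : Fin k → ℝ) 1 := by
      intro t htmem
      rw [Set.mem_Icc]
      exact ⟨fun j => (htmem.1 j).1, fun j => (htmem.1 j).2⟩
    have hΔclosed : IsClosed Δ := by
      have h1 : IsClosed {t : Fin k → ℝ | ∀ j, t j ∈ Set.Icc (0:ℝ) 1} := by
        rw [Set.setOf_forall]
        exact isClosed_iInter fun j => IsClosed.preimage (continuous_apply j) isClosed_Icc
      have h2 : IsClosed {t : Fin k → ℝ | ∑ j, (nn j : ℝ) * t j = 1} :=
        isClosed_eq (continuous_finset_sum _ fun j _ => continuous_const.mul (continuous_apply j))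
          continuous_const
      exact IsClosed.inter h1 h2
    have hΔcompact : IsCompact Δ :=
      IsCompact.of_isClosed_subset isCompact_Icc hΔclosed hΔsub
    obtain ⟨⟨j0, i0⟩⟩ := hne
    have hnn0 : nn j0 ≠ 0 := (Fin.pos i0).ne'
    have hnn0R : (0:ℝ) < nn j0 := by exact_mod_cast Nat.pos_of_ne_zero hnn0
    have ht0Δ : (Pi.single j0 (1 / (nn j0 : ℝ)) : Fin k → ℝ) ∈ Δ := by
      constructor
      · intro j
        rcases eq_or_ne j j0 with rfl | hj
        · rw [Pi.single_eq_same]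
          constructor
          · positivity
          · rw [div_le_one hnn0R]
            exact_mod_cast Nat.one_le_iff_ne_zero.mpr hnn0
        · rw [Pi.single_eq_of_ne hj]
          simp
      · rw [Finset.sum_eq_single j0 (fun j _ hj => by rw [Pi.single_eq_of_ne hj, mul_zero])
          (fun h => absurd (Finset.mem_univ j0) h)]
        rw [Pi.single_eq_same]
        field_simp
    obtain ⟨s, hsmem, hsmin⟩ := hΔcompact.exists_isMinOn ⟨_, ht0Δ⟩ hcont.continuousOn
    exact ⟨s, hsmem, fun t htmem => hsmin htmem⟩
  obtain ⟨s, hsΔ, hsmin⟩ := hmin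
  -- the symmetrization
  set S : Finset (Equiv.Perm (Fin k)) :=
    Finset.univ.filter (fun π => ∀ c, nn (π c) = nn c ∧ HEq (ρb (π c)) (ρb c)) with hS
  have hSmem : ∀ π : Equiv.Perm (Fin k),
      π ∈ S ↔ ∀ c, nn (π c) = nn c ∧ HEq (ρb (π c)) (ρb c) := by
    intro π; simp [hS]
  have honeS : (1 : Equiv.Perm (Fin k)) ∈ S := by
    rw [hSmem]; intro c; exact ⟨rfl, HEq.rfl⟩
  set N : ℕ := S.card with hN
  have hNpos : 0 < N := Finset.card_pos.mpr ⟨1, honeS⟩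
  set s' : Fin k → ℝ := (fun a => (N : ℝ)⁻¹ * ∑ π ∈ S, s (π a)) with hs'
  -- f is invariant under relabeling blocks with π ∈ S
  have hfS : ∀ π ∈ S, f (s ∘ π) = f s := by
    intro π hπmem
    rw [hSmem] at hπmem
    set T : Equiv.Perm ((j : Fin k) × Fin (nn j)) :=
      Equiv.sigmaCongr π (fun j => finCongr (hπmem j).1.symm) with hT
    have hTsub : (ρ - D s).submatrix ⇑T ⇑T = ρ - D (s ∘ π) := by
      ext ⟨j, i⟩ ⟨j', i'⟩
      rw [Matrix.submatrix_apply]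
      have hT1 : T ⟨j, i⟩ = ⟨π j, Fin.cast (hπmem j).1.symm i⟩ := rfl
      have hT2 : T ⟨j', i'⟩ = ⟨π j', Fin.cast (hπmem j').1.symm i'⟩ := rfl
      rw [hT1, hT2]
      rcases eq_or_ne j j' with rfl | hjj
      · by_cases hii : i = i'
        · subst hii
          simp only [Matrix.sub_apply, hρdef, hD, Matrix.blockDiagonal'_apply_eq,
            Matrix.diagonal_apply_eq]
          rw [← matrix_cast_apply (hπmem j).1 (ρb (π j)) (ρb j) (hπmem j).2 i i]
          rfl
        · have hne1 : (⟨π j, Fin.cast (hπmem j).1.symm i⟩ : (j : Fin k) × Fin (nn j))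
              ≠ ⟨π j, Fin.cast (hπmem j).1.symm i'⟩ := by
            simp only [ne_eq, Sigma.mk.inj_iff, heq_eq_eq, true_and]
            exact fun h => hii (Fin.ext (by simpa using congrArg Fin.val h))
          have hne2 : (⟨j, i⟩ : (j : Fin k) × Fin (nn j)) ≠ ⟨j, i'⟩ := by simp [hii]
          simp only [Matrix.sub_apply, hρdef, hD, Matrix.blockDiagonal'_apply_eq,
            Matrix.diagonal_apply_ne _ hne1, Matrix.diagonal_apply_ne _ hne2]
          rw [← matrix_cast_apply (hπmem j).1 (ρb (π j)) (ρb j) (hπmem j).2 i i']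
      · have hππ : π j ≠ π j' := fun h => hjj (π.injective h)
        have hne1 : (⟨π j, Fin.cast (hπmem j).1.symm i⟩ : (j : Fin k) × Fin (nn j))
            ≠ ⟨π j', Fin.cast (hπmem j').1.symm i'⟩ := by
          simp only [ne_eq, Sigma.mk.inj_iff]
          exact fun h => hππ h.1
        have hne2 : (⟨j, i⟩ : (j : Fin k) × Fin (nn j)) ≠ ⟨j', i'⟩ := by
          simp only [ne_eq, Sigma.mk.inj_iff]
          exact fun h => hjj h.1
        simp only [Matrix.sub_apply, hρdef, hD,
          Matrix.blockDiagonal'_apply_ne _ _ _ hππ, Matrix.blockDiagonal'_apply_ne _ _ _ hjj,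
          Matrix.diagonal_apply_ne _ hne1, Matrix.diagonal_apply_ne _ hne2]
    have hfπ := hperm (ρ - D s) (hsubHerm s hsΔ).1 (hsubHerm s hsΔ).2 T
    rw [hTsub] at hfπ
    exact hfπ
  have hs'Δ : s' ∈ Δ := by
    have hNR : (0:ℝ) < N := by exact_mod_cast hNpos
    constructor
    · intro a
      rw [hs']
      constructor
      · exact mul_nonneg (inv_nonneg.mpr hNR.le)
          (Finset.sum_nonneg fun π hπ => (hsΔ.1 (π a)).1)
      · have hb : ∑ π ∈ S, s (π a) ≤ (N:ℝ) := by
          have hb1 := Finset.sum_le_card_nsmul S (fun π => s (π a)) 1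
            (fun π hπ => (hsΔ.1 (π a)).2)
          simpa [hN] using hb1
        calc (N:ℝ)⁻¹ * ∑ π ∈ S, s (π a) ≤ (N:ℝ)⁻¹ * N :=
              mul_le_mul_of_nonneg_left hb (inv_nonneg.mpr hNR.le)
        _ = 1 := inv_mul_cancel₀ hNR.ne'
    · rw [hs']
      have h1 : ∑ a, (nn a : ℝ) * ((N:ℝ)⁻¹ * ∑ π ∈ S, s (π a))
          = (N:ℝ)⁻¹ * ∑ π ∈ S, ∑ a, (nn a:ℝ) * s (π a) := by
        calc ∑ a, (nn a : ℝ) * ((N:ℝ)⁻¹ * ∑ π ∈ S, s (π a))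
            = ∑ a, ∑ π ∈ S, (N:ℝ)⁻¹ * ((nn a:ℝ) * s (π a)) := by
              refine Finset.sum_congr rfl fun a _ => ?_
              rw [Finset.mul_sum, Finset.mul_sum]
              exact Finset.sum_congr rfl fun π _ => by ring
        _ = ∑ π ∈ S, ∑ a, (N:ℝ)⁻¹ * ((nn a:ℝ) * s (π a)) := Finset.sum_comm
        _ = (N:ℝ)⁻¹ * ∑ π ∈ S, ∑ a, (nn a:ℝ) * s (π a) := by
              rw [Finset.mul_sum]
              exact Finset.sum_congr rfl fun π _ => by rw [Finset.mul_sum]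
      rw [h1]
      have h2 : ∀ π ∈ S, ∑ a, (nn a:ℝ) * s (π a) = 1 := by
        intro π hπ
        rw [hSmem] at hπ
        have h3 : ∀ a ∈ Finset.univ, (nn a:ℝ) * s (π a)
            = (fun b => (nn b:ℝ) * s b) (π a) := by
          intro a _
          simp only []
          rw [← (hπ a).1]
        rw [Finset.sum_congr rfl h3, Equiv.sum_comp π (fun b => (nn b:ℝ) * s b)]
        exact hsΔ.2
      rw [Finset.sum_congr rfl h2, Finset.sum_const, nsmul_eq_mul, mul_one, ← hN,
        inv_mul_cancel₀ hNR.ne']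
  have hfs' : f s' = f s := by
    have hNR : (0:ℝ) < N := by exact_mod_cast hNpos
    have hNC : ((N:ℕ):ℂ) ≠ 0 := by exact_mod_cast hNpos.ne'
    have hDs' : ρ - D s' = ((N:ℂ))⁻¹ • ∑ π ∈ S, (ρ - D (s ∘ π)) := by
      have hρc : ρ = ((N:ℂ))⁻¹ • ∑ _π ∈ S, ρ := by
        rw [Finset.sum_const, ← hN, ← Nat.cast_smul_eq_nsmul ℂ, smul_smul,
          inv_mul_cancel₀ hNC, one_smul]
      have hDc : D s' = ((N:ℂ))⁻¹ • ∑ π ∈ S, D (s ∘ π) := by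
        ext x y
        rw [Matrix.smul_apply, Matrix.sum_apply]
        rcases eq_or_ne x y with rfl | hxy
        · simp only [hD, Matrix.diagonal_apply_eq, hs']
          push_cast
          rw [smul_eq_mul]
          rfl
        · simp [hD, Matrix.diagonal_apply_ne _ hxy]
      calc ρ - D s' = ((N:ℂ))⁻¹ • ∑ _π ∈ S, ρ - ((N:ℂ))⁻¹ • ∑ π ∈ S, D (s ∘ π) := by
            rw [← hρc, ← hDc]
      _ = ((N:ℂ))⁻¹ • ∑ π ∈ S, (ρ - D (s ∘ π)) := by
            rw [← smul_sub, ← Finset.sum_sub_distrib]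
    refine le_antisymm ?_ (hsmin s' hs'Δ)
    show ν (ρ - D s') ≤ f s
    rw [hDs', hνsmul]
    have hb : ν (∑ π ∈ S, (ρ - D (s ∘ π))) ≤ N * f s := by
      refine le_trans (nu_sum_le ⟨hν0, hνsmul, hνadd⟩ _ _) ?_
      rw [Finset.sum_congr rfl (fun π hπ => hfS π hπ), Finset.sum_const, ← hN, nsmul_eq_mul]
    have hnorm : ‖((N:ℂ))⁻¹‖ = (N:ℝ)⁻¹ := by rw [norm_inv, Complex.norm_natCast]
    rw [hnorm]
    calc (N:ℝ)⁻¹ * ν (∑ π ∈ S, (ρ - D (s ∘ π))) ≤ (N:ℝ)⁻¹ * (N * f s) :=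
          mul_le_mul_of_nonneg_left hb (inv_nonneg.mpr hNR.le)
    _ = f s := by field_simp
  -- conclusion
  have hmain : distCG ν ρ = f s' := by
    have hrfl : distCG ν ρ = sInf {x | ∃ σ, IsIncoherentStateG σ ∧ x = ν (ρ - σ)} := rfl
    rw [hrfl]
    refine IsLeast.csInf_eq ⟨⟨D s', hDinc s' hs'Δ, rfl⟩, ?_⟩
    rintro x ⟨σ, hσ, rfl⟩
    obtain ⟨t, htΔ, htle⟩ := key σ hσ
    calc f s' = f s := hfs'
    _ ≤ f t := hsmin t htΔ
    _ ≤ ν (ρ - σ) := htle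
  have hsym : ∀ a b : Fin k, nn a = nn b → HEq (ρb a) (ρb b) → s' a = s' b := by
    intro a b h1 h2
    have hswap : Equiv.swap a b ∈ S := by
      rw [hSmem]
      intro c
      rcases eq_or_ne c a with rfl | hca
      · rw [Equiv.swap_apply_left]; exact ⟨h1.symm, h2.symm⟩
      rcases eq_or_ne c b with rfl | hcb
      · rw [Equiv.swap_apply_right]; exact ⟨h1, h2⟩
      · rw [Equiv.swap_apply_of_ne_of_ne hca hcb]; exact ⟨rfl, HEq.rfl⟩
    have hswapP := (hSmem _).mp hswap
    have hmulmem : ∀ π ∈ S, π * Equiv.swap a b ∈ S := by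
      intro π hπ
      rw [hSmem] at hπ ⊢
      intro c
      refine ⟨?_, ?_⟩
      · rw [Equiv.Perm.mul_apply, (hπ _).1, (hswapP c).1]
      · rw [Equiv.Perm.mul_apply]
        exact HEq.trans (hπ _).2 (hswapP c).2
    have hsum : ∑ π ∈ S, s (π a) = ∑ π ∈ S, s (π b) := by
      refine Finset.sum_bij' (fun π _ => π * Equiv.swap a b) (fun π _ => π * Equiv.swap a b)
        ?_ ?_ ?_ ?_ ?_
      · exact fun π hπ => hmulmem π hπ
      · exact fun π hπ => hmulmem π hπ
      · intro π _
        show π * Equiv.swap a b * Equiv.swap a b = π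
        rw [mul_assoc, Equiv.swap_mul_self, mul_one]
      · intro π _
        show π * Equiv.swap a b * Equiv.swap a b = π
        rw [mul_assoc, Equiv.swap_mul_self, mul_one]
      · intro π _
        show s (π a) = s ((π * Equiv.swap a b) b)
        rw [Equiv.Perm.mul_apply, Equiv.swap_apply_right]
    rw [hs']
    simp only []
    rw [hsum]
  refine ⟨s', ?_, hsym, ?_⟩
  · rw [hmain]
    exact congrArg ν (hDblock s')
  · intro hall
    rw [hmain]
    obtain ⟨⟨j0, i0⟩⟩ := id hne
    haveI : NeZero (nn j0) := ⟨(Fin.pos i0).ne'⟩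
    have hs'const : ∀ a, s' a = s' j0 := fun a => hsym a j0 (hall a j0).1 (hall a j0).2
    have hblockconst : ∀ (x : (j : Fin k) × Fin (nn j)), ρ x x = ρ ⟨j0, i0⟩ ⟨j0, i0⟩ := by
      rintro ⟨j, i⟩
      have h1 : ρ ⟨j,i⟩ ⟨j,i⟩ = ρb j i i := by rw [hρdef, Matrix.blockDiagonal'_apply_eq]
      have h2 : ρb j i i = ρb j0 (Fin.cast (hall j0 j).1.symm i) (Fin.cast (hall j0 j).1.symm i) :=
        matrix_cast_apply (hall j0 j).1 (ρb j0) (ρb j) (hall j0 j).2 i i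
      have h3 : ∀ (a b : Fin (nn j0)), ρb j0 a a = ρb j0 b b := by
        intro a b
        have h4 := hpow (((b - a : Fin (nn j0)) : ℕ)) ⟨j0, a⟩ ⟨j0, a⟩
        rw [hEpow, finRotate_pow_apply, hρdef, Matrix.blockDiagonal'_apply_eq,
          Matrix.blockDiagonal'_apply_eq, Fin.cast_val_eq_self] at h4
        rw [add_comm, sub_add_cancel] at h4
        exact h4.symm
      have h5 : ρ ⟨j0, i0⟩ ⟨j0, i0⟩ = ρb j0 i0 i0 := by
        rw [hρdef, Matrix.blockDiagonal'_apply_eq]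
      rw [h1, h2, h3 _ i0, h5]
    have hcardpos : 0 < Fintype.card ((j : Fin k) × Fin (nn j)) := Fintype.card_pos_iff.mpr hne
    have hnv : ((Fintype.card ((j : Fin k) × Fin (nn j)) : ℕ) : ℂ) * ρ ⟨j0,i0⟩ ⟨j0,i0⟩ = 1 := by
      have e1 : ρ.trace = ((Fintype.card ((j : Fin k) × Fin (nn j)) : ℕ):ℂ) * ρ ⟨j0,i0⟩ ⟨j0,i0⟩ := by
        rw [htrsum, Finset.sum_congr rfl (fun x _ => hblockconst x), Finset.sum_const,
          Finset.card_univ, nsmul_eq_mul]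
      rw [← e1]
      exact htr
    have hcard : ((Fintype.card ((j : Fin k) × Fin (nn j)) : ℕ) : ℝ) = ∑ a, (nn a : ℝ) := by
      rw [Fintype.card_sigma]
      push_cast
      simp [Fintype.card_fin]
    have hns : ((Fintype.card ((j : Fin k) × Fin (nn j)) : ℕ) : ℝ) * s' j0 = 1 := by
      rw [hcard, Finset.sum_mul, ← hs'Δ.2]
      refine Finset.sum_congr rfl fun a _ => ?_
      rw [hs'const a]
    have hcne : ((Fintype.card ((j : Fin k) × Fin (nn j)) : ℕ) : ℂ) ≠ 0 := by
      exact_mod_cast hcardpos.ne'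
    have hcv : ((s' j0 : ℝ) : ℂ) = ρ ⟨j0,i0⟩ ⟨j0,i0⟩ := by
      have e2 : ((Fintype.card ((j : Fin k) × Fin (nn j)) : ℕ) : ℂ) * ((s' j0 : ℝ) : ℂ) = 1 := by
        exact_mod_cast congrArg (fun r : ℝ => (r : ℂ)) hns
      exact mul_left_cancel₀ hcne (by rw [e2, hnv])
    have hDeq : D s' = Matrix.diagonal (fun x => ρ x x) := by
      ext x y
      rcases eq_or_ne x y with rfl | hxy
      · simp only [hD, Matrix.diagonal_apply_eq]
        rw [hs'const x.1, hcv, hblockconst x]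
      · simp [hD, Matrix.diagonal_apply_ne _ hxy]
    show ν (ρ - D s') = ν (ρ - Matrix.diagonal (fun x => ρ x x))
    rw [hDeq]


end
end
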